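/- arXiv:1004.3416 — 4 statements merged into one kernel-verified Lean document; each statement's English description precedes it below -/
import Mathlib

section
/- Let {A_v}_{v∈V} be a finite collection of events in a probability space, where the index set V is the vertex set of a chordal graph G. Then Pr(⋃_{v∈V} A_v) ≤ Σ_{I∈𝒞(G)} (−1)^{|I|−1} · Pr(⋂_{i∈I} A_i), where the sum runs over all elements I of the clique complex 𝒞(G). -/
open MeasureTheory Finset
open scoped Classical

/-- A graph is chordal if it contains no induced cycle of length four or greater. -/
def SimpleGraph.IsChordal {V : Type*} (G : SimpleGraph V) : Prop :=
  ∀ n : ℕ, 4 ≤ n → ∀ s : Set V, ¬ Nonempty (G.induce s ≃g SimpleGraph.cycleGraph n)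

/-- The clique complex of `G`: the collection of all non-empty cliques of `G`. -/
noncomputable def SimpleGraph.cliqueComplex {V : Type*} [Fintype V] (G : SimpleGraph V) :
    Finset (Finset V) :=
  Finset.univ.powerset.filter fun I => I.Nonempty ∧ G.IsClique (I : Set V)

namespace ChordalSieve

variable {V : Type*}

/-- A chain of length `n` within vertex set `T` from `a` to `b`. -/
def ChainIn (G : SimpleGraph V) (T : Finset V) (p : ℕ → V) (n : ℕ) (a b : V) : Prop :=
  p 0 = a ∧ p n = b ∧ (∀ i, i < n → G.Adj (p i) (p (i + 1))) ∧ (∀ i, i ≤ n → p i ∈ T)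

/-- Connectivity within a vertex set. -/
def ConnIn (G : SimpleGraph V) (T : Finset V) (a b : V) : Prop :=
  ∃ n p, ChainIn G T p n a b

lemma connIn_refl {G : SimpleGraph V} {T : Finset V} {a : V} (ha : a ∈ T) : ConnIn G T a a :=
  ⟨0, fun _ => a, rfl, rfl, fun i hi => absurd hi (Nat.not_lt_zero i), fun _ _ => ha⟩

lemma connIn_of_adj {G : SimpleGraph V} {T : Finset V} {a b : V} (h : G.Adj a b)
    (ha : a ∈ T) (hb : b ∈ T) : ConnIn G T a b := by
  refine ⟨1, fun i => if i = 0 then a else b, by simp, by simp, ?_, ?_⟩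
  · intro i hi
    interval_cases i
    simpa using h
  · intro i _
    by_cases h0 : i = 0 <;> simp [h0, ha, hb]

lemma ConnIn.mem_left {G : SimpleGraph V} {T : Finset V} {a b : V} (h : ConnIn G T a b) :
    a ∈ T := by
  obtain ⟨n, p, h0, _, _, hmem⟩ := h
  simpa [h0] using hmem 0 (Nat.zero_le n)

lemma ConnIn.mem_right {G : SimpleGraph V} {T : Finset V} {a b : V} (h : ConnIn G T a b) :
    b ∈ T := by
  obtain ⟨n, p, _, h1, _, hmem⟩ := h
  simpa [h1] using hmem n le_rfl

lemma ConnIn.symm {G : SimpleGraph V} {T : Finset V} {a b : V} (h : ConnIn G T a b) :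
    ConnIn G T b a := by
  obtain ⟨n, p, h0, h1, hadj, hmem⟩ := h
  refine ⟨n, fun i => p (n - i), by simp [h1], by simp [h0], ?_, ?_⟩
  · intro i hi
    have h2 : n - i = (n - (i + 1)) + 1 := by omega
    simp only []
    rw [h2]
    exact (hadj (n - (i + 1)) (by omega)).symm
  · intro i _
    exact hmem _ (by omega)

lemma ConnIn.trans {G : SimpleGraph V} {T : Finset V} {a b c : V} (h : ConnIn G T a b)
    (h' : ConnIn G T b c) : ConnIn G T a c := by
  obtain ⟨n, p, h0, h1, hadj, hmem⟩ := h
  obtain ⟨m, q, g0, g1, gadj, gmem⟩ := h'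
  refine ⟨n + m, fun i => if i ≤ n then p i else q (i - n), by simp [h0], ?_, ?_, ?_⟩
  · by_cases hm : m = 0
    · subst hm
      simp only [Nat.add_zero, if_pos le_rfl, h1]
      rw [← g0, g1]
    · have : ¬ (n + m ≤ n) := by omega
      simp [this, g1]
  · intro i hi
    by_cases hin : i + 1 ≤ n
    · simp only [if_pos (by omega : i ≤ n), if_pos hin]
      exact hadj i (by omega)
    · by_cases hieq : i ≤ n
      · have hie : i = n := by omega
        subst hie
        simp only [if_pos le_rfl, if_neg hin]
        have : i + 1 - i = 1 := by omega
        rw [this, h1]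
        have := gadj 0 (by omega)
        rwa [g0] at this
      · simp only [if_neg hieq, if_neg (by omega : ¬ i + 1 ≤ n)]
        have h2 : i + 1 - n = (i - n) + 1 := by omega
        rw [h2]
        exact gadj (i - n) (by omega)
  · intro i hi
    by_cases hin : i ≤ n
    · simp only [if_pos hin]
      exact hmem i hin
    · simp only [if_neg hin]
      exact gmem (i - n) (by omega)

lemma ConnIn.mono {G : SimpleGraph V} {T T' : Finset V} (hTT : T ⊆ T') {a b : V}
    (h : ConnIn G T a b) : ConnIn G T' a b := by
  obtain ⟨n, p, h0, h1, hadj, hmem⟩ := h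
  exact ⟨n, p, h0, h1, hadj, fun i hi => hTT (hmem i hi)⟩


variable {V : Type*}

lemma aux_mod (N u v : ℕ) (hu : u < N) (hv : v < N) :
    (N - v + u) % N = 1 ↔ (u = v + 1 ∨ (v = N - 1 ∧ u = 0 ∧ 2 ≤ N)) := by
  rcases lt_or_ge (N - v + u) N with h | h
  · rw [Nat.mod_eq_of_lt h]; omega
  · rw [Nat.mod_eq_sub_mod h, Nat.mod_eq_of_lt (by omega)]; omega

lemma cycle_adj_val {n : ℕ} (u v : Fin (n + 2)) :
    (SimpleGraph.cycleGraph (n + 2)).Adj u v ↔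
      ((u.val = v.val + 1 ∨ (v.val = n + 1 ∧ u.val = 0)) ∨
       (v.val = u.val + 1 ∨ (u.val = n + 1 ∧ v.val = 0))) := by
  rw [SimpleGraph.cycleGraph_adj]
  have h1 : u - v = 1 ↔ (u.val = v.val + 1 ∨ (v.val = n + 1 ∧ u.val = 0)) := by
    rw [Fin.ext_iff, Fin.sub_def]
    simp only [Fin.val_one]
    rw [aux_mod (n + 2) u.val v.val u.isLt v.isLt]
    omega
  have h2 : v - u = 1 ↔ (v.val = u.val + 1 ∨ (u.val = n + 1 ∧ v.val = 0)) := by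
    rw [Fin.ext_iff, Fin.sub_def]
    simp only [Fin.val_one]
    rw [aux_mod (n + 2) v.val u.val v.isLt u.isLt]
    omega
  rw [h1, h2]

lemma not_chordal_of_cycle {G : SimpleGraph V} (v : V) (p : ℕ → V) (n : ℕ) (hn : 2 ≤ n)
    (hinj : ∀ i j, i ≤ n → j ≤ n → p i = p j → i = j)
    (hv : ∀ i, i ≤ n → p i ≠ v)
    (hadj : ∀ i, i < n → G.Adj (p i) (p (i + 1)))
    (hchord : ∀ i j, i + 1 < j → j ≤ n → ¬ G.Adj (p i) (p j))
    (hva : G.Adj v (p 0)) (hvb : G.Adj v (p n))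
    (hvint : ∀ k, 0 < k → k < n → ¬ G.Adj v (p k)) :
    ¬ SimpleGraph.IsChordal G := by
  intro hG
  set m := n + 2 with hm
  have hm4 : 4 ≤ m := by omega
  set e : Fin (n + 2) → V := fun k => if k.val = 0 then v else p (k.val - 1) with he
  have heval : ∀ k : Fin (n + 2), k.val ≠ 0 → e k = p (k.val - 1) := by
    intro k hk; simp only [he]; exact if_neg hk
  have heval0 : ∀ k : Fin (n + 2), k.val = 0 → e k = v := by
    intro k hk; simp only [he]; exact if_pos hk
  have einj : Function.Injective e := by
    intro k l h
    by_cases hk : k.val = 0 <;> by_cases hl : l.val = 0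
    · exact Fin.ext (by omega)
    · rw [heval0 k hk, heval l hl] at h
      exact absurd h.symm (hv (l.val - 1) (by omega))
    · rw [heval k hk, heval0 l hl] at h
      exact absurd h (hv (k.val - 1) (by omega))
    · rw [heval k hk, heval l hl] at h
      have := hinj _ _ (by omega) (by omega) h
      exact Fin.ext (by omega)
  -- adjacency among path vertices
  have hpadj : ∀ i j, i ≤ n → j ≤ n → (G.Adj (p i) (p j) ↔ (j = i + 1 ∨ i = j + 1)) := by
    intro i j hi hj
    constructor
    · intro h
      rcases lt_trichotomy i j with hij | hij | hij
      · left
        by_contra hne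
        exact hchord i j (by omega) hj h
      · subst hij; exact absurd h (G.irrefl)
      · right
        by_contra hne
        exact hchord j i (by omega) hi h.symm
    · rintro (rfl | rfl)
      · exact hadj i (by omega)
      · exact (hadj j (by omega)).symm
  have hA : ∀ k l : Fin (n + 2), G.Adj (e k) (e l) ↔ (SimpleGraph.cycleGraph (n + 2)).Adj k l := by
    intro k l
    rw [cycle_adj_val]
    have hkv := k.isLt
    have hlv := l.isLt
    by_cases hk : k.val = 0 <;> by_cases hl : l.val = 0
    · rw [heval0 k hk, heval0 l hl]
      simp only [SimpleGraph.irrefl]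
      constructor
      · intro h; exact absurd h (by simp)
      · intro h; omega
    · rw [heval0 k hk, heval l hl]
      constructor
      · intro h
        by_cases h1 : l.val - 1 = 0
        · right; left; omega
        · by_cases h2 : l.val - 1 = n
          · left; right; omega
          · exact absurd h (hvint (l.val - 1) (by omega) (by omega))
      · intro h
        have : l.val = 1 ∨ l.val = n + 1 := by omega
        rcases this with h1 | h1
        · have : l.val - 1 = 0 := by omega
          rw [this]; exact hva
        · have : l.val - 1 = n := by omega
          rw [this]; exact hvb
    · rw [heval k hk, heval0 l hl]
      constructor
      · intro h
        by_cases h1 : k.val - 1 = 0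
        · left; left; omega
        · by_cases h2 : k.val - 1 = n
          · right; right; omega
          · exact absurd h.symm (hvint (k.val - 1) (by omega) (by omega))
      · intro h
        have : k.val = 1 ∨ k.val = n + 1 := by omega
        rcases this with h1 | h1
        · have : k.val - 1 = 0 := by omega
          rw [this]; exact hva.symm
        · have : k.val - 1 = n := by omega
          rw [this]; exact hvb.symm
    · rw [heval k hk, heval l hl]
      rw [hpadj _ _ (by omega) (by omega)]
      omega
  apply hG m hm4 (Set.range e)
  refine ⟨⟨(Equiv.ofInjective e einj).symm, ?_⟩⟩
  intro a b
  rw [← hA]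
  have ha : e ((Equiv.ofInjective e einj).symm a) = a.val := Equiv.apply_ofInjective_symm einj a
  have hb : e ((Equiv.ofInjective e einj).symm b) = b.val := Equiv.apply_ofInjective_symm einj b
  rw [ha, hb]
  rfl


lemma chordal_key {G : SimpleGraph V} (hG : SimpleGraph.IsChordal G) (v : V) (T : Finset V)
    (hv : v ∉ T) (N : ℕ) :
    ∀ a b : V, G.Adj v a → G.Adj v b → (∃ p, ChainIn G T p N a b) →
      ConnIn G (T.filter (fun x => G.Adj v x)) a b := by
  induction N using Nat.strong_induction_on with
  | _ n IH =>
  rintro a b hva hvb ⟨p, hp⟩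
  by_cases hmin : ∃ m, m < n ∧ ∃ q, ChainIn G T q m a b
  · obtain ⟨m, hm, q, hq⟩ := hmin
    exact IH m hm a b hva hvb ⟨q, hq⟩
  push_neg at hmin
  obtain ⟨h0, h1, hadj, hmem⟩ := hp
  have haf : a ∈ T.filter (fun x => G.Adj v x) :=
    mem_filter.2 ⟨h0 ▸ hmem 0 (Nat.zero_le n), hva⟩
  have hbf : b ∈ T.filter (fun x => G.Adj v x) :=
    mem_filter.2 ⟨h1 ▸ hmem n le_rfl, hvb⟩
  rcases Nat.lt_or_ge n 2 with h2 | h2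
  · interval_cases n
    · rw [← h0, ← h1]
      exact connIn_refl (mem_filter.2 ⟨hmem 0 le_rfl, h0 ▸ hva⟩)
    · have hab : G.Adj a b := by
        have := hadj 0 (by omega)
        rwa [h0, h1] at this
      exact connIn_of_adj hab haf hbf
  -- n ≥ 2 : p is vertex-injective (else shortcut contradicts minimality)
  have hlt : ∀ i j, i < j → j ≤ n → p i ≠ p j := by
    intro i j hij hjn heq
    refine hmin (n - (j - i)) (by omega) (fun k => if k ≤ i then p k else p (k + (j - i))) ?_
    refine ⟨by simp [h0], ?_, ?_, ?_⟩
    all_goals dsimp only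
    · by_cases hni : n - (j - i) ≤ i
      · have hni' : n - (j - i) = i ∧ n = j := by omega
        rw [if_pos hni, hni'.1, heq, ← hni'.2]
        exact h1
      · rw [if_neg hni]
        have : n - (j - i) + (j - i) = n := by omega
        rw [this, h1]
    · intro k hk
      by_cases hk1 : k + 1 ≤ i
      · rw [if_pos (by omega), if_pos hk1]
        exact hadj k (by omega)
      · by_cases hk0 : k ≤ i
        · have hki : k = i := by omega
          rw [if_pos hk0, if_neg hk1, hki, heq]
          have : i + 1 + (j - i) = j + 1 := by omega
          rw [this]
          exact hadj j (by omega)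
        · rw [if_neg hk0, if_neg (by omega)]
          have : k + 1 + (j - i) = (k + (j - i)) + 1 := by omega
          rw [this]
          exact hadj (k + (j - i)) (by omega)
    · intro k hk
      by_cases hk0 : k ≤ i
      · rw [if_pos hk0]; exact hmem k (by omega)
      · rw [if_neg hk0]; exact hmem _ (by omega)
  have hinj : ∀ i j, i ≤ n → j ≤ n → p i = p j → i = j := by
    intro i j hi hj heq
    rcases lt_trichotomy i j with h | h | h
    · exact absurd heq (hlt i j h hj)
    · exact h
    · exact absurd heq.symm (hlt j i h hi)
  -- p is chordless
  have hchord : ∀ i j, i + 1 < j → j ≤ n → ¬ G.Adj (p i) (p j) := by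
    intro i j hij hjn hA
    refine hmin (n - (j - i - 1)) (by omega)
      (fun k => if k ≤ i then p k else p (k + (j - i - 1))) ?_
    refine ⟨by simp [h0], ?_, ?_, ?_⟩
    all_goals dsimp only
    · rw [if_neg (by omega)]
      have : n - (j - i - 1) + (j - i - 1) = n := by omega
      rw [this, h1]
    · intro k hk
      by_cases hk1 : k + 1 ≤ i
      · rw [if_pos (by omega), if_pos hk1]
        exact hadj k (by omega)
      · by_cases hk0 : k ≤ i
        · have hki : k = i := by omega
          rw [if_pos hk0, if_neg hk1, hki]
          have : i + 1 + (j - i - 1) = j := by omega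
          rw [this]
          exact hA
        · rw [if_neg hk0, if_neg (by omega)]
          have : k + 1 + (j - i - 1) = (k + (j - i - 1)) + 1 := by omega
          rw [this]
          exact hadj (k + (j - i - 1)) (by omega)
    · intro k hk
      by_cases hk0 : k ≤ i
      · rw [if_pos hk0]; exact hmem k (by omega)
      · rw [if_neg hk0]; exact hmem _ (by omega)
  by_cases hint : ∃ k, 0 < k ∧ k < n ∧ G.Adj v (p k)
  · obtain ⟨k, hk0, hkn, hvk⟩ := hint
    have c1 : ConnIn G (T.filter (fun x => G.Adj v x)) a (p k) := by
      refine IH k (by omega) a (p k) hva hvk ⟨p, h0, rfl, ?_, ?_⟩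
      · intro i hi; exact hadj i (by omega)
      · intro i hi; exact hmem i (by omega)
    have c2 : ConnIn G (T.filter (fun x => G.Adj v x)) (p k) b := by
      refine IH (n - k) (by omega) (p k) b hvk hvb ⟨fun i => p (i + k), by simp, ?_, ?_, ?_⟩
      all_goals dsimp only
      · have : n - k + k = n := by omega
        rw [this, h1]
      · intro i hi
        have : i + 1 + k = (i + k) + 1 := by omega
        rw [this]
        exact hadj (i + k) (by omega)
      · intro i hi; exact hmem (i + k) (by omega)
    exact c1.trans c2
  · push_neg at hint
    exfalso
    refine not_chordal_of_cycle v p n h2 hinj ?_ hadj hchord (h0 ▸ hva) (h1 ▸ hvb) hint hG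
    intro i hi heq
    exact hv (heq ▸ hmem i hi)


noncomputable def cls (G : SimpleGraph V) (S : Finset V) (a : V) : Finset V :=
  S.filter (fun b => ConnIn G S a b)

noncomputable def comps (G : SimpleGraph V) (S : Finset V) : Finset (Finset V) :=
  S.image (cls G S)

lemma mem_cls {G : SimpleGraph V} {S : Finset V} {a b : V} :
    b ∈ cls G S a ↔ b ∈ S ∧ ConnIn G S a b := by
  simp [cls]

lemma cls_eq_iff {G : SimpleGraph V} {S : Finset V} {a b : V} (ha : a ∈ S) (hb : b ∈ S) :
    cls G S a = cls G S b ↔ ConnIn G S a b := by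
  constructor
  · intro h
    have hbb : b ∈ cls G S b := mem_cls.2 ⟨hb, connIn_refl hb⟩
    rw [← h] at hbb
    exact (mem_cls.1 hbb).2
  · intro h
    ext x
    rw [mem_cls, mem_cls]
    exact ⟨fun hx => ⟨hx.1, h.symm.trans hx.2⟩, fun hx => ⟨hx.1, h.trans hx.2⟩⟩

lemma connIn_avoid {G : SimpleGraph V} {S : Finset V} {v a b : V} (h : ConnIn G S a b) :
    ConnIn G (S.erase v) a b ∨ ConnIn G S a v := by
  obtain ⟨n, p, h0, h1, hadj, hmem⟩ := h
  by_cases hvp : ∃ i, i ≤ n ∧ p i = v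
  · obtain ⟨i, hi, hiv⟩ := hvp
    exact Or.inr ⟨i, p, h0, hiv, fun k hk => hadj k (by omega), fun k hk => hmem k (by omega)⟩
  · push_neg at hvp
    exact Or.inl ⟨n, p, h0, h1, hadj, fun i hi => mem_erase.2 ⟨hvp i hi, hmem i hi⟩⟩

lemma connIn_last_exit {G : SimpleGraph V} {S : Finset V} {v b : V} (hb : b ≠ v)
    (h : ConnIn G S b v) :
    ∃ u, u ∈ S.erase v ∧ G.Adj v u ∧ ConnIn G (S.erase v) b u := by
  classical
  obtain ⟨n, p, h0, h1, hadj, hmem⟩ := h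
  have hex : ∃ k, p k = v ∧ k ≤ n := ⟨n, h1, le_rfl⟩
  have hkv := (Nat.find_spec hex).1
  have hkn := (Nat.find_spec hex).2
  set k := Nat.find hex with hkdef
  have hmink : ∀ i, i < k → p i ≠ v := by
    intro i hi hiv
    exact Nat.find_min hex hi ⟨hiv, by omega⟩
  have hk1 : 1 ≤ k := by
    rcases Nat.eq_zero_or_pos k with hzero | h
    · rw [hzero, h0] at hkv
      exact absurd hkv hb
    · exact h
  have hne : p (k - 1) ≠ v := hmink (k - 1) (by omega)
  have hadj' : G.Adj v (p (k - 1)) := by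
    have := hadj (k - 1) (by omega)
    have hkk : k - 1 + 1 = k := by omega
    rw [hkk, hkv] at this
    exact this.symm
  refine ⟨p (k - 1), mem_erase.2 ⟨hne, hmem _ (by omega)⟩, hadj',
    ⟨k - 1, p, h0, rfl, fun i hi => hadj i (by omega), fun i hi =>
      mem_erase.2 ⟨hmink i (by omega), hmem i (by omega)⟩⟩⟩

lemma card_image_eq_of_iff {α β γ : Type*} [DecidableEq β] [DecidableEq γ] {s : Finset α}
    {f : α → β} {g : α → γ} (h : ∀ a ∈ s, ∀ b ∈ s, (f a = f b ↔ g a = g b)) :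
    (s.image f).card = (s.image g).card := by
  classical
  induction s using Finset.induction_on with
  | empty => simp
  | @insert a s ha IH =>
    rw [image_insert, image_insert]
    have hmemiff : f a ∈ s.image f ↔ g a ∈ s.image g := by
      simp only [mem_image]
      constructor
      · rintro ⟨b, hb, hba⟩
        exact ⟨b, hb, ((h b (mem_insert_of_mem hb) a (mem_insert_self a s)).1 hba)⟩
      · rintro ⟨b, hb, hba⟩
        exact ⟨b, hb, ((h b (mem_insert_of_mem hb) a (mem_insert_self a s)).2 hba)⟩
    have IH' := IH (fun x hx y hy => h x (mem_insert_of_mem hx) y (mem_insert_of_mem hy))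
    by_cases hf : f a ∈ s.image f
    · rw [insert_eq_self.2 hf, insert_eq_self.2 (hmemiff.1 hf), IH']
    · rw [card_insert_of_notMem hf, card_insert_of_notMem (fun hg => hf (hmemiff.2 hg)), IH']


lemma comps_card_rec {G : SimpleGraph V} (hG : SimpleGraph.IsChordal G) {S : Finset V} {v : V}
    (hvS : v ∈ S) :
    (comps G S).card + (comps G ((S.erase v).filter (fun x => G.Adj v x))).card
      = (comps G (S.erase v)).card + 1 := by
  classical
  set T := S.erase v with hT
  set Nv := T.filter (fun x => G.Adj v x) with hNv
  have hTS : T ⊆ S := erase_subset v S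
  have hvT : v ∉ T := notMem_erase v S
  -- claim 1
  have claim1 : ∀ a ∈ T, ¬ ConnIn G S a v → cls G S a = cls G T a := by
    intro a haT hnc
    ext b
    rw [mem_cls, mem_cls]
    constructor
    · rintro ⟨hbS, hc⟩
      rcases connIn_avoid (v := v) hc with hc' | hc'
      · exact ⟨hc'.mem_right, hc'⟩
      · exact absurd hc' hnc
    · rintro ⟨hbT, hc⟩
      exact ⟨hTS hbT, hc.mono hTS⟩
  set D := T.filter (fun a => ¬ ConnIn G S a v) with hD
  set E := T.filter (fun a => ConnIn G S a v) with hE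
  have claim2 : comps G S = insert (cls G S v) (D.image (cls G T)) := by
    ext Q
    constructor
    · intro hQ
      obtain ⟨a, haS, rfl⟩ := mem_image.1 hQ
      by_cases hc : ConnIn G S a v
      · rw [show cls G S a = cls G S v from (cls_eq_iff haS hvS).2 hc]
        exact mem_insert_self _ _
      · have haT : a ∈ T := by
          refine mem_erase.2 ⟨?_, haS⟩
          rintro rfl
          exact hc (connIn_refl haS)
        rw [claim1 a haT hc]
        exact mem_insert_of_mem (mem_image_of_mem _ (mem_filter.2 ⟨haT, hc⟩))
    · intro hQ
      rcases mem_insert.1 hQ with rfl | hQ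
      · exact mem_image_of_mem _ hvS
      · obtain ⟨a, haD, rfl⟩ := mem_image.1 hQ
        obtain ⟨haT, hnc⟩ := mem_filter.1 haD
        rw [← claim1 a haT hnc]
        exact mem_image_of_mem _ (hTS haT)
    -- claim 3
  have claim3 : cls G S v ∉ D.image (cls G T) := by
    intro hmem'
    obtain ⟨a, _, heq⟩ := mem_image.1 hmem'
    have hvv : v ∈ cls G S v := mem_cls.2 ⟨hvS, connIn_refl hvS⟩
    rw [← heq] at hvv
    exact hvT (mem_cls.1 hvv).1
  have hSc : (comps G S).card = (D.image (cls G T)).card + 1 := by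
    rw [claim2, card_insert_of_notMem claim3]
  -- split comps T
  have hDE : D ∪ E = T := by
    ext x
    simp only [hD, hE, mem_union, mem_filter]
    tauto
  have hTsplit : comps G T = D.image (cls G T) ∪ E.image (cls G T) := by
    rw [comps, ← hDE, image_union]
  have hdisj : Disjoint (D.image (cls G T)) (E.image (cls G T)) := by
    rw [disjoint_left]
    intro Q hQD hQE
    obtain ⟨a, haD, rfl⟩ := mem_image.1 hQD
    obtain ⟨b, hbE, heq⟩ := mem_image.1 hQE
    obtain ⟨haT, hnc⟩ := mem_filter.1 haD
    obtain ⟨hbT, hc⟩ := mem_filter.1 hbE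
    have : ConnIn G T a b := (cls_eq_iff haT hbT).1 heq.symm
    exact hnc ((this.mono hTS).trans hc)
  have hTc : (comps G T).card = (D.image (cls G T)).card + (E.image (cls G T)).card := by
    rw [hTsplit, card_union_of_disjoint hdisj]
  -- E image = Nv image
  have hENv : E.image (cls G T) = Nv.image (cls G T) := by
    ext Q
    simp only [mem_image]
    constructor
    · rintro ⟨a, haE, rfl⟩
      obtain ⟨haT, hc⟩ := mem_filter.1 haE
      have hane : a ≠ v := (mem_erase.1 haT).1
      obtain ⟨u, huT, hadjvu, hcu⟩ := connIn_last_exit hane hc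
      refine ⟨u, mem_filter.2 ⟨huT, hadjvu⟩, ?_⟩
      exact ((cls_eq_iff haT huT).2 hcu).symm
    · rintro ⟨u, huNv, rfl⟩
      obtain ⟨huT, hadjvu⟩ := mem_filter.1 huNv
      refine ⟨u, mem_filter.2 ⟨huT, ?_⟩, rfl⟩
      exact connIn_of_adj hadjvu.symm (hTS huT) hvS
  -- Nv images: cls T vs cls Nv (chordality)
  have hNvc : (Nv.image (cls G T)).card = (comps G Nv).card := by
    rw [comps]
    refine card_image_eq_of_iff ?_
    intro a haNv b hbNv
    obtain ⟨haT, hadjva⟩ := mem_filter.1 haNv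
    obtain ⟨hbT, hadjvb⟩ := mem_filter.1 hbNv
    rw [cls_eq_iff haT hbT, cls_eq_iff haNv hbNv]
    constructor
    · rintro ⟨n, p, hp⟩
      exact chordal_key hG v T hvT n a b hadjva hadjvb ⟨p, hp⟩
    · intro h
      exact h.mono (filter_subset _ _)
  have hEc : (E.image (cls G T)).card = (comps G Nv).card := by
    rw [hENv, hNvc]
  omega


noncomputable def esum (G : SimpleGraph V) (S : Finset V) : ℤ :=
  ∑ I ∈ S.powerset.filter (fun I : Finset V => I.Nonempty ∧ G.IsClique (I : Set V)), (-1 : ℤ) ^ (I.card - 1)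

lemma esum_rec {G : SimpleGraph V} {S : Finset V} {v : V} (hvS : v ∈ S) :
    esum G S = esum G (S.erase v) + 1 - esum G ((S.erase v).filter (fun x => G.Adj v x)) := by
  classical
  set T := S.erase v with hT
  set Nv := T.filter (fun x => G.Adj v x) with hNv
  set A := S.powerset.filter (fun I : Finset V => I.Nonempty ∧ G.IsClique (I : Set V)) with hA
  have hsplit : esum G S = ∑ I ∈ A.filter (fun I => v ∈ I), (-1 : ℤ) ^ (I.card - 1)
      + ∑ I ∈ A.filter (fun I => v ∉ I), (-1 : ℤ) ^ (I.card - 1) := by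
    rw [esum, ← hA, Finset.sum_filter_add_sum_filter_not]
  have hwithout : A.filter (fun I => v ∉ I)
      = T.powerset.filter (fun I : Finset V => I.Nonempty ∧ G.IsClique (I : Set V)) := by
    ext I
    simp only [hA, mem_filter, mem_powerset, hT, subset_erase]
    tauto
  have hB : ∑ I ∈ A.filter (fun I => v ∈ I), (-1 : ℤ) ^ (I.card - 1)
      = ∑ K ∈ Nv.powerset.filter (fun K : Finset V => G.IsClique (K : Set V)), (-1 : ℤ) ^ K.card := by
    refine Finset.sum_bij' (fun I _ => I.erase v) (fun K _ => insert v K) ?_ ?_ ?_ ?_ ?_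
    · intro I hI
      simp only [hA, mem_filter, mem_powerset] at hI
      obtain ⟨⟨hIS, hne, hclique⟩, hvI⟩ := hI
      simp only [mem_filter, mem_powerset]
      constructor
      · intro x hx
        obtain ⟨hxv, hxI⟩ := mem_erase.1 hx
        refine mem_filter.2 ⟨mem_erase.2 ⟨hxv, hIS hxI⟩, ?_⟩
        exact hclique hvI hxI (Ne.symm hxv)
      · exact hclique.subset (by simp [Finset.coe_subset, erase_subset])
    · intro K hK
      simp only [mem_filter, mem_powerset] at hK
      obtain ⟨hKN, hclique⟩ := hK
      have hvK : v ∉ K := by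
        intro hvK
        have := hKN hvK
        rw [hNv] at this
        exact (mem_erase.1 (mem_filter.1 this).1).1 rfl
      simp only [hA, mem_filter, mem_powerset]
      refine ⟨⟨?_, ⟨v, mem_insert_self v K⟩, ?_⟩, mem_insert_self v K⟩
      · intro x hx
        rcases mem_insert.1 hx with rfl | hx
        · exact hvS
        · exact erase_subset v S ((filter_subset _ _) (hKN hx))
      · rw [coe_insert]
        refine hclique.insert ?_
        intro b hb _
        exact (mem_filter.1 (hKN hb)).2
    · intro I hI
      simp only [hA, mem_filter] at hI
      exact insert_erase hI.2
    · intro K hK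
      simp only [mem_filter, mem_powerset] at hK
      have hvK : v ∉ K := by
        intro hvK
        have := hK.1 hvK
        rw [hNv] at this
        exact (mem_erase.1 (mem_filter.1 this).1).1 rfl
      exact erase_insert hvK
    · intro I hI
      simp only [hA, mem_filter] at hI
      have hcard : I.card - 1 = (I.erase v).card := by
        rw [card_erase_of_mem hI.2]
      rw [hcard]
  have hend : ∑ K ∈ Nv.powerset.filter (fun K : Finset V => G.IsClique (K : Set V)), (-1 : ℤ) ^ K.card
      = 1 - esum G Nv := by
    have hempty : ∅ ∈ Nv.powerset.filter (fun K : Finset V => G.IsClique (K : Set V)) := by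
      simp [SimpleGraph.isClique_empty]
    rw [← Finset.sum_filter_add_sum_filter_not
      (Nv.powerset.filter (fun K : Finset V => G.IsClique (K : Set V))) (fun K => K.Nonempty)]
    have h1 : (Nv.powerset.filter (fun K : Finset V => G.IsClique (K : Set V))).filter
        (fun K => ¬ K.Nonempty) = {∅} := by
      ext K
      simp only [mem_filter, mem_powerset, Finset.not_nonempty_iff_eq_empty, mem_singleton]
      constructor
      · rintro ⟨_, h⟩; exact h
      · rintro rfl
        exact ⟨⟨empty_subset _, by simp [SimpleGraph.isClique_empty]⟩, rfl⟩
    have h2 : (Nv.powerset.filter (fun K : Finset V => G.IsClique (K : Set V))).filter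
        (fun K => K.Nonempty) = Nv.powerset.filter (fun K : Finset V => K.Nonempty ∧ G.IsClique (K : Set V)) := by
      ext K
      simp only [mem_filter, mem_powerset]
      tauto
    rw [h1, h2]
    have h3 : ∑ K ∈ Nv.powerset.filter (fun K : Finset V => K.Nonempty ∧ G.IsClique (K : Set V)),
        (-1 : ℤ) ^ K.card = - esum G Nv := by
      rw [esum, ← Finset.sum_neg_distrib]
      refine Finset.sum_congr rfl ?_
      intro K hK
      have hKne : K.Nonempty := (mem_filter.1 hK).2.1
      obtain ⟨m, hm⟩ : ∃ m, K.card = m + 1 := ⟨K.card - 1, by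
        have := card_pos.2 hKne
        omega⟩
      rw [hm]
      simp [pow_succ]
    rw [h3, Finset.sum_singleton]
    have : ((-1 : ℤ)) ^ (∅ : Finset V).card = 1 := by simp
    rw [this]
    linarith
  rw [hsplit, hB, hend, hwithout]
  have hTe : esum G (S.erase v) = ∑ I ∈ (S.erase v).powerset.filter
      (fun I : Finset V => I.Nonempty ∧ G.IsClique (I : Set V)), (-1 : ℤ) ^ (I.card - 1) := rfl
  rw [hTe, ← hT]
  ring


lemma esum_empty (G : SimpleGraph V) : esum G ∅ = 0 := by
  have he : filter (fun I : Finset V => I.Nonempty ∧ G.IsClique (I : Set V))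
      ({∅} : Finset (Finset V)) = ∅ := by
    ext I
    simp only [mem_filter, mem_singleton, notMem_empty, iff_false, not_and]
    rintro rfl
    simp
  simp [esum, he]

lemma esum_eq_comps_card {G : SimpleGraph V} (hG : SimpleGraph.IsChordal G) :
    ∀ (n : ℕ) (S : Finset V), S.card ≤ n → esum G S = ((comps G S).card : ℤ) := by
  intro n
  induction n with
  | zero =>
    intro S hS
    have hSe : S = ∅ := card_eq_zero.1 (le_antisymm hS (Nat.zero_le _))
    subst hSe
    simp [esum_empty, comps]
  | succ n IH =>
    intro S hS
    rcases S.eq_empty_or_nonempty with rfl | ⟨v, hvS⟩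
    · simp [esum_empty, comps]
    · have hrec := esum_rec (G := G) hvS
      have hcomp := comps_card_rec hG hvS
      have hT : (S.erase v).card ≤ n := by
        have h1 := card_erase_of_mem hvS
        have h2 := card_pos.2 ⟨v, hvS⟩
        omega
      have h1 := IH (S.erase v) hT
      have h2 := IH ((S.erase v).filter (fun x => G.Adj v x))
        (le_trans (card_filter_le _ _) hT)
      rw [hrec, h1, h2]
      omega

lemma one_le_esum {G : SimpleGraph V} (hG : SimpleGraph.IsChordal G) {S : Finset V}
    (hne : S.Nonempty) : 1 ≤ esum G S := by
  obtain ⟨a, ha⟩ := hne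
  rw [esum_eq_comps_card hG S.card S le_rfl]
  have hmem' : cls G S a ∈ comps G S := mem_image_of_mem _ ha
  have := card_pos.2 ⟨_, hmem'⟩
  exact_mod_cast this

lemma zero_le_esum {G : SimpleGraph V} (hG : SimpleGraph.IsChordal G) (S : Finset V) :
    0 ≤ esum G S := by
  rcases S.eq_empty_or_nonempty with rfl | hne
  · simp [esum_empty]
  · linarith [one_le_esum hG hne]

end ChordalSieve

open ChordalSieve
theorem chordal_graph_sieve_upper {Ω V : Type*} [MeasurableSpace Ω] [Fintype V]
    (μ : Measure Ω) [IsProbabilityMeasure μ] (G : SimpleGraph V) (hG : G.IsChordal)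
    (A : V → Set Ω) (hA : ∀ v, MeasurableSet (A v)) :
    (μ (⋃ v, A v)).toReal ≤
      ∑ I ∈ G.cliqueComplex, (-1 : ℝ) ^ (I.card - 1) * (μ (⋂ i ∈ I, A i)).toReal := by
  classical
  set B : Finset V → Set Ω := fun I => ⋂ i ∈ I, A i with hB
  have hBmeas : ∀ I : Finset V, MeasurableSet (B I) := fun I =>
    Finset.measurableSet_biInter I (fun i _ => hA i)
  have hUmeas : MeasurableSet (⋃ v, A v) := MeasurableSet.iUnion (fun v => hA v)
  have hint : ∀ I : Finset V,
      Integrable (fun ω => (-1 : ℝ) ^ (I.card - 1) * Set.indicator (B I) (1 : Ω → ℝ) ω) μ :=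
    fun I => ((integrable_const (1 : ℝ)).indicator (hBmeas I)).const_mul _
  set g : Ω → ℝ := fun ω =>
    ∑ I ∈ G.cliqueComplex, (-1 : ℝ) ^ (I.card - 1) * Set.indicator (B I) (1 : Ω → ℝ) ω with hg
  have hgInt : Integrable g μ := integrable_finset_sum _ (fun I _ => hint I)
  have hiInt : Integrable (Set.indicator (⋃ v, A v) (1 : Ω → ℝ)) μ :=
    (integrable_const 1).indicator hUmeas
  have hLHS : (μ (⋃ v, A v)).toReal = ∫ ω, Set.indicator (⋃ v, A v) (1 : Ω → ℝ) ω ∂μ :=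
    (MeasureTheory.integral_indicator_one hUmeas).symm
  have hRHS : ∫ ω, g ω ∂μ
      = ∑ I ∈ G.cliqueComplex, (-1 : ℝ) ^ (I.card - 1) * (μ (B I)).toReal := by
    rw [hg, integral_finset_sum _ (fun I _ => hint I)]
    refine Finset.sum_congr rfl (fun I _ => ?_)
    rw [MeasureTheory.integral_const_mul, MeasureTheory.integral_indicator_one (hBmeas I)]
    rfl
  rw [hLHS, ← hRHS]
  refine integral_mono hiInt hgInt ?_
  intro ω
  set Sw : Finset V := Finset.univ.filter (fun v => ω ∈ A v) with hSw
  have hmemB : ∀ I : Finset V, Set.indicator (B I) (1 : Ω → ℝ) ω = if I ⊆ Sw then 1 else 0 := by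
    intro I
    by_cases hI : I ⊆ Sw
    · rw [if_pos hI, Set.indicator_of_mem]
      · rfl
      · rw [hB]
        exact Set.mem_iInter₂.2 (fun i hi => (mem_filter.1 (hI hi)).2)
    · rw [if_neg hI, Set.indicator_of_notMem]
      intro hωB
      refine hI (fun i hi => ?_)
      exact mem_filter.2 ⟨mem_univ i, Set.mem_iInter₂.1 hωB i hi⟩
  have hgω : g ω = ((esum G Sw : ℤ) : ℝ) := by
    rw [hg]
    dsimp only
    have e1 : ∑ I ∈ G.cliqueComplex, (-1 : ℝ) ^ (I.card - 1) * Set.indicator (B I) (1 : Ω → ℝ) ω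
        = ∑ I ∈ G.cliqueComplex, (if I ⊆ Sw then (-1 : ℝ) ^ (I.card - 1) else 0) := by
      refine Finset.sum_congr rfl (fun I _ => ?_)
      rw [hmemB I]
      split_ifs <;> ring
    rw [e1, ← Finset.sum_filter]
    have e2 : (G.cliqueComplex).filter (fun I => I ⊆ Sw)
        = Sw.powerset.filter (fun I : Finset V => I.Nonempty ∧ G.IsClique (I : Set V)) := by
      ext I
      simp only [SimpleGraph.cliqueComplex, mem_filter, mem_powerset, subset_univ, true_and]
      tauto
    rw [e2, esum]
    push_cast
    rfl
  by_cases hω : ω ∈ ⋃ v, A v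
  · rw [Set.indicator_of_mem hω, hgω]
    obtain ⟨v, hv⟩ := Set.mem_iUnion.1 hω
    have hne : Sw.Nonempty := ⟨v, mem_filter.2 ⟨mem_univ v, hv⟩⟩
    have h1 := one_le_esum hG hne
    have : (1 : ℝ) ≤ ((esum G Sw : ℤ) : ℝ) := by exact_mod_cast h1
    exact this
  · rw [Set.indicator_of_notMem hω, hgω]
    have h0 := zero_le_esum hG Sw
    have : (0 : ℝ) ≤ ((esum G Sw : ℤ) : ℝ) := by exact_mod_cast h0
    exact this
end

section
/- Let {A_v}_{v∈V} be a finite collection of events in a probability space, where the index set V is the vertex set of a chordal graph G. Then for every positive integer r, Pr(⋃_{v∈V} A_v) ≤ Σ_{I∈𝒞(G), |I|≤2r−1} (−1)^{|I|−1} · Pr(⋂_{i∈I} A_i), where the sum runs over all elements I of the clique complex 𝒞(G) of cardinality at most 2r−1. -/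
open MeasureTheory Finset
open scoped Classical

/-- The independence number of `G`: the maximum size of a set of pairwise
non-adjacent vertices. -/
noncomputable def SimpleGraph.indepNum' {V : Type*} [Fintype V] (G : SimpleGraph V) : ℕ :=
  sSup {n | ∃ s : Finset V, ((s : Set V).Pairwise fun v w => ¬ G.Adj v w) ∧ s.card = n}


namespace SimpleGraph.Walk
variable {V : Type*} {G : SimpleGraph V} {x y : V}

/-- Prefix of a walk up to index `n`. -/
def wtake {u v : V} : (p : G.Walk u v) → (n : ℕ) → G.Walk u (p.getVert n)
  | .nil, _ => .nil
  | .cons _ _, 0 => Walk.copy .nil rfl (getVert_zero _).symm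
  | .cons h q, (n + 1) => ((q.wtake n).cons h).copy rfl (getVert_cons_succ _ h).symm

lemma length_wtake {u v : V} (p : G.Walk u v) (n : ℕ) :
    (p.wtake n).length = min n p.length := by
  induction p generalizing n with
  | nil => simp [wtake]
  | cons h q ih =>
    cases n with
    | zero => simp [wtake]
    | succ n => simp [wtake, ih, Nat.succ_min_succ]

lemma support_wtake {u v : V} (p : G.Walk u v) (n : ℕ) :
    ∀ z ∈ (p.wtake n).support, z ∈ p.support := by
  induction p generalizing n with
  | nil => simp [wtake]
  | cons h q ih =>
    cases n with
    | zero => intro z hz; simp [wtake] at hz; simp [hz]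
    | succ n =>
      intro z hz
      simp only [wtake, support_copy, support_cons, List.mem_cons] at hz
      rcases hz with hz | hz
      · simp [hz]
      · simp only [support_cons, List.mem_cons]; exact Or.inr (ih n z hz)

/-- Suffix of a walk from index `n`. -/
def wdrop {u v : V} : (p : G.Walk u v) → (n : ℕ) → G.Walk (p.getVert n) v
  | .nil, _ => .nil
  | .cons h q, 0 => (q.cons h).copy (getVert_zero _).symm rfl
  | .cons h q, (n + 1) => (q.wdrop n).copy (getVert_cons_succ _ h).symm rfl

lemma length_wdrop {u v : V} (p : G.Walk u v) (n : ℕ) :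
    (p.wdrop n).length = p.length - n := by
  induction p generalizing n with
  | nil => cases n <;> simp [wdrop]
  | cons h q ih =>
    cases n with
    | zero => simp [wdrop]
    | succ n => simp [wdrop, ih]

lemma support_wdrop {u v : V} (p : G.Walk u v) (n : ℕ) :
    ∀ z ∈ (p.wdrop n).support, z ∈ p.support := by
  induction p generalizing n with
  | nil => cases n <;> simp [wdrop, getVert_of_length_le]
  | cons h q ih =>
    cases n with
    | zero => simp [wdrop]
    | succ n =>
      intro z hz
      simp only [wdrop, support_copy] at hz
      simp only [support_cons, List.mem_cons]
      exact Or.inr (ih n z hz)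


variable {V : Type*} {G : SimpleGraph V} {x y : V}

/-- A walk of minimum length among walks from `x` to `y` with support inside `s`. -/
def IsMinWalk (s : Set V) (p : G.Walk x y) : Prop :=
  (∀ z ∈ p.support, z ∈ s) ∧
    ∀ q : G.Walk x y, (∀ z ∈ q.support, z ∈ s) → p.length ≤ q.length

lemma exists_isMinWalk {s : Set V} (h : ∃ p : G.Walk x y, ∀ z ∈ p.support, z ∈ s) :
    ∃ p : G.Walk x y, IsMinWalk s p := by
  classical
  obtain ⟨p, hp⟩ := h
  have hex : ∃ n : ℕ, ∃ q : G.Walk x y, (∀ z ∈ q.support, z ∈ s) ∧ q.length = n :=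
    ⟨p.length, p, hp, rfl⟩
  obtain ⟨q, hq, hlen⟩ := Nat.find_spec hex
  refine ⟨q, hq, fun q' hq' => ?_⟩
  rw [hlen]
  exact Nat.find_le ⟨q', hq', rfl⟩

lemma IsMinWalk.getVert_ne {s : Set V} {p : G.Walk x y} (hp : IsMinWalk s p)
    {i j : ℕ} (hij : i < j) (hj : j ≤ p.length) : p.getVert i ≠ p.getVert j := by
  intro hEq
  have w : G.Walk x y := (p.wtake i).append ((p.wdrop j).copy hEq.symm rfl)
  have hw : ∀ z ∈ ((p.wtake i).append ((p.wdrop j).copy hEq.symm rfl)).support, z ∈ s := by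
    intro z hz
    rw [mem_support_append_iff] at hz
    rcases hz with hz | hz
    · exact hp.1 z (p.support_wtake i z hz)
    · rw [support_copy] at hz
      exact hp.1 z (p.support_wdrop j z hz)
  have := hp.2 _ hw
  rw [length_append, length_wtake, length_copy, length_wdrop] at this
  omega
lemma IsMinWalk.not_adj {s : Set V} {p : G.Walk x y} (hp : IsMinWalk s p)
    {i j : ℕ} (hij : i + 1 < j) (hj : j ≤ p.length) :
    ¬ G.Adj (p.getVert i) (p.getVert j) := by
  intro hadj
  have hw : ∀ z ∈ ((p.wtake i).append ((p.wdrop j).cons hadj)).support, z ∈ s := by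
    intro z hz
    rw [mem_support_append_iff] at hz
    rcases hz with hz | hz
    · exact hp.1 z (p.support_wtake i z hz)
    · rw [support_cons, List.mem_cons] at hz
      rcases hz with rfl | hz
      · exact hp.1 _ (p.getVert_mem_support i)
      · exact hp.1 z (p.support_wdrop j z hz)
  have := hp.2 _ hw
  rw [length_append, length_wtake, length_cons, length_wdrop] at this
  omega

end SimpleGraph.Walk


open SimpleGraph

lemma fin_sub_val_eq_one_iff {n : ℕ} (hn : 2 ≤ n) (i j : Fin n) :
    (j - i).1 = 1 ↔ (j.1 = i.1 + 1 ∨ (j.1 = 0 ∧ i.1 = n - 1)) := by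
  have hi := i.2
  have hj := j.2
  rw [Fin.sub_def]
  simp only [Fin.val_mk]
  rcases Nat.lt_or_ge (n - i.1 + j.1) n with h | h
  · rw [Nat.mod_eq_of_lt h]; omega
  · have h2 : n - i.1 + j.1 - n < n := by omega
    rw [Nat.mod_eq_sub_mod h, Nat.mod_eq_of_lt h2]; omega

lemma SimpleGraph.IsChordal.no_cycle_map {V : Type*} {G : SimpleGraph V} (hG : G.IsChordal)
    {n : ℕ} (hn : 4 ≤ n) (f : Fin n → V) (hinj : Function.Injective f)
    (hiff : ∀ i j : Fin n, G.Adj (f i) (f j) ↔ (SimpleGraph.cycleGraph n).Adj i j) : False := by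
  classical
  apply hG n hn (Set.range f)
  refine ⟨⟨(Equiv.ofInjective f hinj).symm, ?_⟩⟩
  intro a b
  have ha : f ((Equiv.ofInjective f hinj).symm a) = ↑a := by
    exact congrArg Subtype.val ((Equiv.ofInjective f hinj).apply_symm_apply a)
  have hb : f ((Equiv.ofInjective f hinj).symm b) = ↑b := by
    exact congrArg Subtype.val ((Equiv.ofInjective f hinj).apply_symm_apply b)
  rw [← hiff, ha, hb]
  simp [SimpleGraph.induce]

theorem SimpleGraph.IsChordal.no_two_paths {V : Type*} {G : SimpleGraph V} (hG : G.IsChordal)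
    {x y : V} (hxy : x ≠ y) (hnadj : ¬ G.Adj x y) {Ca Cb : Set V}
    (hdisj : ∀ z, z ∈ Ca → z ∈ Cb → False)
    (hxCa : x ∉ Ca) (hxCb : x ∉ Cb) (hyCa : y ∉ Ca) (hyCb : y ∉ Cb)
    (hC : ∀ u ∈ Ca, ∀ v ∈ Cb, ¬ G.Adj u v)
    (p : G.Walk x y) (hp : p.IsMinWalk (Ca ∪ {x, y}))
    (q : G.Walk y x) (hq : q.IsMinWalk (Cb ∪ {x, y})) : False := by
  classical
  set k := p.length with hk
  set l := q.length with hl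
  have px0 : p.getVert 0 = x := p.getVert_zero
  have pxk : p.getVert k = y := p.getVert_length
  have qy0 : q.getVert 0 = y := q.getVert_zero
  have qyl : q.getVert l = x := q.getVert_length
  have hk0 : k ≠ 0 := fun h => hxy (px0.symm.trans (h ▸ pxk))
  have hk1 : k ≠ 1 := fun h => by
    have h1 : (0 : ℕ) < p.length := by omega
    have := p.adj_getVert_succ h1
    rw [px0, zero_add, show (1:ℕ) = k from h.symm, pxk] at this
    exact hnadj this
  have hk2 : 2 ≤ k := by omega
  have hl0 : l ≠ 0 := fun h => hxy ((h ▸ qyl).symm.trans qy0)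
  have hl1 : l ≠ 1 := fun h => by
    have h1 : (0 : ℕ) < q.length := by omega
    have := q.adj_getVert_succ h1
    rw [qy0, zero_add, show (1:ℕ) = l from h.symm, qyl] at this
    exact hnadj this.symm
  have hl2 : 2 ≤ l := by omega
  have hpint : ∀ m, 0 < m → m < k → p.getVert m ∈ Ca := by
    intro m h0 hm
    have hmem := hp.1 _ (p.getVert_mem_support m)
    simp only [Set.mem_union, Set.mem_insert_iff, Set.mem_singleton_iff] at hmem
    rcases hmem with h | h | h
    · exact h
    · exact absurd (by rw [px0, h]) (hp.getVert_ne h0 (le_of_lt hm))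
    · exact absurd (by rw [pxk, h]) (hp.getVert_ne hm le_rfl).symm
  have hqint : ∀ m, 0 < m → m < l → q.getVert m ∈ Cb := by
    intro m h0 hm
    have hmem := hq.1 _ (q.getVert_mem_support m)
    simp only [Set.mem_union, Set.mem_insert_iff, Set.mem_singleton_iff] at hmem
    rcases hmem with h | h | h
    · exact h
    · exact absurd (by rw [qyl, h]) (hq.getVert_ne hm le_rfl).symm
    · exact absurd (by rw [qy0, h]) (hq.getVert_ne h0 (le_of_lt hm))
  set n := k + l with hn'
  have hn : 4 ≤ n := by omega
  set f : Fin n → V := fun i => if i.1 < k then p.getVert i.1 else q.getVert (i.1 - k) with hf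
  -- value classification
  have hfp : ∀ i : Fin n, i.1 < k → f i = p.getVert i.1 := fun i h => by simp [hf, h]
  have hfq : ∀ i : Fin n, k ≤ i.1 → f i = q.getVert (i.1 - k) := fun i h => by
    simp [hf, Nat.not_lt.mpr h]
  have hclass : ∀ i : Fin n, (i.1 = 0 ∧ f i = x) ∨ (0 < i.1 ∧ i.1 < k ∧ f i ∈ Ca) ∨
      (i.1 = k ∧ f i = y) ∨ (k < i.1 ∧ f i ∈ Cb) := by
    intro i
    rcases Nat.lt_or_ge i.1 k with h | h
    · rcases Nat.eq_zero_or_pos i.1 with h0 | h0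
      · exact Or.inl ⟨h0, by rw [hfp i h, h0, px0]⟩
      · exact Or.inr (Or.inl ⟨h0, h, by rw [hfp i h]; exact hpint _ h0 h⟩)
    · rcases Nat.eq_or_lt_of_le h with h0 | h0
      · exact Or.inr (Or.inr (Or.inl ⟨h0.symm, by rw [hfq i h, ← h0]; simpa using qy0⟩))
      · refine Or.inr (Or.inr (Or.inr ⟨h0, ?_⟩))
        rw [hfq i h]
        exact hqint _ (by omega) (by have := i.2; omega)
  have key : ∀ i j : Fin n, i.1 < j.1 → f i = f j → False := by
    intro i j hij hEq
    rcases Nat.lt_or_ge j.1 k with hjk | hjk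
    · rw [hfp i (by omega), hfp j hjk] at hEq
      exact hp.getVert_ne hij (by omega) hEq
    · rcases Nat.lt_or_ge i.1 k with hik | hik
      · rcases hclass i with ⟨h0, hx⟩ | ⟨h0, _, hCai⟩ | ⟨hK, _⟩ | ⟨hK, _⟩
        · rcases hclass j with ⟨h0', _⟩ | ⟨_, hjk', _⟩ | ⟨_, hy⟩ | ⟨_, hCbj⟩
          · omega
          · omega
          · exact hxy (hx ▸ hy ▸ hEq)
          · exact hxCb (hx ▸ hEq ▸ hCbj)
        · rcases hclass j with ⟨h0', _⟩ | ⟨_, hjk', _⟩ | ⟨_, hy⟩ | ⟨_, hCbj⟩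
          · omega
          · omega
          · exact hyCa (hy ▸ hEq ▸ hCai)
          · exact hdisj _ (hEq ▸ hCai) hCbj
        · omega
        · omega
      · rw [hfq i hik, hfq j hjk] at hEq
        have hj2 := j.2
        exact hq.getVert_ne (by omega) (by omega) hEq
  have hinj : Function.Injective f := by
    intro i j hEq
    by_contra hne
    rcases Nat.lt_trichotomy i.1 j.1 with h | h | h
    · exact key i j h hEq
    · exact hne (Fin.ext h)
    · exact key j i h hEq.symm
  have fwd : ∀ i j : Fin n, i.1 < j.1 → G.Adj (f i) (f j) →
      (j.1 = i.1 + 1 ∨ (i.1 = 0 ∧ j.1 = n - 1)) := by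
    intro i j hij hadj
    rcases Nat.lt_or_ge j.1 k with hjk | hjk
    · rw [hfp i (by omega), hfp j hjk] at hadj
      by_contra hcon
      exact hp.not_adj (by omega) (by omega) hadj
    · rcases Nat.lt_or_ge i.1 k with hik | hik
      · rcases hclass i with ⟨h0, hx⟩ | ⟨h0, _, hCai⟩ | ⟨hK, _⟩ | ⟨hK, _⟩
        · rcases hclass j with ⟨h0', _⟩ | ⟨_, hjk', _⟩ | ⟨hjK, hy⟩ | ⟨hjK, hCbj⟩
          · omega
          · omega
          · exact absurd (hx ▸ hy ▸ hadj) hnadj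
          · -- f i = x = q.getVert l, f j = q.getVert (j.1 - k) ∈ Cb
            right
            have hj2 := j.2
            have hadj' : G.Adj (q.getVert (j.1 - k)) (q.getVert l) := by
              rw [qyl, ← hfq j hjk]
              exact (hx ▸ hadj).symm
            by_contra hcon
            exact hq.not_adj (i := j.1 - k) (j := l) (by omega) le_rfl hadj'
        · rcases hclass j with ⟨h0', _⟩ | ⟨_, hjk', _⟩ | ⟨hjK, hy⟩ | ⟨hjK, hCbj⟩
          · omega
          · omega
          · -- f i = p.getVert i.1 ∈ Ca, f j = y = p.getVert k
            left
            have hadj' : G.Adj (p.getVert i.1) (p.getVert k) := by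
              rw [pxk, ← hfp i hik]
              exact hy ▸ hadj
            by_contra hcon
            exact hp.not_adj (i := i.1) (j := k) (by omega) le_rfl hadj'
          · exact absurd hadj (hC _ hCai _ hCbj)
        · omega
        · omega
      · rw [hfq i hik, hfq j hjk] at hadj
        have hj2 := j.2
        by_contra hcon
        exact hq.not_adj (i := i.1 - k) (j := j.1 - k) (by omega) (by omega) hadj
  have bwd : ∀ i j : Fin n, j.1 = i.1 + 1 → G.Adj (f i) (f j) := by
    intro i j hij
    rcases Nat.lt_or_ge j.1 k with hjk | hjk
    · rw [hfp i (by omega), hfp j hjk, hij]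
      exact p.adj_getVert_succ (by omega)
    · rcases Nat.eq_or_lt_of_le hjk with hjk' | hjk'
      · have hj' : f j = y := by
          rw [hfq j hjk, show j.1 - k = 0 by omega]
          exact qy0
        have h1 : G.Adj (p.getVert i.1) (p.getVert (i.1 + 1)) := p.adj_getVert_succ (by omega)
        rw [show i.1 + 1 = k by omega, pxk] at h1
        rw [hfp i (by omega), hj']
        exact h1
      · have hik : k ≤ i.1 := by omega
        rw [hfq i hik, hfq j hjk]
        have : j.1 - k = (i.1 - k) + 1 := by omega
        rw [this]
        have hj2 := j.2
        exact q.adj_getVert_succ (by omega)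
  have wrap : ∀ i j : Fin n, i.1 = 0 → j.1 = n - 1 → G.Adj (f i) (f j) := by
    intro i j hi hj
    have hfi : f i = x := by rw [hfp i (by omega), hi, px0]
    have hfj : f j = q.getVert (l - 1) := by
      rw [hfq j (by omega), hj]
      congr 1
      omega
    have := q.adj_getVert_succ (i := l - 1) (by omega)
    rw [show l - 1 + 1 = l by omega, qyl] at this
    rw [hfi, hfj]
    exact this.symm
  have hiff : ∀ i j : Fin n, G.Adj (f i) (f j) ↔ (SimpleGraph.cycleGraph n).Adj i j := by
    intro i j
    rw [SimpleGraph.cycleGraph_adj', fin_sub_val_eq_one_iff (by omega) j i,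
      fin_sub_val_eq_one_iff (by omega) i j]
    constructor
    · intro hadj
      rcases Nat.lt_trichotomy i.1 j.1 with h | h | h
      · rcases fwd i j h hadj with h' | h'
        · exact Or.inr (Or.inl h')
        · exact Or.inl (Or.inr ⟨h'.1, h'.2⟩)
      · exact (G.ne_of_adj hadj (congrArg f (Fin.ext h))).elim
      · rcases fwd j i h hadj.symm with h' | h'
        · exact Or.inl (Or.inl h')
        · exact Or.inr (Or.inr ⟨h'.1, h'.2⟩)
    · intro hcase
      rcases hcase with (h | ⟨h1, h2⟩) | (h | ⟨h1, h2⟩)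
      · exact (bwd j i h).symm
      · exact wrap i j h1 h2
      · exact bwd i j h
      · exact (wrap j i h1 h2).symm
  exact hG.no_cycle_map hn f hinj hiff


section Dirac
open Finset
variable {V : Type*} {G : SimpleGraph V}

/-- Reachability via walks with support inside a finset. -/
def SimpleGraph.ReachIn (G : SimpleGraph V) (s : Finset V) (u v : V) : Prop :=
  ∃ w : G.Walk u v, ∀ z ∈ w.support, z ∈ s

namespace SimpleGraph.ReachIn

lemma refl {s : Finset V} {u : V} (hu : u ∈ s) : G.ReachIn s u u :=
  ⟨Walk.nil, by simpa using hu⟩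

lemma symm {s : Finset V} {u v : V} (h : G.ReachIn s u v) : G.ReachIn s v u := by
  obtain ⟨w, hw⟩ := h
  exact ⟨w.reverse, by simpa [Walk.support_reverse] using hw⟩

lemma trans {s : Finset V} {u v x : V} (h : G.ReachIn s u v) (h' : G.ReachIn s v x) :
    G.ReachIn s u x := by
  obtain ⟨w, hw⟩ := h
  obtain ⟨w', hw'⟩ := h'
  refine ⟨w.append w', fun z hz => ?_⟩
  rw [Walk.mem_support_append_iff] at hz
  exact hz.elim (hw z) (hw' z)

lemma step {s : Finset V} {u v x : V} (h : G.ReachIn s u v) (hadj : G.Adj v x) (hx : x ∈ s) :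
    G.ReachIn s u x := by
  obtain ⟨w, hw⟩ := h
  refine ⟨w.concat hadj, fun z hz => ?_⟩
  rw [Walk.support_concat, List.mem_append] at hz
  rcases hz with hz | hz
  · exact hw z hz
  · simp at hz; exact hz ▸ hx

lemma mem_right {s : Finset V} {u v : V} (h : G.ReachIn s u v) : v ∈ s := by
  obtain ⟨w, hw⟩ := h
  exact hw v w.end_mem_support

lemma of_walk_support [DecidableEq V] {s : Finset V} {u v z : V} (w : G.Walk u v)
    (hw : ∀ z' ∈ w.support, z' ∈ s) (hz : z ∈ w.support) : G.ReachIn s u z := by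
  exact ⟨w.takeUntil z hz, fun z' hz' => hw z' (w.support_takeUntil_subset hz hz')⟩

end SimpleGraph.ReachIn

/-- `v` is a simplicial vertex of the subgraph of `G` induced on `T`. -/
def SimpleGraph.SimplicialIn (G : SimpleGraph V) (T : Finset V) (v : V) : Prop :=
  v ∈ T ∧ ∀ x ∈ T, ∀ y ∈ T, G.Adj v x → G.Adj v y → x ≠ y → G.Adj x y

theorem SimpleGraph.IsChordal.dichotomy [DecidableEq V] (hG : G.IsChordal) (T : Finset V)
    (hT : T.Nonempty) :
    (∀ x ∈ T, ∀ y ∈ T, x ≠ y → G.Adj x y) ∨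
      (∃ a ∈ T, ∃ b ∈ T, ¬ G.Adj a b ∧ a ≠ b ∧
        G.SimplicialIn T a ∧ G.SimplicialIn T b) := by
  classical
  induction T using Finset.strongInduction with
  | _ T ih =>
  by_cases hcomp : ∀ x ∈ T, ∀ y ∈ T, x ≠ y → G.Adj x y
  · exact Or.inl hcomp
  push_neg at hcomp
  obtain ⟨a, haT, b, hbT, hab, hnadj⟩ := hcomp
  -- the set of (a,b)-separators
  set Seps : Finset (Finset V) :=
    ((T.erase a).erase b).powerset.filter (fun S => ¬ G.ReachIn (T \ S) a b) with hSeps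
  have hS0 : ((T.erase a).erase b) ∈ Seps := by
    rw [hSeps, mem_filter]
    refine ⟨mem_powerset_self _, ?_⟩
    rintro ⟨w, hw⟩
    have hlen : 0 < w.length := by
      rcases Nat.eq_zero_or_pos w.length with h | h
      · exfalso
        have hb := w.getVert_length
        rw [h, w.getVert_zero] at hb
        exact hab hb
      · exact h
    have h1 : w.getVert 1 ∈ w.support := w.getVert_mem_support 1
    have hadj1 : G.Adj a (w.getVert 1) := by
      have := w.adj_getVert_succ (i := 0) hlen
      rwa [w.getVert_zero] at this
    have := hw _ h1
    rw [mem_sdiff, mem_erase, mem_erase] at this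
    have h1ab : w.getVert 1 = b ∨ w.getVert 1 = a := by tauto
    rcases h1ab with h | h
    · exact hnadj (by rwa [h] at hadj1)
    · exact G.loopless.irrefl a (by rwa [h] at hadj1)
  obtain ⟨S, hSmem, hSmin⟩ := Finset.exists_min_image Seps card ⟨_, hS0⟩
  rw [hSeps, mem_filter, mem_powerset] at hSmem
  obtain ⟨hSsub, hSsep⟩ := hSmem
  have haS : a ∉ S := fun h => (mem_erase.mp (mem_erase.mp (hSsub h)).2).1 rfl
  have hbS : b ∉ S := fun h => (mem_erase.mp (hSsub h)).1 rfl
  have haTS : a ∈ T \ S := mem_sdiff.mpr ⟨haT, haS⟩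
  have hbTS : b ∈ T \ S := mem_sdiff.mpr ⟨hbT, hbS⟩
  have hST : S ⊆ T := fun z hz => (mem_erase.mp (mem_erase.mp (hSsub hz)).2).2
  set comp : V → Finset V := fun c => (T \ S).filter (G.ReachIn (T \ S) c) with hcomp'
  have hmemcomp : ∀ {c z : V}, z ∈ comp c ↔ z ∈ T \ S ∧ G.ReachIn (T \ S) c z := by
    intro c z; rw [hcomp', mem_filter]
  have hself : ∀ {c : V}, c ∈ T \ S → c ∈ comp c := fun hc =>
    hmemcomp.mpr ⟨hc, SimpleGraph.ReachIn.refl hc⟩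
  have hstep : ∀ {c u x : V}, u ∈ comp c → G.Adj u x → x ∈ T \ S → x ∈ comp c := by
    intro c u x hu hadj hx
    exact hmemcomp.mpr ⟨hx, (hmemcomp.mp hu).2.step hadj hx⟩
  have hdisjoint : ∀ {z : V}, z ∈ comp a → z ∈ comp b → False := by
    intro z hza hzb
    exact hSsep (((hmemcomp.mp hza).2).trans ((hmemcomp.mp hzb).2).symm)
  have hnreach_b : ¬ G.ReachIn (T \ S) a b := hSsep
  have hnreach_a : ¬ G.ReachIn (T \ S) b a := fun h => hSsep h.symm
  have hbCa : b ∉ comp a := fun h => hSsep (hmemcomp.mp h).2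
  have haCb : a ∉ comp b := fun h => hnreach_a (hmemcomp.mp h).2
  -- every element of S has a neighbor in each component
  have hnbr : ∀ s ∈ S, (∃ z ∈ comp a, G.Adj s z) ∧ (∃ z ∈ comp b, G.Adj s z) := by
    intro s hs
    have hS' : S.erase s ∉ Seps := by
      intro hmem
      have := hSmin _ hmem
      have := Finset.card_erase_of_mem hs
      have hpos : 0 < S.card := Finset.card_pos.mpr ⟨s, hs⟩
      omega
    have hS'sub : S.erase s ⊆ (T.erase a).erase b := (Finset.erase_subset _ _).trans hSsub
    have hreach : G.ReachIn (T \ S.erase s) a b := by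
      by_contra h
      exact hS' (by rw [hSeps, mem_filter, mem_powerset]; exact ⟨hS'sub, h⟩)
    obtain ⟨w, hw⟩ := hreach
    have hsup : s ∈ w.support := by
      by_contra h
      refine hSsep ⟨w, fun z hz => ?_⟩
      have hz' := hw z hz
      rw [mem_sdiff] at hz' ⊢
      refine ⟨hz'.1, fun hzS => ?_⟩
      exact hz'.2 (Finset.mem_erase.mpr ⟨fun hzs => h (hzs ▸ hz), hzS⟩)
    have half : ∀ (u0 u1 : V) (w' : G.Walk u0 u1),
        (∀ z ∈ w'.support, z ∈ T \ S.erase s) → s ∈ w'.support → u0 ∉ S →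
        ∃ z, G.Adj s z ∧ G.ReachIn (T \ S) u0 z ∧ z ∈ T \ S := by
      intro u0 u1 w' hw' hsup' hu0
      set w1 := w'.takeUntil s hsup' with hw1
      have hcount : w1.support.count s = 1 := w'.count_support_takeUntil_eq_one hsup'
      have hne0 : u0 ≠ s := fun h => hu0 (h ▸ hs)
      have hnnil : ¬ w1.reverse.Nil := SimpleGraph.Walk.not_nil_of_ne (Ne.symm hne0)
      obtain ⟨z, hadj, q, hdecomp⟩ := SimpleGraph.Walk.not_nil_iff.mp hnnil
      have hqsup : ∀ z' ∈ q.support, z' ∈ T \ S := by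
        intro z' hz'
        have h1 : z' ∈ w1.reverse.support := by
          rw [hdecomp, SimpleGraph.Walk.support_cons]; exact List.mem_cons_of_mem _ hz'
        rw [SimpleGraph.Walk.support_reverse, List.mem_reverse] at h1
        have h2 := hw' z' (w'.support_takeUntil_subset hsup' h1)
        have hz's : z' ≠ s := by
          intro hzz
          have : w1.reverse.support.count s = 1 := by
            rw [SimpleGraph.Walk.support_reverse, List.count_reverse]; exact hcount
          rw [hdecomp, SimpleGraph.Walk.support_cons] at this
          have : q.support.count s = 0 := by
            simp only [List.count_cons_self] at this
            omega
          exact (List.count_eq_zero.mp this) (hzz ▸ hz')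
        rw [mem_sdiff] at h2 ⊢
        exact ⟨h2.1, fun hzS => h2.2 (Finset.mem_erase.mpr ⟨hz's, hzS⟩)⟩
      refine ⟨z, hadj, SimpleGraph.ReachIn.symm ⟨q, hqsup⟩, ?_⟩
      exact hqsup z q.start_mem_support
    constructor
    · obtain ⟨z, h1, h2, h3⟩ := half a b w hw hsup haS
      exact ⟨z, hmemcomp.mpr ⟨h3, h2⟩, h1⟩
    · obtain ⟨z, h1, h2, h3⟩ := half b a w.reverse
        (by intro z hz; rw [SimpleGraph.Walk.support_reverse, List.mem_reverse] at hz; exact hw z hz)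
        (by rw [SimpleGraph.Walk.support_reverse, List.mem_reverse]; exact hsup) hbS
      exact ⟨z, hmemcomp.mpr ⟨h3, h2⟩, h1⟩
  -- S is a clique
  have hSclique : ∀ x ∈ S, ∀ y ∈ S, x ≠ y → G.Adj x y := by
    intro x hx y hy hxy
    by_contra hnadjxy
    obtain ⟨⟨zxa, hzxa, hxza⟩, ⟨zxb, hzxb, hxzb⟩⟩ := hnbr x hx
    obtain ⟨⟨zya, hzya, hyza⟩, ⟨zyb, hzyb, hyzb⟩⟩ := hnbr y hy
    have hxS : ∀ {u : V}, u ∈ comp a ∨ u ∈ comp b → u ∉ S := by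
      rintro u (hu | hu) huS <;>
        exact (mem_sdiff.mp (hmemcomp.mp hu).1).2 huS
    -- walk from x to y through comp a
    have hwalk : ∀ (c : V) (zx zy : V), zx ∈ comp c → zy ∈ comp c →
        G.Adj x zx → G.Adj y zy →
        ∃ w : G.Walk x y, ∀ z ∈ w.support, z ∈ ((comp c : Set V) ∪ {x, y}) := by
      intro c zx zy hzx hzy hxz hyz
      obtain ⟨v, hv⟩ := ((hmemcomp.mp hzx).2.symm).trans (hmemcomp.mp hzy).2
      have hvsup : ∀ z ∈ v.support, z ∈ comp c := by
        intro z hz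
        have : G.ReachIn (T \ S) zx z := SimpleGraph.ReachIn.of_walk_support v hv hz
        exact hmemcomp.mpr ⟨this.mem_right, (hmemcomp.mp hzx).2.trans this⟩
      refine ⟨SimpleGraph.Walk.cons hxz (v.concat hyz.symm), ?_⟩
      intro z hz
      rw [SimpleGraph.Walk.support_cons, List.mem_cons] at hz
      rcases hz with rfl | hz
      · exact Or.inr (Or.inl rfl)
      · rw [SimpleGraph.Walk.support_concat, List.mem_append] at hz
        rcases hz with hz | hz
        · exact Or.inl (hvsup z hz)
        · simp at hz
          exact Or.inr (Or.inr hz)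
    obtain ⟨wa, hwa⟩ := hwalk a zxa zya hzxa hzya hxza hyza
    obtain ⟨p, hp⟩ := SimpleGraph.Walk.exists_isMinWalk ⟨wa, hwa⟩
    have hwalkb : ∃ w : G.Walk y x, ∀ z ∈ w.support, z ∈ ((comp b : Set V) ∪ {x, y}) := by
      obtain ⟨v, hv⟩ := ((hmemcomp.mp hzyb).2.symm).trans (hmemcomp.mp hzxb).2
      have hvsup : ∀ z ∈ v.support, z ∈ comp b := by
        intro z hz
        have : G.ReachIn (T \ S) zyb z := SimpleGraph.ReachIn.of_walk_support v hv hz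
        exact hmemcomp.mpr ⟨this.mem_right, (hmemcomp.mp hzyb).2.trans this⟩
      refine ⟨SimpleGraph.Walk.cons hyzb (v.concat hxzb.symm), ?_⟩
      intro z hz
      rw [SimpleGraph.Walk.support_cons, List.mem_cons] at hz
      rcases hz with rfl | hz
      · exact Or.inr (Or.inr rfl)
      · rw [SimpleGraph.Walk.support_concat, List.mem_append] at hz
        rcases hz with hz | hz
        · exact Or.inl (hvsup z hz)
        · simp at hz
          exact Or.inr (Or.inl hz)
    obtain ⟨q, hq⟩ := SimpleGraph.Walk.exists_isMinWalk hwalkb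
    refine hG.no_two_paths hxy hnadjxy (Ca := (comp a : Set V)) (Cb := (comp b : Set V))
      (fun z hza hzb => hdisjoint hza hzb)
      (fun h => hxS (Or.inl h) hx) (fun h => hxS (Or.inr h) hx)
      (fun h => hxS (Or.inl h) hy) (fun h => hxS (Or.inr h) hy)
      ?_ p hp q hq
    intro u hu v' hv' hadj
    have hv'TS : v' ∈ T \ S := (hmemcomp.mp hv').1
    exact hdisjoint (hstep hu hadj hv'TS) hv'
  -- from each side, get a simplicial vertex of T in the component
  have side : ∀ c₀ e : V, c₀ ∈ T \ S → e ∈ T \ S → ¬ G.ReachIn (T \ S) c₀ e →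
      ∃ c ∈ comp c₀, G.SimplicialIn T c := by
    intro c₀ e hc₀ he hne
    set T' : Finset V := comp c₀ ∪ S with hT'
    have hT'sub : T' ⊆ T := by
      intro z hz
      rw [hT', Finset.mem_union] at hz
      rcases hz with hz | hz
      · exact (mem_sdiff.mp (hmemcomp.mp hz).1).1
      · exact hST hz
    have he' : e ∉ T' := by
      rw [hT', Finset.mem_union]
      rintro (h | h)
      · exact hne (hmemcomp.mp h).2
      · exact (mem_sdiff.mp he).2 h
    have hT'ssub : T' ⊂ T :=
      Finset.ssubset_iff_of_subset hT'sub |>.mpr ⟨e, (mem_sdiff.mp he).1, he'⟩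
    have hc₀c : c₀ ∈ comp c₀ := hself hc₀
    have hNbrT' : ∀ v ∈ comp c₀, ∀ u ∈ T, G.Adj v u → u ∈ T' := by
      intro v hv u hu hadj
      rw [hT', Finset.mem_union]
      by_cases huS : u ∈ S
      · exact Or.inr huS
      · exact Or.inl (hstep hv hadj (mem_sdiff.mpr ⟨hu, huS⟩))
    have hlift : ∀ c ∈ comp c₀, G.SimplicialIn T' c → G.SimplicialIn T c := by
      intro c hc hsimp
      refine ⟨hT'sub hsimp.1, fun x hx y hy hax hay hxy => ?_⟩
      exact hsimp.2 x (hNbrT' c hc x hx hax) y (hNbrT' c hc y hy hay) hax hay hxy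
    rcases ih T' hT'ssub ⟨c₀, Finset.mem_union_left _ hc₀c⟩ with hfull |
      ⟨c, hcT', d, hdT', hncd, hcd, hcs, hds⟩
    · refine ⟨c₀, hc₀c, hlift c₀ hc₀c ⟨Finset.mem_union_left _ hc₀c, ?_⟩⟩
      intro x hx y hy hax hay hxy
      exact hfull x hx y hy hxy
    · have hcase : c ∈ comp c₀ ∨ d ∈ comp c₀ := by
        by_contra h
        push_neg at h
        have hcS : c ∈ S := by
          rcases Finset.mem_union.mp hcT' with h' | h'
          · exact absurd h' h.1
          · exact h'
        have hdS : d ∈ S := by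
          rcases Finset.mem_union.mp hdT' with h' | h'
          · exact absurd h' h.2
          · exact h'
        exact hncd (hSclique c hcS d hdS hcd)
      rcases hcase with h | h
      · exact ⟨c, h, hlift c h hcs⟩
      · exact ⟨d, h, hlift d h hds⟩
  obtain ⟨c, hcCa, hcsimp⟩ := side a b haTS hbTS hnreach_b
  obtain ⟨d, hdCb, hdsimp⟩ := side b a hbTS haTS hnreach_a
  have hcd : ¬ G.Adj c d := by
    intro hadj
    have hd' : d ∈ T \ S := (hmemcomp.mp hdCb).1
    exact hdisjoint (hstep hcCa hadj hd') hdCb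
  have hcdne : c ≠ d := fun h => hdisjoint (h ▸ hcCa) hdCb
  exact Or.inr ⟨c, hcsimp.1, d, hdsimp.1, hcd, hcdne, hcsimp, hdsimp⟩

end Dirac


section Comb
open Finset
open scoped Classical
variable {V : Type*} {G : SimpleGraph V}

theorem SimpleGraph.IsChordal.exists_simplicialIn [DecidableEq V] (hG : G.IsChordal)
    (T : Finset V) (hT : T.Nonempty) : ∃ v ∈ T, G.SimplicialIn T v := by
  rcases hG.dichotomy T hT with h | ⟨a, haT, _, _, _, _, ha, _⟩
  · obtain ⟨v, hv⟩ := hT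
    exact ⟨v, hv, ⟨hv, fun x hx y hy _ _ hxy => h x hx y hy hxy⟩⟩
  · exact ⟨a, haT, ha⟩

lemma alt_binom_sum (n m : ℕ) :
    ∑ j ∈ Finset.range (m + 1), (-1 : ℝ) ^ j * ((n + 1).choose j) = (-1) ^ m * n.choose m := by
  induction m with
  | zero => simp
  | succ m ih =>
    rw [Finset.sum_range_succ, ih, Nat.choose_succ_succ n m]
    push_cast
    ring

lemma alt_binom_sum_nonneg (n m : ℕ) (hm : Even m) :
    0 ≤ ∑ j ∈ Finset.range (m + 1), (-1 : ℝ) ^ j * (n.choose j) := by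
  cases n with
  | zero =>
    have : ∀ j ∈ Finset.range (m + 1), (-1 : ℝ) ^ j * ((0:ℕ).choose j) =
        if j = 0 then 1 else 0 := by
      intro j hj
      cases j with
      | zero => simp
      | succ j => simp [Nat.choose_eq_zero_of_lt (Nat.succ_pos j)]
    rw [Finset.sum_congr rfl this, Finset.sum_ite_eq' (Finset.range (m+1)) 0 (fun _ => (1:ℝ))]
    simp
  | succ n =>
    rw [alt_binom_sum, hm.neg_one_pow]
    positivity

lemma alt_card_powerset_sum_nonneg [DecidableEq V] (N : Finset V) (m : ℕ) (hm : Even m) :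
    0 ≤ ∑ J ∈ N.powerset.filter (fun J => J.card ≤ m), (-1 : ℝ) ^ J.card := by
  classical
  have hsplit : N.powerset.filter (fun J => J.card ≤ m) =
      (Finset.range (m + 1)).biUnion (fun j => N.powersetCard j) := by
    ext J
    simp only [Finset.mem_filter, Finset.mem_powerset, Finset.mem_biUnion, Finset.mem_range,
      Finset.mem_powersetCard]
    constructor
    · rintro ⟨h1, h2⟩; exact ⟨J.card, by omega, h1, rfl⟩
    · rintro ⟨j, hj, h1, rfl⟩; exact ⟨h1, by omega⟩
  rw [hsplit, Finset.sum_biUnion]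
  · have : ∀ j ∈ Finset.range (m + 1),
        ∑ J ∈ N.powersetCard j, (-1 : ℝ) ^ J.card = (-1) ^ j * (N.card.choose j) := by
      intro j hj
      rw [Finset.sum_congr rfl (fun J hJ => by
        rw [(Finset.mem_powersetCard.mp hJ).2]), Finset.sum_const, Finset.card_powersetCard]
      simp [mul_comm]
    rw [Finset.sum_congr rfl this]
    exact alt_binom_sum_nonneg N.card m hm
  · intro i hi j hj hij
    simp only [Function.onFun]
    rw [Finset.disjoint_left]
    intro J hJ hJ'
    exact hij ((Finset.mem_powersetCard.mp hJ).2.symm.trans (Finset.mem_powersetCard.mp hJ').2)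

/-- Key combinatorial inequality: truncated Euler characteristic of clique complexes
of chordal graphs. -/
theorem SimpleGraph.IsChordal.one_le_truncated_sum [DecidableEq V] (hG : G.IsChordal)
    (r : ℕ) (hr : 0 < r) (T : Finset V) (hT : T.Nonempty) :
    (1 : ℝ) ≤ ∑ I ∈ T.powerset.filter
        (fun I : Finset V => I.Nonempty ∧ G.IsClique (I : Set V) ∧ I.card ≤ 2 * r - 1),
      (-1 : ℝ) ^ (I.card - 1) := by
  classical
  induction T using Finset.strongInduction with
  | _ T ih =>
  obtain ⟨v, hvT, hvsimp⟩ := hG.exists_simplicialIn T hT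
  set P : Finset V → Prop := fun I => I.Nonempty ∧ G.IsClique (I : Set V) ∧ I.card ≤ 2 * r - 1
    with hP
  set N : Finset V := (T.erase v).filter (G.Adj v) with hN
  have hNsub : N ⊆ T.erase v := Finset.filter_subset _ _
  have hvN : v ∉ N := fun h => (Finset.mem_erase.mp (hNsub h)).1 rfl
  -- split the sum by membership of v
  rw [← Finset.sum_filter_add_sum_filter_not (T.powerset.filter P) (fun I => v ∈ I)]
  have hA1 : (T.powerset.filter P).filter (fun I => ¬ v ∈ I) =
      (T.erase v).powerset.filter P := by
    ext I
    simp only [Finset.mem_filter, Finset.mem_powerset, Finset.subset_erase]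
    tauto
  have hA2 : ∑ I ∈ (T.powerset.filter P).filter (fun I => v ∈ I), (-1 : ℝ) ^ (I.card - 1) =
      ∑ J ∈ N.powerset.filter (fun J => J.card ≤ 2 * r - 2), (-1 : ℝ) ^ J.card := by
    refine Finset.sum_bij' (fun I _ => I.erase v) (fun J _ => insert v J) ?_ ?_ ?_ ?_ ?_
    · -- membership forward
      intro I hI
      simp only [Finset.mem_filter, Finset.mem_powerset] at hI ⊢
      rw [hP] at hI
      obtain ⟨⟨hIT, hne, hclique, hcard⟩, hvI⟩ := hI
      have hcard1 : 1 ≤ I.card := Finset.card_pos.mpr hne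
      constructor
      · intro z hz
        have hzI := Finset.mem_of_mem_erase hz
        have hzv : z ≠ v := (Finset.mem_erase.mp hz).1
        rw [hN, Finset.mem_filter, Finset.mem_erase]
        exact ⟨⟨hzv, hIT hzI⟩, hclique (by simpa using hvI) (by simpa using hzI) (Ne.symm hzv)⟩
      · rw [Finset.card_erase_of_mem hvI]
        omega
    · -- membership backward
      intro J hJ
      simp only [Finset.mem_filter, Finset.mem_powerset] at hJ ⊢
      obtain ⟨hJN, hcard⟩ := hJ
      have hvJ : v ∉ J := fun h => hvN (hJN h)
      rw [hP]
      refine ⟨⟨?_, ?_, ?_, ?_⟩, Finset.mem_insert_self _ _⟩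
      · intro z hz
        rcases Finset.mem_insert.mp hz with rfl | hz
        · exact hvT
        · exact Finset.mem_of_mem_erase (hNsub (hJN hz))
      · exact ⟨v, Finset.mem_insert_self _ _⟩
      · intro x hx y hy hxy
        simp only [Finset.coe_insert, Set.mem_insert_iff, Finset.mem_coe] at hx hy
        have hadj : ∀ z, z ∈ J → G.Adj v z := by
          intro z hz
          exact (Finset.mem_filter.mp (hJN hz)).2
        rcases hx with rfl | hx
        · rcases hy with rfl | hy
          · exact absurd rfl hxy
          · exact hadj y hy
        · rcases hy with rfl | hy
          · exact (hadj x hx).symm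
          · exact hvsimp.2 x (Finset.mem_of_mem_erase (hNsub (hJN hx)))
              y (Finset.mem_of_mem_erase (hNsub (hJN hy)))
              (hadj x hx) (hadj y hy) hxy
      · rw [Finset.card_insert_of_notMem hvJ]
        omega
    · -- left inverse
      intro I hI
      simp only [Finset.mem_filter] at hI
      exact Finset.insert_erase hI.2
    · -- right inverse
      intro J hJ
      simp only [Finset.mem_filter, Finset.mem_powerset] at hJ
      exact Finset.erase_insert (fun h => hvN (hJ.1 h))
    · -- values
      intro I hI
      simp only [Finset.mem_filter] at hI
      rw [Finset.card_erase_of_mem hI.2]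
  rw [hA1, hA2]
  have hnn : 0 ≤ ∑ J ∈ N.powerset.filter (fun J => J.card ≤ 2 * r - 2), (-1 : ℝ) ^ J.card :=
    alt_card_powerset_sum_nonneg N (2 * r - 2) (by
      have : 2 * r - 2 = 2 * (r - 1) := by omega
      exact this ▸ even_two_mul (r - 1))
  by_cases hT' : (T.erase v).Nonempty
  · have h1 := ih (T.erase v) (Finset.erase_ssubset hvT) hT'
    linarith
  · -- T = {v}
    have hN0 : N = ∅ := by
      rw [← Finset.subset_empty]
      intro z hz
      exact absurd ⟨z, hNsub hz⟩ hT'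
    have hT'0 : T.erase v = ∅ := Finset.not_nonempty_iff_eq_empty.mp hT'
    rw [hN0, hT'0]
    have h2 : ∑ J ∈ (∅ : Finset V).powerset.filter (fun J => J.card ≤ 2 * r - 2),
        (-1 : ℝ) ^ J.card = 1 := by
      rw [Finset.powerset_empty]
      rw [Finset.filter_singleton]
      simp
    have h1 : ∑ I ∈ (∅ : Finset V).powerset.filter P, (-1 : ℝ) ^ (I.card - 1) = 0 := by
      rw [Finset.powerset_empty, Finset.filter_singleton]
      have : ¬ P ∅ := fun h => by simpa using h.1
      rw [if_neg this]
      simp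
    rw [h1, h2]
    norm_num

end Comb

theorem chordal_graph_sieve_upper_truncated {Ω V : Type*} [MeasurableSpace Ω] [Fintype V]
    (μ : Measure Ω) [IsProbabilityMeasure μ] (G : SimpleGraph V) (hG : G.IsChordal)
    (A : V → Set Ω) (hA : ∀ v, MeasurableSet (A v)) (r : ℕ) (hr : 0 < r) :
    (μ (⋃ v, A v)).toReal ≤
      ∑ I ∈ G.cliqueComplex.filter (fun I => I.card ≤ 2 * r - 1),
        (-1 : ℝ) ^ (I.card - 1) * (μ (⋂ i ∈ I, A i)).toReal := by
  classical
  set B : Finset V → Set Ω := fun T => {ω | ∀ v : V, ω ∈ A v ↔ v ∈ T} with hB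
  set m : Finset V → ℝ := fun T => (μ (B T)).toReal with hm
  have hBmeas : ∀ T, MeasurableSet (B T) := by
    intro T
    have hEq : B T = ⋂ v : V, (if v ∈ T then A v else (A v)ᶜ) := by
      ext ω
      simp only [hB, Set.mem_iInter, Set.mem_setOf_eq]
      constructor
      · intro h v
        by_cases hv : v ∈ T
        · simp only [hv, if_true]; exact (h v).mpr hv
        · simp only [hv, if_false, Set.mem_compl_iff]
          exact fun hω => hv ((h v).mp hω)
      · intro h v
        have := h v
        by_cases hv : v ∈ T
        · simp only [hv, if_true] at this; exact ⟨fun _ => hv, fun _ => this⟩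
        · simp only [hv, if_false, Set.mem_compl_iff] at this
          exact ⟨fun hω => absurd hω this, fun h' => absurd h' hv⟩
    rw [hEq]
    exact MeasurableSet.iInter (fun v => by
      by_cases hv : v ∈ T
      · simp only [hv, if_true]; exact hA v
      · simp only [hv, if_false]; exact (hA v).compl)
  have hdisj : ∀ T T' : Finset V, T ≠ T' → Disjoint (B T) (B T') := by
    intro T T' hne
    rw [Set.disjoint_left]
    intro ω hω hω'
    exact hne (Finset.ext fun v => ((hω v).symm.trans (hω' v)))
  have hsum : ∀ s : Finset (Finset V),
      (μ (⋃ T ∈ s, B T)).toReal = ∑ T ∈ s, m T := by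
    intro s
    rw [measure_biUnion_finset ?_ (fun T _ => hBmeas T)]
    · exact ENNReal.toReal_sum (fun T _ => measure_ne_top μ _)
    · intro T hT T' hT' hne
      exact hdisj T T' hne
  have hmem : ∀ ω : Ω, ω ∈ B (Finset.univ.filter (fun u => ω ∈ A u)) := by
    intro ω v
    simp
  have hunion : (⋃ v, A v) = ⋃ T ∈ Finset.univ.filter (fun T : Finset V => T.Nonempty), B T := by
    ext ω
    simp only [Set.mem_iUnion, Finset.mem_filter, Finset.mem_univ, true_and]
    constructor
    · rintro ⟨v, hv⟩
      exact ⟨Finset.univ.filter (fun u => ω ∈ A u), ⟨v, by simp [hv]⟩, hmem ω⟩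
    · rintro ⟨T, ⟨v, hvT⟩, hω⟩
      exact ⟨v, (hω v).mpr hvT⟩
  have hinter : ∀ I : Finset V,
      (⋂ i ∈ I, A i) = ⋃ T ∈ Finset.univ.filter (fun T : Finset V => I ⊆ T), B T := by
    intro I
    ext ω
    simp only [Set.mem_iInter, Set.mem_iUnion, Finset.mem_filter, Finset.mem_univ, true_and]
    constructor
    · intro h
      refine ⟨Finset.univ.filter (fun u => ω ∈ A u), ?_, hmem ω⟩
      intro i hi
      simp [h i hi]
    · rintro ⟨T, hIT, hω⟩ i hi
      exact (hω i).mpr (hIT hi)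
  rw [hunion, hsum]
  have hRHS : ∀ I ∈ G.cliqueComplex.filter (fun I => I.card ≤ 2 * r - 1),
      (-1 : ℝ) ^ (I.card - 1) * (μ (⋂ i ∈ I, A i)).toReal =
      ∑ T ∈ Finset.univ.filter (fun T : Finset V => I ⊆ T), (-1 : ℝ) ^ (I.card - 1) * m T := by
    intro I _
    rw [hinter I, hsum, Finset.mul_sum]
  rw [Finset.sum_congr rfl hRHS]
  -- swap the order of summation
  set 𝒜 : Finset (Finset V) := G.cliqueComplex.filter (fun I => I.card ≤ 2 * r - 1) with h𝒜
  have hswap : ∑ I ∈ 𝒜, ∑ T ∈ Finset.univ.filter (fun T : Finset V => I ⊆ T),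
        (-1 : ℝ) ^ (I.card - 1) * m T
      = ∑ T : Finset V, (∑ I ∈ 𝒜.filter (fun I => I ⊆ T), (-1 : ℝ) ^ (I.card - 1)) * m T := by
    rw [Finset.sum_comm' (s := 𝒜) (t := fun I => Finset.univ.filter (fun T : Finset V => I ⊆ T))
      (t' := Finset.univ) (s' := fun T => 𝒜.filter (fun I => I ⊆ T))]
    · refine Finset.sum_congr rfl fun T _ => ?_
      rw [Finset.sum_mul]
    · intro I T
      simp only [Finset.mem_filter, Finset.mem_univ, true_and]
      tauto
  rw [hswap]
  -- now compare coefficients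
  have hcoef : ∀ T : Finset V, T.Nonempty →
      (1 : ℝ) ≤ ∑ I ∈ 𝒜.filter (fun I => I ⊆ T), (-1 : ℝ) ^ (I.card - 1) := by
    intro T hT
    have hseteq : 𝒜.filter (fun I => I ⊆ T) = T.powerset.filter
        (fun I : Finset V => I.Nonempty ∧ G.IsClique (I : Set V) ∧ I.card ≤ 2 * r - 1) := by
      ext I
      simp only [h𝒜, SimpleGraph.cliqueComplex, Finset.mem_filter, Finset.mem_powerset]
      constructor
      · rintro ⟨⟨⟨_, h1, h2⟩, h3⟩, h4⟩
        exact ⟨h4, h1, h2, h3⟩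
      · rintro ⟨h4, h1, h2, h3⟩
        exact ⟨⟨⟨Finset.subset_univ I, h1, h2⟩, h3⟩, h4⟩
    rw [hseteq]
    exact hG.one_le_truncated_sum r hr T hT
  have hmnonneg : ∀ T : Finset V, 0 ≤ m T := fun T => ENNReal.toReal_nonneg
  calc ∑ T ∈ Finset.univ.filter (fun T : Finset V => T.Nonempty), m T
      ≤ ∑ T ∈ Finset.univ.filter (fun T : Finset V => T.Nonempty),
          (∑ I ∈ 𝒜.filter (fun I => I ⊆ T), (-1 : ℝ) ^ (I.card - 1)) * m T := by
        refine Finset.sum_le_sum fun T hT => ?_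
        have h1 := hcoef T (Finset.mem_filter.mp hT).2
        nlinarith [hmnonneg T]
    _ ≤ ∑ T : Finset V, (∑ I ∈ 𝒜.filter (fun I => I ⊆ T), (-1 : ℝ) ^ (I.card - 1)) * m T := by
        refine Finset.sum_le_sum_of_subset_of_nonneg (Finset.filter_subset _ _) ?_
        intro T _ hT
        have hTe : T = ∅ := by
          rw [Finset.mem_filter] at hT
          push_neg at hT
          exact hT (Finset.mem_univ T)
        have : 𝒜.filter (fun I => I ⊆ T) = ∅ := by
          rw [Finset.eq_empty_iff_forall_notMem]
          intro I hI
          simp only [Finset.mem_filter, h𝒜, SimpleGraph.cliqueComplex] at hI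
          obtain ⟨⟨⟨_, hne, _⟩, _⟩, hsub⟩ := hI
          rw [hTe, Finset.subset_empty] at hsub
          exact Finset.not_nonempty_empty (hsub ▸ hne)
        rw [this, Finset.sum_empty, zero_mul]
end

section
/- Let {A_v}_{v∈V} be a non-empty finite collection of events in a probability space, where the index set V is the vertex set of a chordal graph G. Then Pr(⋃_{v∈V} A_v) ≥ (1/α(G)) · Σ_{I∈𝒞(G)} (−1)^{|I|−1} · Pr(⋂_{i∈I} A_i), where α(G) is the independence number of G and the sum runs over all elements I of the clique complex 𝒞(G). -/
open MeasureTheory Finset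
open scoped Classical

section Walks

variable {V : Type*} (G : SimpleGraph V)

/-- A walk from `x` to `y` of length `n` staying inside `T`. -/
def GW (T : Finset V) (x y : V) (n : ℕ) (f : ℕ → V) : Prop :=
  f 0 = x ∧ f n = y ∧ (∀ i ≤ n, f i ∈ T) ∧ ∀ i < n, G.Adj (f i) (f (i+1))

/-- Reachability inside a finset. -/
def Reach (T : Finset V) (x y : V) : Prop := ∃ n f, GW G T x y n f

/-- A path from `x` to `y` whose internal vertices lie in `T`. -/
def IP (T : Finset V) (x y : V) (n : ℕ) (f : ℕ → V) : Prop :=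
  f 0 = x ∧ f n = y ∧ (∀ i, 0 < i → i < n → f i ∈ T) ∧ ∀ i < n, G.Adj (f i) (f (i+1))

variable {G}

lemma Reach.refl' {T : Finset V} {x : V} (hx : x ∈ T) : Reach G T x x :=
  ⟨0, fun _ => x, rfl, rfl, fun _ _ => hx, fun i h => absurd h (Nat.not_lt_zero i)⟩

lemma Reach.mem_right {T : Finset V} {x y : V} (h : Reach G T x y) : y ∈ T := by
  obtain ⟨n, f, h0, hn, hm, _⟩ := h
  exact hn ▸ hm n le_rfl

lemma Reach.mem_left {T : Finset V} {x y : V} (h : Reach G T x y) : x ∈ T := by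
  obtain ⟨n, f, h0, hn, hm, _⟩ := h
  exact h0 ▸ hm 0 (Nat.zero_le n)

lemma Reach.symm' {T : Finset V} {x y : V} (h : Reach G T x y) : Reach G T y x := by
  obtain ⟨n, f, h0, hn, hm, ha⟩ := h
  refine ⟨n, fun i => f (n - i), by simpa, by simpa, fun i _ => hm _ (Nat.sub_le _ _),
    fun i hi => ?_⟩
  have h1 := ha (n - i - 1) (by omega)
  have e1 : n - i - 1 + 1 = n - i := by omega
  have e2 : n - (i+1) = n - i - 1 := by omega
  rw [e1] at h1
  dsimp only
  rw [e2]
  exact h1.symm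

lemma Reach.trans' {T : Finset V} {x y z : V} (h1 : Reach G T x y) (h2 : Reach G T y z) :
    Reach G T x z := by
  obtain ⟨n, f, h0, hn, hm, ha⟩ := h1
  obtain ⟨m, g, g0, gm, gmem, ga⟩ := h2
  refine ⟨n + m, fun i => if i ≤ n then f i else g (i - n), by simp [h0], ?_, ?_, ?_⟩
  · dsimp only
    by_cases hm0 : m = 0
    · subst hm0; simp only [Nat.add_zero, le_refl, if_pos]
      rw [hn, ← g0, ← gm]
    · have : ¬ (n + m ≤ n) := by omega
      rw [if_neg this]; simpa using gm
  · intro i hi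
    dsimp only
    by_cases hle : i ≤ n
    · rw [if_pos hle]; exact hm i hle
    · rw [if_neg hle]; exact gmem (i - n) (by omega)
  · intro i hi
    dsimp only
    by_cases hle : i + 1 ≤ n
    · rw [if_pos (by omega : i ≤ n), if_pos hle]; exact ha i (by omega)
    · by_cases he : i ≤ n
      · have hin : i = n := by omega
        subst hin
        rw [if_pos le_rfl, if_neg hle, hn, ← g0]
        have : i + 1 - i = 1 := by omega
        rw [this]
        exact ga 0 (by omega)
      · rw [if_neg he, if_neg hle]
        have e : i + 1 - n = (i - n) + 1 := by omega
        rw [e]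
        exact ga (i - n) (by omega)

/-- Extend reachability by one edge. -/
lemma Reach.snoc {T : Finset V} {x y z : V} (h : Reach G T x y) (hz : z ∈ T)
    (ha : G.Adj y z) : Reach G T x z := by
  refine h.trans' ⟨1, fun i => if i = 0 then y else z, by simp, by simp, ?_, ?_⟩
  · intro i hi
    dsimp only
    by_cases h0 : i = 0
    · simpa [h0] using h.mem_right
    · simpa [h0] using hz
  · intro i hi
    have : i = 0 := by omega
    simp [this, ha]

/-- All vertices of a walk starting at `x` are reachable from `x`. -/
lemma GW.reach_of_mem {T : Finset V} {x y : V} {n : ℕ} {f : ℕ → V}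
    (h : GW G T x y n f) {i : ℕ} (hi : i ≤ n) : Reach G T x (f i) :=
  ⟨i, f, h.1, rfl, fun j hj => h.2.2.1 j (le_trans hj hi), fun j hj => h.2.2.2 j (by omega)⟩

/-- Splicing a chord into an internal path. -/
lemma IP.splice {T : Finset V} {x y : V} {n : ℕ} {f : ℕ → V} (h : IP G T x y n f)
    {i j : ℕ} (hij : i < j) (hj : j ≤ n) (e : G.Adj (f i) (f j)) :
    ∃ g, IP G T x y (n - j + i + 1) g := by
  obtain ⟨h0, hn, hmem, hadj⟩ := h
  refine ⟨fun k => if k ≤ i then f k else f (k + j - (i+1)), by simp [h0], ?_, ?_, ?_⟩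
  · have hni : ¬ (n - j + i + 1 ≤ i) := by omega
    dsimp only
    rw [if_neg hni]
    have : n - j + i + 1 + j - (i+1) = n := by omega
    rw [this, hn]
  · intro k hk0 hkn
    dsimp only
    by_cases hle : k ≤ i
    · rw [if_pos hle]; exact hmem k hk0 (by omega)
    · rw [if_neg hle]; exact hmem _ (by omega) (by omega)
  · intro k hk
    dsimp only
    by_cases hle : k + 1 ≤ i
    · rw [if_pos (by omega : k ≤ i), if_pos hle]; exact hadj k (by omega)
    · by_cases he : k ≤ i
      · have : k = i := by omega
        subst this
        rw [if_pos le_rfl, if_neg hle]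
        have : k + 1 + j - (k + 1) = j := by omega
        rw [this]; exact e
      · rw [if_neg he, if_neg hle]
        have e1 : k + 1 + j - (i + 1) = (k + j - (i+1)) + 1 := by omega
        rw [e1]
        exact hadj _ (by omega)

/-- Removing a repeated vertex from an internal path. -/
lemma IP.dedup {T : Finset V} {x y : V} {n : ℕ} {f : ℕ → V} (h : IP G T x y n f)
    {i j : ℕ} (hij : i < j) (hj : j ≤ n) (e : f i = f j) :
    ∃ g, IP G T x y (n - j + i) g := by
  obtain ⟨h0, hn, hmem, hadj⟩ := h
  refine ⟨fun k => if k ≤ i then f k else f (k + j - i), by simp [h0], ?_, ?_, ?_⟩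
  · dsimp only
    by_cases hle : n - j + i ≤ i
    · have hjn : j = n := by omega
      have hii : n - j + i = i := by omega
      rw [if_pos hle, hii, e, hjn, hn]
    · rw [if_neg hle]
      have : n - j + i + j - i = n := by omega
      rw [this, hn]
  · intro k hk0 hkn
    dsimp only
    by_cases hle : k ≤ i
    · rw [if_pos hle]; exact hmem k hk0 (by omega)
    · rw [if_neg hle]; exact hmem _ (by omega) (by omega)
  · intro k hk
    dsimp only
    by_cases hle : k + 1 ≤ i
    · rw [if_pos (by omega : k ≤ i), if_pos hle]; exact hadj k (by omega)
    · by_cases he : k ≤ i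
      · have : k = i := by omega
        subst this
        rw [if_pos le_rfl, if_neg hle]
        have h1 : k + 1 + j - k = j + 1 := by omega
        rw [h1, e]
        exact hadj j (by omega)
      · rw [if_neg he, if_neg hle]
        have e1 : k + 1 + j - i = (k + j - i) + 1 := by omega
        rw [e1]
        exact hadj _ (by omega)

end Walks

section Cycle

variable {V : Type*} {G : SimpleGraph V}

lemma mod_helper (n a b : ℕ) (ha : a < n) (hb : b < n) :
    (n - b + a) % n = if b ≤ a then a - b else a + n - b := by
  rcases le_or_gt b a with h | h
  · rw [if_pos h]
    have e : n - b + a = n + (a - b) := by omega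
    rw [e, Nat.add_mod_left, Nat.mod_eq_of_lt (by omega)]
  · rw [if_neg (not_le.2 h), Nat.mod_eq_of_lt (by omega)]
    omega

lemma cycleGraph_adj_iff {n : ℕ} (hn : 4 ≤ n) {i j : Fin n} :
    (SimpleGraph.cycleGraph n).Adj i j ↔
      (j.val = i.val + 1 ∨ i.val = j.val + 1 ∨ (i.val = 0 ∧ j.val = n - 1) ∨
        (j.val = 0 ∧ i.val = n - 1)) := by
  rw [SimpleGraph.cycleGraph_adj']
  have hi := i.isLt
  have hj := j.isLt
  rw [Fin.sub_def, Fin.sub_def]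
  simp only [Fin.val_mk]
  rw [mod_helper n _ _ hi hj, mod_helper n _ _ hj hi]
  split_ifs <;> omega

lemma false_of_cycle {n : ℕ} (hG : G.IsChordal) (hn : 4 ≤ n) (g : Fin n → V)
    (hinj : Function.Injective g)
    (hadj : ∀ i j, G.Adj (g i) (g j) ↔ (SimpleGraph.cycleGraph n).Adj i j) : False := by
  apply hG n hn (Set.range g)
  refine ⟨⟨(Equiv.ofInjective g hinj).symm, ?_⟩⟩
  intro a b
  have key : ∀ c : Set.range g, g ((Equiv.ofInjective g hinj).symm c) = c := by
    intro c
    exact congrArg Subtype.val ((Equiv.ofInjective g hinj).apply_symm_apply c)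
  rw [← hadj, key a, key b]
  rfl

end Cycle

section TwoPaths

variable {V : Type*} {G : SimpleGraph V}

lemma chordal_two_paths (hG : G.IsChordal) {x y : V} {p q : ℕ} {f g : ℕ → V}
    (hp : 2 ≤ p) (hq : 2 ≤ q)
    (hf0 : f 0 = x) (hfp : f p = y) (hg0 : g 0 = x) (hgq : g q = y)
    (hfa : ∀ i < p, G.Adj (f i) (f (i+1))) (hga : ∀ i < q, G.Adj (g i) (g (i+1)))
    (hfc : ∀ i j, i + 1 < j → j ≤ p → ¬ G.Adj (f i) (f j))
    (hgc : ∀ i j, i + 1 < j → j ≤ q → ¬ G.Adj (g i) (g j))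
    (hfi : ∀ i j, i < j → j ≤ p → f i ≠ f j)
    (hgi : ∀ i j, i < j → j ≤ q → g i ≠ g j)
    (hdisj : ∀ i j, 0 < i → i < p → 0 < j → j < q → f i ≠ g j)
    (hcross : ∀ i j, 0 < i → i < p → 0 < j → j < q → ¬ G.Adj (f i) (g j)) :
    False := by
  set n := p + q with hn
  have hn4 : 4 ≤ n := by omega
  set H : ℕ → V := fun i => if i ≤ p then f i else g (n - i) with hH
  -- injectivity at the ℕ level
  have key3 : ∀ i j, i < j → j < n → H i ≠ H j := by
    intro i j hij hjn
    by_cases hjp : j ≤ p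
    · simp only [hH, if_pos (by omega : i ≤ p), if_pos hjp]
      exact hfi i j hij hjp
    · have hm1 : 1 ≤ n - j := by omega
      have hm2 : n - j ≤ q - 1 := by omega
      by_cases hip : i ≤ p
      · simp only [hH, if_pos hip, if_neg hjp]
        rcases Nat.lt_or_ge 0 i with hi0 | hi0
        · rcases Nat.lt_or_ge i p with hipp | hipp
          · exact hdisj i (n - j) hi0 hipp (by omega) (by omega)
          · have hie : i = p := by omega
            subst hie
            rw [hfp, ← hgq]
            exact (hgi (n - j) q (by omega) le_rfl).symm
        · have hie : i = 0 := by omega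
          subst hie
          rw [hf0, ← hg0]
          exact hgi 0 (n - j) (by omega) (by omega)
      · simp only [hH, if_neg hip, if_neg hjp]
        exact fun hE => hgi (n - j) (n - i) (by omega) (by omega) hE.symm
  -- adjacency forward
  have key1 : ∀ i j, i < j → j < n → G.Adj (H i) (H j) → (j = i + 1 ∨ (i = 0 ∧ j = n - 1)) := by
    intro i j hij hjn hadj
    by_cases hjp : j ≤ p
    · rw [hH] at hadj
      simp only [if_pos (by omega : i ≤ p), if_pos hjp] at hadj
      by_contra hcon
      exact hfc i j (by omega) hjp hadj
    · have hm1 : 1 ≤ n - j := by omega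
      have hm2 : n - j ≤ q - 1 := by omega
      by_cases hip : i ≤ p
      · rw [hH] at hadj
        simp only [if_pos hip, if_neg hjp] at hadj
        rcases Nat.lt_or_ge 0 i with hi0 | hi0
        · rcases Nat.lt_or_ge i p with hipp | hipp
          · exact absurd hadj (hcross i (n - j) hi0 hipp (by omega) (by omega))
          · have hie : i = p := by omega
            subst hie
            rw [hfp, ← hgq] at hadj
            have : ¬ (n - j + 1 < q) := fun hc => hgc (n - j) q hc le_rfl hadj.symm
            left; omega
        · have hie : i = 0 := by omega
          subst hie
          rw [hf0, ← hg0] at hadj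
          have : ¬ (0 + 1 < n - j) := fun hc => hgc 0 (n - j) hc (by omega) hadj
          right; constructor
          · rfl
          · omega
      · rw [hH] at hadj
        simp only [if_neg hip, if_neg hjp] at hadj
        have : ¬ (n - j + 1 < n - i) := fun hc => hgc (n - j) (n - i) hc (by omega) hadj.symm
        left; omega
  -- adjacency backward: consecutive
  have key2 : ∀ i, i + 1 < n → G.Adj (H i) (H (i + 1)) := by
    intro i hi
    by_cases hip : i + 1 ≤ p
    · simp only [hH, if_pos (by omega : i ≤ p), if_pos hip]
      exact hfa i (by omega)
    · by_cases hie : i ≤ p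
      · have : i = p := by omega
        subst this
        simp only [hH, if_pos le_rfl, if_neg hip]
        have e : n - (i + 1) = q - 1 := by omega
        rw [e, hfp, ← hgq]
        have := hga (q - 1) (by omega)
        have e2 : q - 1 + 1 = q := by omega
        rw [e2] at this
        exact this.symm
      · simp only [hH, if_neg hie, if_neg hip]
        have := hga (n - (i + 1)) (by omega)
        have e2 : n - (i + 1) + 1 = n - i := by omega
        rw [e2] at this
        exact this.symm
  have key2' : G.Adj (H 0) (H (n - 1)) := by
    have h1 : H 0 = g 0 := by
      simp only [hH, if_pos (by omega : (0:ℕ) ≤ p)]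
      rw [hf0, hg0]
    have h2 : H (n - 1) = g 1 := by
      simp only [hH, if_neg (by omega : ¬ (n - 1 ≤ p))]
      congr 1
      omega
    rw [h1, h2]
    exact hga 0 (by omega)
  -- build the Fin function
  refine false_of_cycle hG hn4 (fun i : Fin n => H i.val) ?_ ?_
  · intro i j hE
    rcases lt_trichotomy i.val j.val with h | h | h
    · exact absurd hE (key3 _ _ h j.isLt)
    · exact Fin.ext h
    · exact absurd hE.symm (key3 _ _ h i.isLt)
  · intro i j
    rw [cycleGraph_adj_iff hn4]
    constructor
    · intro hadj
      rcases lt_trichotomy i.val j.val with h | h | h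
      · rcases key1 _ _ h j.isLt hadj with h1 | h1
        · left; omega
        · right; right; left; exact h1
      · exfalso
        have hij : i = j := Fin.ext h
        subst hij
        exact G.irrefl hadj
      · rcases key1 _ _ h i.isLt hadj.symm with h1 | h1
        · right; left; omega
        · right; right; right; exact h1
    · intro hc
      show G.Adj (H i.val) (H j.val)
      rcases hc with h1 | h1 | h1 | h1
      · rw [h1]; exact key2 i.val (by omega)
      · rw [h1]; exact (key2 j.val (by omega)).symm
      · rw [h1.1, h1.2]; exact key2'
      · rw [h1.1, h1.2]; exact key2'.symm

end TwoPaths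

section Dirac

variable {V : Type*} {G : SimpleGraph V}

/-- A vertex is simplicial inside `S`: its neighbors in `S` are pairwise adjacent. -/
def SimpInS (G : SimpleGraph V) (S : Finset V) (v : V) : Prop :=
  ∀ ⦃u⦄, u ∈ S → G.Adj v u → ∀ ⦃w⦄, w ∈ S → G.Adj v w → u ≠ w → G.Adj u w

lemma sep_neighbor {T : Finset V} {c d x : V} (hcx : c ≠ x)
    (hnone : ∀ w ∈ T, Reach G T c w → ¬ G.Adj x w)
    (hr : Reach G (insert x T) c d) (hdx : d ≠ x) : Reach G T c d := by
  obtain ⟨nn, f, h0, hnn, hmem, hadj⟩ := hr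
  by_cases hx : ∃ i, i ≤ nn ∧ f i = x
  · exfalso
    have hspec := Nat.find_spec hx
    obtain ⟨k, hkn, hfk, hmin⟩ : ∃ k, k ≤ nn ∧ f k = x ∧ ∀ i < k, f i ≠ x :=
      ⟨Nat.find hx, hspec.1, hspec.2, fun i hi hfi =>
        Nat.find_min hx hi ⟨le_trans (le_of_lt hi) hspec.1, hfi⟩⟩
    have hk1 : 1 ≤ k := by
      rcases Nat.eq_zero_or_pos k with h | h
      · exfalso; apply hcx; rw [← h0, ← hfk, h]
      · exact h
    have hpre : ∀ i, i ≤ k - 1 → f i ∈ T := by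
      intro i hi
      have h1 : f i ∈ insert x T := hmem i (by omega)
      have h2 : f i ≠ x := hmin i (by omega)
      rcases Finset.mem_insert.1 h1 with h | h
      · exact absurd h h2
      · exact h
    have hreach : Reach G T c (f (k - 1)) :=
      ⟨k - 1, f, h0, rfl, hpre, fun j hj => hadj j (by omega)⟩
    have hadjx : G.Adj x (f (k - 1)) := by
      have := hadj (k - 1) (by omega)
      have e : k - 1 + 1 = k := by omega
      rw [e, hfk] at this
      exact this.symm
    exact hnone (f (k - 1)) (hpre (k-1) le_rfl) hreach hadjx
  · push_neg at hx
    refine ⟨nn, f, h0, hnn, ?_, hadj⟩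
    intro i hi
    have h1 := hmem i hi
    rcases Finset.mem_insert.1 h1 with h | h
    · exact absurd h (hx i hi)
    · exact h

end Dirac

section Dirac2

variable {V : Type*} {G : SimpleGraph V}

lemma IP.of_reach {T : Finset V} {x y wx wy : V} (hr : Reach G T wx wy)
    (hax : G.Adj x wx) (hay : G.Adj y wy) : ∃ nn ff, IP G T x y nn ff := by
  obtain ⟨m, qf, q0, qm, qmem, qadj⟩ := hr
  refine ⟨m + 2, fun k => if k = 0 then x else if k ≤ m + 1 then qf (k-1) else y, by simp, ?_, ?_, ?_⟩
  · dsimp only; rw [if_neg (by omega), if_neg (by omega)]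
  · intro i h0i him
    dsimp only
    rw [if_neg (by omega), if_pos (by omega)]
    exact qmem (i-1) (by omega)
  · intro i him
    dsimp only
    by_cases h0 : i = 0
    · subst h0
      rw [if_pos rfl, if_neg (by omega : ¬ (0:ℕ) + 1 = 0), if_pos (by omega)]
      have e : (0:ℕ) + 1 - 1 = 0 := by omega
      rw [e, q0]
      exact hax
    · rw [if_neg h0]
      by_cases h1 : i ≤ m + 1
      · rw [if_pos h1, if_neg (by omega : ¬ i + 1 = 0)]
        by_cases h2 : i + 1 ≤ m + 1
        · rw [if_pos h2]
          have := qadj (i-1) (by omega)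
          have e : i - 1 + 1 = i + 1 - 1 := by omega
          rw [e] at this
          exact this
        · rw [if_neg h2]
          have e : i - 1 = m := by omega
          rw [e, qm]
          exact hay.symm
      · omega

lemma IP.min_exists {T : Finset V} {x y : V} (hxy : x ≠ y) (hnadj : ¬ G.Adj x y)
    (hex : ∃ nn ff, IP G T x y nn ff) :
    ∃ n f, IP G T x y n f ∧ 2 ≤ n ∧ (∀ i j, i + 1 < j → j ≤ n → ¬ G.Adj (f i) (f j)) ∧
      (∀ i j, i < j → j ≤ n → f i ≠ f j) := by
  obtain ⟨f, hf⟩ := Nat.find_spec hex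
  have hmin : ∀ m, m < Nat.find hex → ¬ ∃ ff, IP G T x y m ff :=
    fun m hm => Nat.find_min hex hm
  refine ⟨Nat.find hex, f, hf, ?_, ?_, ?_⟩
  · have h0 := hf.1
    have h1 := hf.2.1
    have hadjw := hf.2.2.2
    by_contra h
    push_neg at h
    have h2 : Nat.find hex = 0 ∨ Nat.find hex = 1 := by omega
    rcases h2 with h2 | h2
    · apply hxy; rw [← h0, ← h1, h2]
    · apply hnadj
      have hh := hadjw 0 (by rw [h2]; omega)
      rw [h0] at hh
      rw [h2] at h1
      rw [show (0:ℕ)+1 = 1 from rfl, h1] at hh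
      exact hh
  · intro i j hij hj hadj
    obtain ⟨g', hg'⟩ := hf.splice (by omega : i < j) hj hadj
    exact hmin _ (by omega) ⟨g', hg'⟩
  · intro i j hij hj heq
    obtain ⟨g', hg'⟩ := hf.dedup hij hj heq
    exact hmin _ (by omega) ⟨g', hg'⟩

end Dirac2

section Dirac3

variable {V : Type*} {G : SimpleGraph V}

lemma exists_two_simplicial (hG : G.IsChordal) :
    ∀ k (S : Finset V), S.card ≤ k → S.Nonempty →
      (∀ u ∈ S, ∀ w ∈ S, u ≠ w → G.Adj u w) ∨
      (∃ u ∈ S, ∃ w ∈ S, u ≠ w ∧ ¬ G.Adj u w ∧ SimpInS G S u ∧ SimpInS G S w) := by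
  intro k
  induction k with
  | zero =>
    intro S hc hne
    exact absurd (Finset.card_pos.2 hne) (by omega)
  | succ k IH =>
    intro S hcard hne
    by_cases hcomp : ∀ u ∈ S, ∀ w ∈ S, u ≠ w → G.Adj u w
    · exact Or.inl hcomp
    right
    push_neg at hcomp
    obtain ⟨a, haS, b, hbS, hab, hnadj⟩ := hcomp
    -- minimal separator
    have hsep0 : ¬ Reach G (S \ (S \ {a, b})) a b := by
      rintro ⟨nn, f, h0, hnn, hmem, hadjw⟩
      have hsub : S \ (S \ {a, b}) ⊆ {a, b} := by
        intro u hu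
        have := Finset.mem_sdiff.1 hu
        by_contra hc
        exact this.2 (Finset.mem_sdiff.2 ⟨this.1, hc⟩)
      rcases Nat.eq_zero_or_pos nn with h | h
      · apply hab; rw [← h0, ← hnn, h]
      · have h1 : f 1 ∈ ({a, b} : Finset V) := hsub (hmem 1 (by omega))
        have hadj1 : G.Adj a (f 1) := h0 ▸ hadjw 0 h
        rcases Finset.mem_insert.1 h1 with h | h
        · rw [h] at hadj1; exact G.irrefl hadj1
        · rw [Finset.mem_singleton.1 h] at hadj1; exact hnadj hadj1
    have hfam : ((S \ {a, b}).powerset.filter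
        (fun X => ¬ Reach G (S \ X) a b)).Nonempty :=
      ⟨S \ {a, b}, Finset.mem_filter.2 ⟨Finset.mem_powerset_self _, hsep0⟩⟩
    obtain ⟨X, hXfam, hXmin⟩ := Finset.exists_min_image _ Finset.card hfam
    have hXsub : X ⊆ S \ {a, b} := Finset.mem_powerset.1 (Finset.mem_filter.1 hXfam).1
    have hXsep : ¬ Reach G (S \ X) a b := (Finset.mem_filter.1 hXfam).2
    have hXsubS : X ⊆ S := hXsub.trans (Finset.sdiff_subset)
    have haX : a ∉ X := by
      intro h
      have := (Finset.mem_sdiff.1 (hXsub h)).2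
      simp at this
    have hbX : b ∉ X := by
      intro h
      have := (Finset.mem_sdiff.1 (hXsub h)).2
      simp at this
    have ha' : a ∈ S \ X := Finset.mem_sdiff.2 ⟨haS, haX⟩
    have hb' : b ∈ S \ X := Finset.mem_sdiff.2 ⟨hbS, hbX⟩
    set A := (S \ X).filter (fun w => Reach G (S \ X) a w) with hAdef
    set B := (S \ X).filter (fun w => Reach G (S \ X) b w) with hBdef
    have haA : a ∈ A := Finset.mem_filter.2 ⟨ha', Reach.refl' ha'⟩
    have hbB : b ∈ B := Finset.mem_filter.2 ⟨hb', Reach.refl' hb'⟩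
    have hAclosed : ∀ w ∈ A, ∀ u ∈ S \ X, G.Adj w u → u ∈ A := by
      intro w hw u hu hadj
      exact Finset.mem_filter.2 ⟨hu, ((Finset.mem_filter.1 hw).2).snoc hu hadj⟩
    have hBclosed : ∀ w ∈ B, ∀ u ∈ S \ X, G.Adj w u → u ∈ B := by
      intro w hw u hu hadj
      exact Finset.mem_filter.2 ⟨hu, ((Finset.mem_filter.1 hw).2).snoc hu hadj⟩
    have hAB : ∀ w, w ∈ A → w ∉ B := fun w hwa hwb =>
      hXsep ((((Finset.mem_filter.1 hwa).2)).trans' ((Finset.mem_filter.1 hwb).2).symm')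
    have hnoedge : ∀ w ∈ A, ∀ u ∈ B, ¬ G.Adj w u := by
      intro w hw u hu hadj
      exact hAB u (hAclosed w hw u (Finset.mem_filter.1 hu).1 hadj) hu
    -- every separator vertex has neighbors in both components
    have hNbr : ∀ x ∈ X, (∃ w ∈ A, G.Adj x w) ∧ (∃ w ∈ B, G.Adj x w) := by
      intro x hxX
      have hxS : x ∈ S := hXsubS hxX
      have hxab : x ∉ ({a, b} : Finset V) := (Finset.mem_sdiff.1 (hXsub hxX)).2
      have hxa : x ≠ a := by intro h; apply hxab; simp [h]
      have hxb : x ≠ b := by intro h; apply hxab; simp [h]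
      have hinsx : S \ (X.erase x) = insert x (S \ X) := by
        ext u
        simp only [Finset.mem_sdiff, Finset.mem_insert, Finset.mem_erase]
        constructor
        · rintro ⟨huS, hu2⟩
          by_cases h : u = x
          · exact Or.inl h
          · exact Or.inr ⟨huS, fun hc => hu2 ⟨h, hc⟩⟩
        · rintro (h | ⟨huS, hu2⟩)
          · subst h
            exact ⟨hxS, fun hc => hc.1 rfl⟩
          · exact ⟨huS, fun hc => hu2 hc.2⟩
      have hfalse : ¬ ¬ Reach G (S \ X.erase x) a b := by
        intro hsepx
        have hmem' : X.erase x ∈ (S \ {a, b}).powerset.filter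
            (fun Y => ¬ Reach G (S \ Y) a b) :=
          Finset.mem_filter.2 ⟨Finset.mem_powerset.2 ((Finset.erase_subset _ _).trans hXsub),
            hsepx⟩
        have hle := hXmin _ hmem'
        rw [Finset.card_erase_of_mem hxX] at hle
        have hpos : 0 < X.card := Finset.card_pos.2 ⟨x, hxX⟩
        omega
      have hreach : Reach G (insert x (S \ X)) a b := by
        rw [← hinsx]
        exact not_not.1 hfalse
      constructor
      · by_contra hno
        push_neg at hno
        apply hXsep
        exact sep_neighbor hxa.symm
          (fun w hw hr hadjxw => hno w (Finset.mem_filter.2 ⟨hw, hr⟩) hadjxw)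
          hreach (fun hc => hxb hc.symm)
      · by_contra hno
        push_neg at hno
        apply hXsep
        have hr2 := sep_neighbor (fun hc => hxb hc.symm)
          (fun w hw hr hadjxw => hno w (Finset.mem_filter.2 ⟨hw, hr⟩) hadjxw)
          hreach.symm' (fun hc => hxa hc.symm)
        exact hr2.symm'
    -- the separator is a clique
    have hXclique : ∀ x ∈ X, ∀ y ∈ X, x ≠ y → G.Adj x y := by
      intro x hx y hy hxy
      by_contra hnadjxy
      obtain ⟨wxA, hwxA, hadjxA⟩ := (hNbr x hx).1
      obtain ⟨wyA, hwyA, hadjyA⟩ := (hNbr y hy).1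
      obtain ⟨wxB, hwxB, hadjxB⟩ := (hNbr x hx).2
      obtain ⟨wyB, hwyB, hadjyB⟩ := (hNbr y hy).2
      have hAreach : ∀ w ∈ A, Reach G A a w := by
        intro w hw
        obtain ⟨nn, f, h0, hnn, hmem, hadjw⟩ := (Finset.mem_filter.1 hw).2
        refine ⟨nn, f, h0, hnn, ?_, hadjw⟩
        intro i hi
        exact Finset.mem_filter.2 ⟨hmem i hi, GW.reach_of_mem ⟨h0, hnn, hmem, hadjw⟩ hi⟩
      have hBreach : ∀ w ∈ B, Reach G B b w := by
        intro w hw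
        obtain ⟨nn, f, h0, hnn, hmem, hadjw⟩ := (Finset.mem_filter.1 hw).2
        refine ⟨nn, f, h0, hnn, ?_, hadjw⟩
        intro i hi
        exact Finset.mem_filter.2 ⟨hmem i hi, GW.reach_of_mem ⟨h0, hnn, hmem, hadjw⟩ hi⟩
      have hAwxy : Reach G A wxA wyA := (hAreach wxA hwxA).symm'.trans' (hAreach wyA hwyA)
      have hBwxy : Reach G B wxB wyB := (hBreach wxB hwxB).symm'.trans' (hBreach wyB hwyB)
      obtain ⟨p, f, hf, hp2, hfc, hfi⟩ :=
        IP.min_exists hxy hnadjxy (IP.of_reach hAwxy hadjxA hadjyA)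
      obtain ⟨q, g, hg, hq2, hgc, hgi⟩ :=
        IP.min_exists hxy hnadjxy (IP.of_reach hBwxy hadjxB hadjyB)
      refine chordal_two_paths hG hp2 hq2 hf.1 hf.2.1 hg.1 hg.2.1
        (fun i hi => hf.2.2.2 i hi) (fun i hi => hg.2.2.2 i hi) hfc hgc hfi hgi ?_ ?_
      · intro i j hi0 hip hj0 hjq heq
        have h1 : f i ∈ A := hf.2.2.1 i hi0 hip
        have h2 : g j ∈ B := hg.2.2.1 j hj0 hjq
        rw [heq] at h1
        exact hAB _ h1 h2
      · intro i j hi0 hip hj0 hjq hadj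
        have h1 : f i ∈ A := hf.2.2.1 i hi0 hip
        have h2 : g j ∈ B := hg.2.2.1 j hj0 hjq
        exact hnoedge _ h1 _ h2 hadj
    -- get a simplicial vertex on each side
    have side : ∀ (c : V) (C : Finset V), c ∈ C → C ⊆ S \ X →
        (∀ w ∈ C, ∀ u ∈ S \ X, G.Adj w u → u ∈ C) →
        (∃ z, z ∈ S ∧ z ∉ C ∪ X) →
        ∃ v ∈ C, SimpInS G S v := by
      rintro c C hcC hCsub hclosed ⟨z, hzS, hznot⟩
      have hCXS : C ∪ X ⊆ S := Finset.union_subset (hCsub.trans Finset.sdiff_subset) hXsubS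
      have hssub : C ∪ X ⊂ S := Finset.ssubset_iff_of_subset hCXS |>.2 ⟨z, hzS, hznot⟩
      have hlt : (C ∪ X).card ≤ k := by
        have := Finset.card_lt_card hssub
        omega
      have hclosed' : ∀ v ∈ C, ∀ u ∈ S, G.Adj v u → u ∈ C ∪ X := by
        intro v hv u huS hadj
        by_cases hu : u ∈ X
        · exact Finset.mem_union_right _ hu
        · exact Finset.mem_union_left _
            (hclosed v hv u (Finset.mem_sdiff.2 ⟨huS, hu⟩) hadj)
      have hlift : ∀ v ∈ C, SimpInS G (C ∪ X) v → SimpInS G S v := by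
        intro v hvC hsimp u huS hadjvu w hwS hadjvw huw
        exact hsimp (hclosed' v hvC u huS hadjvu) hadjvu
          (hclosed' v hvC w hwS hadjvw) hadjvw huw
      rcases IH (C ∪ X) hlt ⟨c, Finset.mem_union_left _ hcC⟩ with
        hcompl | ⟨u, huM, w, hwM, huw, hnuw, hsu, hsw⟩
      · refine ⟨c, hcC, hlift c hcC ?_⟩
        intro u hu _ w hw _ hne2
        exact hcompl u hu w hw hne2
      · have hone : u ∈ C ∨ w ∈ C := by
          by_contra hcon
          push_neg at hcon
          have hu' : u ∈ X := (Finset.mem_union.1 huM).resolve_left hcon.1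
          have hw' : w ∈ X := (Finset.mem_union.1 hwM).resolve_left hcon.2
          exact hnuw (hXclique u hu' w hw' huw)
        rcases hone with h | h
        · exact ⟨u, h, hlift u h hsu⟩
        · exact ⟨w, h, hlift w h hsw⟩
    have hbnot : b ∉ A ∪ X := by
      intro h
      rcases Finset.mem_union.1 h with h | h
      · exact hAB b h hbB
      · exact hbX h
    have hanot : a ∉ B ∪ X := by
      intro h
      rcases Finset.mem_union.1 h with h | h
      · exact hAB a haA h
      · exact haX h
    obtain ⟨vA, hvA, hsA⟩ := side a A haA (Finset.filter_subset _ _) hAclosed ⟨b, hbS, hbnot⟩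
    obtain ⟨vB, hvB, hsB⟩ := side b B hbB (Finset.filter_subset _ _) hBclosed ⟨a, haS, hanot⟩
    refine ⟨vA, Finset.sdiff_subset ((Finset.filter_subset _ _) hvA), vB,
      Finset.sdiff_subset ((Finset.filter_subset _ _) hvB), ?_, ?_, hsA, hsB⟩
    · intro h
      exact hAB vA hvA (h ▸ hvB)
    · exact hnoedge vA hvA vB hvB

/-- Every nonempty subset of a chordal graph has a simplicial vertex. -/
lemma exists_simplicial (hG : G.IsChordal) (S : Finset V) (hne : S.Nonempty) :
    ∃ v ∈ S, SimpInS G S v := by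
  rcases exists_two_simplicial hG S.card S le_rfl hne with h | ⟨u, hu, _, _, _, _, hsu, _⟩
  · obtain ⟨v, hv⟩ := hne
    refine ⟨v, hv, ?_⟩
    intro u hu _ w hw _ hne2
    exact h u hu w hw hne2
  · exact ⟨u, hu, hsu⟩

end Dirac3

section FSum

variable {V : Type*} [Fintype V] {G : SimpleGraph V}

/-- The alternating sum of cliques contained in `T`. -/
noncomputable def Fsum (G : SimpleGraph V) (T : Finset V) : ℝ :=
  ∑ I ∈ G.cliqueComplex.filter (fun I => I ⊆ T), (-1 : ℝ) ^ (I.card - 1)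

lemma mem_cliqueComplex {I : Finset V} :
    I ∈ G.cliqueComplex ↔ I.Nonempty ∧ G.IsClique (I : Set V) := by
  rw [SimpleGraph.cliqueComplex, Finset.mem_filter]
  simp [Finset.subset_univ]

lemma Fsum_empty : Fsum G ∅ = 0 := by
  rw [Fsum]
  apply Finset.sum_eq_zero
  intro I hI
  rw [Finset.mem_filter] at hI
  obtain ⟨h1, h2⟩ := hI
  rw [Finset.subset_empty] at h2
  rw [mem_cliqueComplex] at h1
  exact absurd h2 h1.1.ne_empty

lemma Fsum_clique {K : Finset V} (hK : G.IsClique (K : Set V)) (hne : K.Nonempty) :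
    Fsum G K = 1 := by
  have hset : G.cliqueComplex.filter (fun I => I ⊆ K) =
      K.powerset.filter (fun I => I.Nonempty) := by
    ext I
    simp only [Finset.mem_filter, mem_cliqueComplex, Finset.mem_powerset]
    constructor
    · rintro ⟨⟨h1, _⟩, h2⟩
      exact ⟨h2, h1⟩
    · rintro ⟨h1, h2⟩
      exact ⟨⟨h2, hK.subset (Finset.coe_subset.2 h1)⟩, h1⟩
  rw [Fsum, hset]
  have h1 : ∑ I ∈ K.powerset, (-1 : ℝ) ^ I.card = 0 := by
    exact_mod_cast Finset.sum_powerset_neg_one_pow_card_of_nonempty hne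
  have h2 := Finset.sum_filter_add_sum_filter_not K.powerset (fun I => I.Nonempty)
    (fun I => (-1 : ℝ) ^ I.card)
  rw [h1] at h2
  have h3 : ∑ I ∈ K.powerset.filter (fun I => ¬ I.Nonempty), (-1 : ℝ) ^ I.card = 1 := by
    have : K.powerset.filter (fun I => ¬ I.Nonempty) = {∅} := by
      ext I
      simp only [Finset.mem_filter, Finset.mem_powerset, Finset.mem_singleton,
        Finset.not_nonempty_iff_eq_empty]
      constructor
      · rintro ⟨_, h⟩; exact h
      · rintro rfl; exact ⟨Finset.empty_subset _, rfl⟩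
    rw [this]
    simp
  have h4 : ∑ I ∈ K.powerset.filter (fun I => I.Nonempty), (-1 : ℝ) ^ I.card = -1 := by
    linarith
  have h5 : ∀ I ∈ K.powerset.filter (fun I => I.Nonempty),
      (-1 : ℝ) ^ (I.card - 1) = -((-1 : ℝ) ^ I.card) := by
    intro I hI
    have hIne : I.Nonempty := (Finset.mem_filter.1 hI).2
    have hc : 1 ≤ I.card := Finset.card_pos.2 hIne
    have e : I.card = (I.card - 1) + 1 := by omega
    have e2 : (-1:ℝ) ^ I.card = (-1) ^ (I.card - 1) * (-1) := by
      conv_lhs => rw [e]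
      rw [pow_succ]
    rw [e2]
    ring
  rw [Finset.sum_congr rfl h5, Finset.sum_neg_distrib]
  rw [h4]
  norm_num

end FSum

section FRec

variable {V : Type*} [Fintype V] {G : SimpleGraph V}

lemma Fsum_rec (v : V) (T : Finset V) (hv : v ∈ T) :
    Fsum G T = Fsum G (T.erase v) + 1 - Fsum G (T.filter (G.Adj v)) := by
  set X := T.filter (G.Adj v) with hXdef
  have hvX : v ∉ X := by
    intro h
    exact G.irrefl (Finset.mem_filter.1 h).2
  have hsplit := Finset.sum_filter_add_sum_filter_not
    (G.cliqueComplex.filter (fun I => I ⊆ T)) (fun I => v ∈ I)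
    (fun I => (-1 : ℝ) ^ (I.card - 1))
  have hA : (G.cliqueComplex.filter (fun I => I ⊆ T)).filter (fun I => ¬ v ∈ I) =
      G.cliqueComplex.filter (fun I => I ⊆ T.erase v) := by
    rw [Finset.filter_filter]
    apply Finset.filter_congr
    intro I _
    rw [Finset.subset_erase]
  set D := X.powerset.filter (fun J : Finset V => G.IsClique (J : Set V)) with hDdef
  have hB : ∑ I ∈ (G.cliqueComplex.filter (fun I => I ⊆ T)).filter (fun I => v ∈ I),
      (-1 : ℝ) ^ (I.card - 1) = ∑ J ∈ D, (-1 : ℝ) ^ J.card := by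
    apply Finset.sum_nbij' (fun I => I.erase v) (fun J => insert v J)
    · intro I hI
      simp only [Finset.mem_filter, mem_cliqueComplex] at hI
      obtain ⟨⟨⟨hne, hcl⟩, hsub⟩, hvI⟩ := hI
      rw [hDdef, Finset.mem_filter, Finset.mem_powerset]
      constructor
      · intro u hu
        have hu' := Finset.mem_erase.1 hu
        rw [hXdef, Finset.mem_filter]
        exact ⟨hsub hu'.2, hcl (Finset.mem_coe.2 hvI) (Finset.mem_coe.2 hu'.2)
          (Ne.symm hu'.1)⟩
      · exact hcl.subset (Finset.coe_subset.2 (Finset.erase_subset _ _))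
    · intro J hJ
      rw [hDdef, Finset.mem_filter, Finset.mem_powerset] at hJ
      obtain ⟨hsub, hcl⟩ := hJ
      simp only [Finset.mem_filter, mem_cliqueComplex]
      refine ⟨⟨⟨Finset.insert_nonempty _ _, ?_⟩, ?_⟩, Finset.mem_insert_self _ _⟩
      · rw [Finset.coe_insert]
        apply hcl.insert
        intro u hu _
        exact (Finset.mem_filter.1 (hsub (Finset.mem_coe.1 hu))).2
      · intro u hu
        rcases Finset.mem_insert.1 hu with h | h
        · exact h ▸ hv
        · exact (Finset.filter_subset _ _) (hsub h)
    · intro I hI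
      exact Finset.insert_erase (Finset.mem_filter.1 hI).2
    · intro J hJ
      apply Finset.erase_insert
      intro h
      rw [hDdef, Finset.mem_filter, Finset.mem_powerset] at hJ
      exact hvX (hJ.1 h)
    · intro I hI
      rw [Finset.card_erase_of_mem (Finset.mem_filter.1 hI).2]
  have hD : ∑ J ∈ D, (-1 : ℝ) ^ J.card = 1 - Fsum G X := by
    have hsplit2 := Finset.sum_filter_add_sum_filter_not D (fun J => J.Nonempty)
      (fun J => (-1 : ℝ) ^ J.card)
    have hDempty : D.filter (fun J => ¬ J.Nonempty) = {∅} := by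
      ext J
      simp only [Finset.mem_filter, Finset.mem_singleton, Finset.not_nonempty_iff_eq_empty,
        hDdef, Finset.mem_powerset]
      constructor
      · rintro ⟨_, h⟩; exact h
      · rintro rfl
        exact ⟨⟨Finset.empty_subset _, by simp⟩, rfl⟩
    have hDne : D.filter (fun J => J.Nonempty) =
        G.cliqueComplex.filter (fun I => I ⊆ X) := by
      ext J
      simp only [Finset.mem_filter, mem_cliqueComplex, hDdef, Finset.mem_powerset]
      tauto
    have hstep : ∀ J ∈ D.filter (fun J => J.Nonempty),
        (-1 : ℝ) ^ J.card = -((-1 : ℝ) ^ (J.card - 1)) := by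
      intro J hJ
      have hc : 1 ≤ J.card := Finset.card_pos.2 (Finset.mem_filter.1 hJ).2
      have e : J.card = (J.card - 1) + 1 := by omega
      conv_lhs => rw [e]
      rw [pow_succ]
      ring
    rw [Finset.sum_congr rfl hstep, hDempty] at hsplit2
    simp only [Finset.sum_singleton, Finset.card_empty, pow_zero] at hsplit2
    rw [Finset.sum_neg_distrib, hDne] at hsplit2
    rw [← hsplit2, Fsum]
    ring
  rw [Fsum, ← hsplit, hA, hB, hD]
  simp only [Fsum]
  ring

end FRec

section FBounds

variable {V : Type*} [Fintype V] {G : SimpleGraph V}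

lemma Fsum_pos (hG : G.IsChordal) :
    ∀ k (T : Finset V), T.card ≤ k → T.Nonempty → 1 ≤ Fsum G T := by
  intro k
  induction k with
  | zero => intro T hc hne; exact absurd (Finset.card_pos.2 hne) (by omega)
  | succ k IH =>
    intro T hcard hne
    obtain ⟨v, hvT, hsimp⟩ := exists_simplicial hG T hne
    have hrec := Fsum_rec (G := G) v T hvT
    have hcut : (T.erase v).card ≤ k := by
      have := Finset.card_erase_of_mem hvT
      have := Finset.card_pos.2 hne
      omega
    by_cases hX : (T.filter (G.Adj v)).Nonempty
    · have hclX : G.IsClique ((T.filter (G.Adj v)) : Set V) := by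
        intro u hu w hw huw
        have hu' := Finset.mem_filter.1 (Finset.mem_coe.1 hu)
        have hw' := Finset.mem_filter.1 (Finset.mem_coe.1 hw)
        exact hsimp hu'.1 hu'.2 hw'.1 hw'.2 huw
      have hFX : Fsum G (T.filter (G.Adj v)) = 1 := Fsum_clique hclX hX
      have herane : (T.erase v).Nonempty := by
        obtain ⟨u, hu⟩ := hX
        have hu' := Finset.mem_filter.1 hu
        exact ⟨u, Finset.mem_erase.2 ⟨(G.ne_of_adj hu'.2).symm, hu'.1⟩⟩
      have := IH (T.erase v) hcut herane
      rw [hrec, hFX]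
      linarith
    · rw [Finset.not_nonempty_iff_eq_empty] at hX
      rw [hrec, hX, Fsum_empty]
      by_cases hTe : (T.erase v).Nonempty
      · have := IH (T.erase v) hcut hTe
        linarith
      · rw [Finset.not_nonempty_iff_eq_empty] at hTe
        rw [hTe, Fsum_empty]
        norm_num

lemma Fsum_le_indep (hG : G.IsChordal) :
    ∀ k (T : Finset V), T.card ≤ k →
      ∃ W : Finset V, W ⊆ T ∧ ((W : Set V).Pairwise fun v w => ¬ G.Adj v w) ∧
        Fsum G T ≤ W.card := by
  intro k
  induction k with
  | zero =>
    intro T hc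
    have hT : T = ∅ := Finset.card_eq_zero.1 (by omega)
    refine ⟨∅, by simp [hT], by simp, ?_⟩
    rw [hT, Fsum_empty]
    simp
  | succ k IH =>
    intro T hcard
    rcases Finset.eq_empty_or_nonempty T with hT | hne
    · refine ⟨∅, by simp [hT], by simp, ?_⟩
      rw [hT, Fsum_empty]
      simp
    obtain ⟨v, hvT⟩ := hne
    have hrec := Fsum_rec (G := G) v T hvT
    have hcut : (T.erase v).card ≤ k := by
      have := Finset.card_erase_of_mem hvT
      have := Finset.card_pos.2 ⟨v, hvT⟩
      omega
    obtain ⟨W, hWsub, hWind, hWle⟩ := IH (T.erase v) hcut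
    by_cases hX : (T.filter (G.Adj v)).Nonempty
    · have hFX : 1 ≤ Fsum G (T.filter (G.Adj v)) := by
        apply Fsum_pos hG (T.filter (G.Adj v)).card _ le_rfl hX
      refine ⟨W, hWsub.trans (Finset.erase_subset _ _), hWind, ?_⟩
      linarith
    · rw [Finset.not_nonempty_iff_eq_empty] at hX
      have hvW : v ∉ W := fun h => (Finset.mem_erase.1 (hWsub h)).1 rfl
      refine ⟨insert v W, ?_, ?_, ?_⟩
      · apply Finset.insert_subset hvT (hWsub.trans (Finset.erase_subset _ _))
      · rw [Finset.coe_insert]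
        apply Set.Pairwise.insert hWind
        intro w hwW hwv
        have hwT : w ∈ T := (Finset.erase_subset _ _) (hWsub (Finset.mem_coe.1 hwW))
        have hnadj : ¬ G.Adj v w := by
          intro hadj
          have : w ∈ T.filter (G.Adj v) := Finset.mem_filter.2 ⟨hwT, hadj⟩
          rw [hX] at this
          exact absurd this (Finset.notMem_empty w)
        exact ⟨hnadj, fun h => hnadj h.symm⟩
      · rw [Finset.card_insert_of_notMem hvW, hrec, hX, Fsum_empty]
        push_cast
        linarith

end FBounds

section Indep

variable {V : Type*} [Fintype V] {G : SimpleGraph V}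

lemma indep_bddAbove :
    BddAbove {n | ∃ s : Finset V, ((s : Set V).Pairwise fun v w => ¬ G.Adj v w) ∧ s.card = n} := by
  refine ⟨Fintype.card V, ?_⟩
  rintro n ⟨s, _, rfl⟩
  exact Finset.card_le_univ s

lemma indep_card_le {W : Finset V}
    (hW : (W : Set V).Pairwise fun v w => ¬ G.Adj v w) : W.card ≤ G.indepNum' :=
  le_csSup indep_bddAbove ⟨W, hW, rfl⟩

lemma one_le_indepNum [Nonempty V] : 1 ≤ G.indepNum' := by
  have := indep_card_le (G := G) (W := {Classical.arbitrary V})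
    (by rw [Finset.coe_singleton]; exact Set.pairwise_singleton _ _)
  simpa using this

end Indep

theorem chordal_graph_sieve_lower {Ω V : Type*} [MeasurableSpace Ω] [Fintype V] [Nonempty V]
    (μ : Measure Ω) [IsProbabilityMeasure μ] (G : SimpleGraph V) (hG : G.IsChordal)
    (A : V → Set Ω) (hA : ∀ v, MeasurableSet (A v)) :
    (μ (⋃ v, A v)).toReal ≥
      (1 / G.indepNum') *
        ∑ I ∈ G.cliqueComplex, (-1 : ℝ) ^ (I.card - 1) * (μ (⋂ i ∈ I, A i)).toReal := by
  classical
  set Bev : Finset V → Set Ω :=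
    fun T => (⋂ v ∈ T, A v) ∩ (⋂ v ∈ (Tᶜ : Finset V), (A v)ᶜ) with hBevdef
  have hBev : ∀ (T : Finset V) (ω : Ω),
      ω ∈ Bev T ↔ (Finset.univ.filter (fun v => ω ∈ A v)) = T := by
    intro T ω
    simp only [hBevdef, Set.mem_inter_iff, Set.mem_iInter, Set.mem_compl_iff,
      Finset.mem_compl]
    constructor
    · rintro ⟨h1, h2⟩
      ext v
      simp only [Finset.mem_filter, Finset.mem_univ, true_and]
      constructor
      · intro hv
        by_contra hc
        exact h2 v hc hv
      · exact h1 v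
    · intro h
      subst h
      constructor
      · intro v hv
        exact (Finset.mem_filter.1 hv).2
      · intro v hv hAv
        exact hv (Finset.mem_filter.2 ⟨Finset.mem_univ v, hAv⟩)
  have hBmeas : ∀ T, MeasurableSet (Bev T) := by
    intro T
    apply MeasurableSet.inter
    · exact Finset.measurableSet_biInter _ (fun v _ => hA v)
    · exact Finset.measurableSet_biInter _ (fun v _ => (hA v).compl)
  have hdisj : ∀ (s : Finset (Finset V)), Set.PairwiseDisjoint (s : Set (Finset V)) Bev := by
    intro s T1 _ T2 _ hne
    rw [Function.onFun, Set.disjoint_left]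
    intro ω h1 h2
    rw [hBev] at h1 h2
    exact hne (h1 ▸ h2 ▸ rfl)
  set m : Finset V → ℝ := fun T => (μ (Bev T)).toReal with hmdef
  have hm_nonneg : ∀ T, 0 ≤ m T := fun T => ENNReal.toReal_nonneg
  have hInter : ∀ I : Finset V, (μ (⋂ i ∈ I, A i)).toReal =
      ∑ T ∈ Finset.univ.powerset.filter (fun T => I ⊆ T), m T := by
    intro I
    have hset : (⋂ i ∈ I, A i) =
        ⋃ T ∈ Finset.univ.powerset.filter (fun T => I ⊆ T), Bev T := by
      ext ω
      simp only [Set.mem_iInter, Set.mem_iUnion, Finset.mem_filter, Finset.mem_powerset]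
      constructor
      · intro h
        refine ⟨Finset.univ.filter (fun v => ω ∈ A v),
          ⟨⟨Finset.filter_subset _ _, ?_⟩, (hBev _ ω).2 rfl⟩⟩
        intro i hi
        exact Finset.mem_filter.2 ⟨Finset.mem_univ i, h i hi⟩
      · rintro ⟨T, ⟨⟨_, hIT⟩, hωT⟩⟩
        rw [hBev] at hωT
        intro i hi
        have : i ∈ T := hIT hi
        rw [← hωT] at this
        exact (Finset.mem_filter.1 this).2
    rw [hset, measure_biUnion_finset (hdisj _) (fun T _ => hBmeas T)]
    rw [ENNReal.toReal_sum (fun T _ => measure_ne_top μ _)]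
  have hUnion : (μ (⋃ v, A v)).toReal =
      ∑ T ∈ Finset.univ.powerset.filter (fun T => T.Nonempty), m T := by
    have hset : (⋃ v, A v) =
        ⋃ T ∈ Finset.univ.powerset.filter (fun T => T.Nonempty), Bev T := by
      ext ω
      simp only [Set.mem_iUnion, Finset.mem_filter, Finset.mem_powerset]
      constructor
      · rintro ⟨v, hv⟩
        refine ⟨Finset.univ.filter (fun v => ω ∈ A v),
          ⟨⟨Finset.filter_subset _ _, ⟨v, Finset.mem_filter.2 ⟨Finset.mem_univ v, hv⟩⟩⟩,
            (hBev _ ω).2 rfl⟩⟩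
      · rintro ⟨T, ⟨⟨_, hTne⟩, hωT⟩⟩
        rw [hBev] at hωT
        obtain ⟨v, hv⟩ := hTne
        rw [← hωT] at hv
        exact ⟨v, (Finset.mem_filter.1 hv).2⟩
    rw [hset, measure_biUnion_finset (hdisj _) (fun T _ => hBmeas T)]
    rw [ENNReal.toReal_sum (fun T _ => measure_ne_top μ _)]
  -- rewrite the big sum
  set α : ℝ := (G.indepNum' : ℝ) with hαdef
  have hα1 : (1 : ℝ) ≤ α := by
    rw [hαdef]
    exact_mod_cast one_le_indepNum (G := G)
  have hαpos : 0 < α := lt_of_lt_of_le one_pos hα1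
  have hS : ∑ I ∈ G.cliqueComplex, (-1 : ℝ) ^ (I.card - 1) * (μ (⋂ i ∈ I, A i)).toReal =
      ∑ T ∈ Finset.univ.powerset, Fsum G T * m T := by
    calc ∑ I ∈ G.cliqueComplex, (-1 : ℝ) ^ (I.card - 1) * (μ (⋂ i ∈ I, A i)).toReal
        = ∑ I ∈ G.cliqueComplex, ∑ T ∈ Finset.univ.powerset.filter (fun T => I ⊆ T),
            (-1 : ℝ) ^ (I.card - 1) * m T := by
          apply Finset.sum_congr rfl
          intro I _
          rw [hInter I, Finset.mul_sum]
      _ = ∑ I ∈ G.cliqueComplex, ∑ T ∈ Finset.univ.powerset,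
            (if I ⊆ T then (-1 : ℝ) ^ (I.card - 1) * m T else 0) := by
          apply Finset.sum_congr rfl
          intro I _
          rw [Finset.sum_filter]
      _ = ∑ T ∈ Finset.univ.powerset, ∑ I ∈ G.cliqueComplex,
            (if I ⊆ T then (-1 : ℝ) ^ (I.card - 1) * m T else 0) := Finset.sum_comm
      _ = ∑ T ∈ Finset.univ.powerset, Fsum G T * m T := by
          apply Finset.sum_congr rfl
          intro T _
          rw [← Finset.sum_filter, Fsum, Finset.sum_mul]
  have hbound : ∑ T ∈ Finset.univ.powerset, Fsum G T * m T ≤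
      α * (μ (⋃ v, A v)).toReal := by
    rw [hUnion, Finset.mul_sum, Finset.sum_filter]
    apply Finset.sum_le_sum
    intro T _
    by_cases hTne : T.Nonempty
    · rw [if_pos hTne]
      apply mul_le_mul_of_nonneg_right _ (hm_nonneg T)
      obtain ⟨W, _, hWind, hWle⟩ := Fsum_le_indep hG T.card T le_rfl
      calc Fsum G T ≤ (W.card : ℝ) := hWle
        _ ≤ α := by
            rw [hαdef]
            exact_mod_cast indep_card_le hWind
    · rw [if_neg hTne]
      rw [Finset.not_nonempty_iff_eq_empty] at hTne
      rw [hTne, Fsum_empty, zero_mul]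
  rw [ge_iff_le, hS]
  have h2 : (1 / α) * ∑ T ∈ Finset.univ.powerset, Fsum G T * m T ≤
      (1 / α) * (α * (μ (⋃ v, A v)).toReal) := by
    apply mul_le_mul_of_nonneg_left hbound
    positivity
  calc (1 / α) * ∑ T ∈ Finset.univ.powerset, Fsum G T * m T ≤
      (1 / α) * (α * (μ (⋃ v, A v)).toReal) := h2
    _ = (μ (⋃ v, A v)).toReal := by
        field_simp
end

section
/- Let {A_v}_{v∈V} be a non-empty finite collection of events in a probability space, where the index set V is the vertex set of a chordal graph G. Then for every positive integer r, Pr(⋃_{v∈V} A_v) ≥ (1/α(G)) · Σ_{I∈𝒞(G), |I|≤2r} (−1)^{|I|−1} · Pr(⋂_{i∈I} A_i), where α(G) is the independence number of G and the sum runs over all elements I of the clique complex 𝒞(G) of cardinality at most 2r. -/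
open MeasureTheory Finset
open scoped Classical

/-- The independence number of `G`: the maximum size of a set of pairwise
non-adjacent vertices. -/
noncomputable def SimpleGraph.indepNumber {V : Type*} [Fintype V] (G : SimpleGraph V) : ℕ :=
  sSup {n | ∃ s : Finset V, ((s : Set V).Pairwise fun v w => ¬ G.Adj v w) ∧ s.card = n}

namespace ChordalAux

section


variable {V : Type*} (G : SimpleGraph V)

/-- Connectivity within a vertex set `S`. -/
def Conn (S : Set V) (a b : V) : Prop := ∃ w : G.Walk a b, ∀ x ∈ w.support, x ∈ S

variable {G}

theorem Conn.mem_left {S : Set V} {a b : V} (h : Conn G S a b) : a ∈ S := by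
  obtain ⟨w, hw⟩ := h; exact hw _ w.start_mem_support

theorem Conn.mem_right {S : Set V} {a b : V} (h : Conn G S a b) : b ∈ S := by
  obtain ⟨w, hw⟩ := h; exact hw _ w.end_mem_support

theorem conn_refl {S : Set V} {a : V} (ha : a ∈ S) : Conn G S a a :=
  ⟨SimpleGraph.Walk.nil, by simpa using ha⟩

theorem Conn.symm {S : Set V} {a b : V} (h : Conn G S a b) : Conn G S b a := by
  obtain ⟨w, hw⟩ := h
  exact ⟨w.reverse, by simpa [SimpleGraph.Walk.support_reverse] using hw⟩

theorem Conn.trans {S : Set V} {a b c : V} (h : Conn G S a b) (h' : Conn G S b c) :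
    Conn G S a c := by
  obtain ⟨w, hw⟩ := h
  obtain ⟨w', hw'⟩ := h'
  refine ⟨w.append w', fun x hx => ?_⟩
  rw [SimpleGraph.Walk.mem_support_append_iff] at hx
  exact hx.elim (hw x) (hw' x)

theorem Conn.adj {S : Set V} {a b c : V} (h : Conn G S a b) (hbc : G.Adj b c) (hc : c ∈ S) :
    Conn G S a c := by
  refine h.trans ⟨SimpleGraph.Walk.cons hbc SimpleGraph.Walk.nil, ?_⟩
  intro x hx
  simp only [SimpleGraph.Walk.support_cons, SimpleGraph.Walk.support_nil,
    List.mem_cons, List.mem_singleton] at hx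
  rcases hx with rfl | rfl | h
  · exact h.mem_right
  · exact hc
  · exact absurd h (by simp)

/-- Partial alternating sum of binomial coefficients. -/
theorem alt_binom_partial (d m : ℕ) (hd : 1 ≤ d) :
    ∑ k ∈ Finset.range (m + 1), (-1 : ℤ) ^ k * (d.choose k : ℤ)
      = (-1) ^ m * ((d - 1).choose m : ℤ) := by
  obtain ⟨e, rfl⟩ : ∃ e, d = e + 1 := ⟨d - 1, (Nat.succ_pred_eq_of_pos hd).symm⟩
  simp only [Nat.add_sub_cancel]
  induction m with
  | zero => simp
  | succ m ih =>
    rw [Finset.sum_range_succ, ih, Nat.choose_succ_succ]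
    push_cast
    ring



end

section

variable {V : Type*} (G : SimpleGraph V)

/-- A "valid path list" from `x` to `y` with interior inside `Ca`. -/
def QP (x y : V) (Ca : Set V) (L : List V) : Prop :=
  3 ≤ L.length ∧ L.head? = some x ∧ L.getLast? = some y ∧ L.Chain' G.Adj ∧
    ∀ (i : ℕ) (h : i < L.length), 0 < i → i + 1 < L.length → L[i] ∈ Ca

variable {G}

theorem QP.getElem_zero {x y : V} {Ca : Set V} {L : List V} (hQ : QP G x y Ca L)
    (h : 0 < L.length) : L[0] = x := by
  have h2 := hQ.2.1
  rw [List.head?_eq_getElem?, List.getElem?_eq_getElem h] at h2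
  exact Option.some.inj h2

theorem QP.getElem_last {x y : V} {Ca : Set V} {L : List V} (hQ : QP G x y Ca L)
    (h : L.length - 1 < L.length) : L[L.length - 1] = y := by
  have h2 := hQ.2.2.1
  rw [List.getLast?_eq_getElem?, List.getElem?_eq_getElem h] at h2
  exact Option.some.inj h2


theorem gE {L : List V} {i j : ℕ} (h : i = j) {hi : i < L.length} :
    L[i]'hi = L[j]'(h ▸ hi) := by subst h; rfl

theorem qp_surgery {x y : V} {Ca : Set V} {L : List V} (hQ : QP G x y Ca L)
    {i k : ℕ} (hik : i + 1 < k) (hk : k < L.length)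
    (hadj : G.Adj (L[i]'(by omega)) (L[k]'hk))
    (hne : ¬(i = 0 ∧ k = L.length - 1)) :
    QP G x y Ca (L.take (i+1) ++ L.drop k) ∧
      (L.take (i+1) ++ L.drop k).length < L.length := by
  obtain ⟨hlen, hhead, hlast, hchain, hint⟩ := hQ
  have hlen' : (L.take (i+1) ++ L.drop k).length = (i+1) + (L.length - k) := by
    simp [List.length_take, List.length_drop]
    omega
  have hgetl : ∀ (j : ℕ) (hj : j ≤ i) (h' : j < (L.take (i+1) ++ L.drop k).length)
      (h'' : j < L.length), (L.take (i+1) ++ L.drop k)[j] = L[j] := by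
    intro j hj h' h''
    rw [List.getElem_append_left (by simp [List.length_take]; omega), List.getElem_take]
  have hgetr : ∀ (j : ℕ) (hj : i < j) (h' : j < (L.take (i+1) ++ L.drop k).length)
      (h'' : k + j - (i+1) < L.length),
      (L.take (i+1) ++ L.drop k)[j] = L[k + j - (i+1)] := by
    intro j hj h' h''
    rw [List.getElem_append_right (by simp [List.length_take]; omega)]
    rw [List.getElem_drop]
    apply gE
    simp [List.length_take]
    omega
  have hchain' := List.isChain_iff_getElem.mp hchain
  constructor
  · refine ⟨by omega, ?_, ?_, ?_, ?_⟩
    · rw [List.head?_eq_getElem?, List.getElem?_eq_getElem (by omega),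
        hgetl 0 (by omega) (by omega) (by omega)]
      rw [List.head?_eq_getElem?, List.getElem?_eq_getElem (by omega : 0 < L.length)] at hhead
      exact hhead
    · rw [List.getLast?_eq_getElem?,
        List.getElem?_eq_getElem
          (by omega : (L.take (i+1) ++ L.drop k).length - 1 < (L.take (i+1) ++ L.drop k).length),
        hgetr ((L.take (i+1) ++ L.drop k).length - 1) (by rw [hlen']; omega) (by omega)
          (by rw [hlen']; omega),
        gE (show k + ((L.take (i+1) ++ L.drop k).length - 1) - (i+1) = L.length - 1 by
          rw [hlen']; omega)]
      rw [List.getLast?_eq_getElem?,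
        List.getElem?_eq_getElem (by omega : L.length - 1 < L.length)] at hlast
      exact hlast
    · show List.IsChain G.Adj _
      rw [List.isChain_iff_getElem]
      intro j hj
      rw [hlen'] at hj
      by_cases hji : j + 1 ≤ i
      · rw [hgetl j (by omega) (by omega) (by omega),
          hgetl (j+1) hji (by omega) (by omega)]
        have := hchain' j (by omega)
        simpa using this
      · by_cases hji2 : j ≤ i
        · -- j = i, junction
          rw [hgetl j hji2 (by omega) (by omega),
            hgetr (j+1) (by omega) (by omega) (by omega)]
          have hji3 : j = i := by omega
          subst hji3
          convert hadj using 2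
          omega
        · rw [hgetr j (by omega) (by omega) (by omega),
            hgetr (j+1) (by omega) (by omega) (by omega)]
          have := hchain' (k + j - (i+1)) (by omega)
          convert this using 2
          omega
    · intro j h h0 h1
      rw [hlen'] at h h1
      by_cases hj : j ≤ i
      · rw [hgetl j hj (by omega) (by omega)]
        exact hint j (by omega) h0 (by omega)
      · rw [hgetr j (by omega) (by omega) (by omega)]
        exact hint _ (by omega) (by omega) (by omega)
  · rw [hlen']; omega

theorem exists_induced_path {x y : V} {Ca : Set V}
    (hex : ∃ L, QP G x y Ca L) (hx : x ∉ Ca) (hy : y ∉ Ca) (hxy : x ≠ y)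
    (hnadj : ¬G.Adj x y) :
    ∃ L, QP G x y Ca L ∧
      (∀ (i k : ℕ) (hi : i < L.length) (hk : k < L.length), i < k →
        (G.Adj (L[i]'hi) (L[k]'hk) ↔ k = i + 1)) ∧ L.Nodup := by
  have hex' : ∃ n, ∃ L, QP G x y Ca L ∧ L.length = n := by
    obtain ⟨L, hL⟩ := hex; exact ⟨L.length, L, hL, rfl⟩
  classical
  obtain ⟨L, hQ, hmin⟩ : ∃ L, QP G x y Ca L ∧
      ∀ L', QP G x y Ca L' → L.length ≤ L'.length := by
    obtain ⟨L, hL, hlen⟩ := Nat.find_spec hex'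
    exact ⟨L, hL, fun L' hL' => by
      rw [hlen]
      exact Nat.find_le ⟨L', hL', rfl⟩⟩
  have hlast : L[L.length - 1]'(by have := hQ.1; omega) = y := hQ.getElem_last _
  have hzero : L[0]'(by have := hQ.1; omega) = x := hQ.getElem_zero _
  have key : ∀ (i k : ℕ) (hi : i < L.length) (hk : k < L.length), i + 1 < k →
      ¬ G.Adj (L[i]'hi) (L[k]'hk) := by
    intro i k hi hk hik hadj
    by_cases hne : i = 0 ∧ k = L.length - 1
    · apply hnadj
      have e1 : L[i]'hi = x := by rw [← hzero]; congr 1; omega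
      have e2 : L[k]'hk = y := by rw [← hlast]; congr 1; omega
      rwa [e1, e2] at hadj
    · obtain ⟨hQ', hlt⟩ := qp_surgery hQ hik hk hadj hne
      exact absurd (hmin _ hQ') (by omega)
  have aux : ∀ (i k : ℕ) (hi : i < L.length) (hk : k < L.length), i < k →
      L[i]'hi ≠ L[k]'hk := by
    intro i k hi hk hlt hik
    have hi1 : 0 < i := by
      by_contra h0
      have h0' : i = 0 := by omega
      subst h0'
      rw [hzero] at hik
      by_cases hk2 : k + 1 < L.length
      · exact hx (hik ▸ hQ.2.2.2.2 k hk (by omega) hk2)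
      · have hk' : k = L.length - 1 := by omega
        subst hk'
        rw [hlast] at hik
        exact hxy hik
    have hk2 : k + 1 < L.length := by
      by_contra h0
      have hk' : k = L.length - 1 := by omega
      subst hk'
      rw [hlast] at hik
      have := hQ.1
      exact hy (hik ▸ hQ.2.2.2.2 i hi hi1 (by omega))
    have hadj : G.Adj (L[i]'hi) (L[k+1]'hk2) := by
      rw [hik]
      have := (List.isChain_iff_getElem.mp hQ.2.2.2.1) k (by omega)
      simpa using this
    exact key i (k+1) hi hk2 (by omega) hadj
  have hnodup : L.Nodup := by
    rw [List.nodup_iff_injective_get]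
    rintro ⟨i, hi⟩ ⟨k, hk⟩ hik
    simp only [List.get_eq_getElem] at hik
    rcases lt_trichotomy i k with h | h | h
    · exact absurd hik (aux i k hi hk h)
    · exact Fin.ext h
    · exact absurd hik.symm (aux k i hk hi h)
  refine ⟨L, hQ, fun i k hi hk hik => ?_, hnodup⟩
  constructor
  · intro hadj
    by_contra hne
    exact key i k hi hk (by omega) hadj
  · rintro rfl
    have := (List.isChain_iff_getElem.mp hQ.2.2.2.1) i (by omega)
    simpa using this



end

section

variable {V : Type*} {G : SimpleGraph V}

theorem gE' {L : List V} {i j : ℕ} (h : i = j) {hi : i < L.length} :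
    L[i]'hi = L[j]'(h ▸ hi) := by subst h; rfl

theorem fin_sub_val_eq_one {n : ℕ} (hn : 2 ≤ n) (i j : Fin n) :
    ((i - j : Fin n) : ℕ) = 1 ↔ (i.val = j.val + 1 ∨ (j.val = n - 1 ∧ i.val = 0)) := by
  rw [Fin.sub_def]
  have hi := i.isLt
  have hj := j.isLt
  show (n - j.val + i.val) % n = 1 ↔ _
  rcases le_or_gt j.val i.val with h | h
  · have e : n - j.val + i.val = (i.val - j.val) + n := by omega
    rw [e, Nat.add_mod_right, Nat.mod_eq_of_lt (by omega)]
    omega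
  · rw [Nat.mod_eq_of_lt (by omega)]
    omega

theorem cycleGraph_adj_iff {n : ℕ} (hn : 2 ≤ n) (i j : Fin n) :
    (SimpleGraph.cycleGraph n).Adj i j ↔
      (j.val = i.val + 1 ∨ i.val = j.val + 1 ∨ (i.val = 0 ∧ j.val = n - 1) ∨
        (j.val = 0 ∧ i.val = n - 1)) := by
  rw [SimpleGraph.cycleGraph_adj', fin_sub_val_eq_one hn i j, fin_sub_val_eq_one hn j i]
  tauto

theorem no_two_paths (hG : G.IsChordal) {x y : V} {Ca Cb : Set V}
    (hcross : ∀ u v, u ∈ Ca → v ∈ Cb → ¬ G.Adj u v)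
    (hdisj : ∀ u, u ∈ Ca → u ∉ Cb)
    (hxa : x ∉ Ca) (hya : y ∉ Ca) (hxb : x ∉ Cb) (hyb : y ∉ Cb)
    (hxy : x ≠ y) (hnadj : ¬G.Adj x y)
    (hexa : ∃ L, QP G x y Ca L) (hexb : ∃ L, QP G x y Cb L) : False := by
  obtain ⟨La, hQa, hIa, hNa⟩ := exists_induced_path hexa hxa hya hxy hnadj
  obtain ⟨Lb, hQb, hIb, hNb⟩ := exists_induced_path hexb hxb hyb hxy hnadj
  have hna : 3 ≤ La.length := hQa.1
  have hnb : 3 ≤ Lb.length := hQb.1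
  have hLa0 : La[0]'(by omega) = x := hQa.getElem_zero _
  have hLal : La[La.length - 1]'(by omega) = y := hQa.getElem_last _
  have hLb0 : Lb[0]'(by omega) = x := hQb.getElem_zero _
  have hLbl : Lb[Lb.length - 1]'(by omega) = y := hQb.getElem_last _
  have hMb_len : ((Lb.drop 1).dropLast).length = Lb.length - 2 := by
    simp [List.length_dropLast, List.length_drop]
    omega
  have hMb_get : ∀ (s : ℕ) (h : s < ((Lb.drop 1).dropLast).length),
      ((Lb.drop 1).dropLast)[s] = Lb[s+1]'(by rw [hMb_len] at h; omega) := by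
    intro s h
    rw [List.getElem_dropLast, List.getElem_drop]
    apply gE'
    omega
  have hC_len : (La ++ ((Lb.drop 1).dropLast).reverse).length
      = La.length + (Lb.length - 2) := by
    simp [hMb_len]
    omega
  have hn4 : 4 ≤ (La ++ ((Lb.drop 1).dropLast).reverse).length := by omega
  have cgetl : ∀ (p : ℕ) (hp : p < La.length)
      (h : p < (La ++ ((Lb.drop 1).dropLast).reverse).length),
      (La ++ ((Lb.drop 1).dropLast).reverse)[p] = La[p] := by
    intro p hp h
    exact List.getElem_append_left hp
  have cgetr : ∀ (p : ℕ) (hp : La.length ≤ p)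
      (h : p < (La ++ ((Lb.drop 1).dropLast).reverse).length),
      (La ++ ((Lb.drop 1).dropLast).reverse)[p]
        = Lb[Lb.length - 2 - (p - La.length)]'(by rw [hC_len] at h; omega) := by
    intro p hp h
    rw [List.getElem_append_right (by simpa using hp)]
    rw [List.getElem_reverse, hMb_get]
    apply gE'
    have h' := h
    rw [hC_len] at h'
    rw [hMb_len]
    omega
  -- adjacency characterization
  have hAdj : ∀ (p q : ℕ) (hp : p < (La ++ ((Lb.drop 1).dropLast).reverse).length)
      (hq : q < (La ++ ((Lb.drop 1).dropLast).reverse).length), p < q →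
      (G.Adj ((La ++ ((Lb.drop 1).dropLast).reverse)[p]'hp) ((La ++ ((Lb.drop 1).dropLast).reverse)[q]'hq) ↔ (q = p + 1 ∨ (p = 0 ∧ q = (La ++ ((Lb.drop 1).dropLast).reverse).length - 1))) := by
    intro p q hp hq hpq
    rw [hC_len] at hp hq
    by_cases hq1 : q < La.length
    · rw [cgetl p (by omega) (by omega), cgetl q hq1 (by omega),
        hIa p q (by omega) hq1 hpq]
      omega
    · push_neg at hq1
      have htq : Lb.length - 2 - (q - La.length) < Lb.length := by omega
      have htq1 : 1 ≤ Lb.length - 2 - (q - La.length) := by omega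
      have htq2 : Lb.length - 2 - (q - La.length) ≤ Lb.length - 2 := by omega
      rw [cgetr q hq1 (by omega)]
      by_cases hp1 : p < La.length
      · rcases Nat.eq_zero_or_pos p with hp0 | hp0
        · subst hp0
          rw [cgetl 0 (by omega) (by omega), hLa0, ← hLb0,
            hIb 0 _ (by omega) htq (by omega)]
          omega
        · by_cases hpl : p = La.length - 1
          · subst hpl
            rw [cgetl _ (by omega) (by omega), hLal, ← hLbl, G.adj_comm,
              hIb _ (Lb.length - 1) htq (by omega) (by omega)]
            omega
          · rw [cgetl p (by omega) (by omega)]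
            have h1 : La[p]'(by omega) ∈ Ca := hQa.2.2.2.2 p (by omega) hp0 (by omega)
            have h2 : Lb[Lb.length - 2 - (q - La.length)]'htq ∈ Cb :=
              hQb.2.2.2.2 _ htq (by omega) (by omega)
            constructor
            · intro had
              exact absurd had (hcross _ _ h1 h2)
            · omega
      · push_neg at hp1
        rw [cgetr p hp1 (by omega), G.adj_comm,
          hIb _ _ htq (by omega) (by omega)]
        omega
  -- C has no duplicates
  have hmemLa : ∀ z ∈ La, z = x ∨ z = y ∨ z ∈ Ca := by
    intro z hz
    rw [List.mem_iff_getElem] at hz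
    obtain ⟨p, hp, rfl⟩ := hz
    rcases Nat.eq_zero_or_pos p with h0 | h0
    · subst h0; exact Or.inl hLa0
    · by_cases hl : p = La.length - 1
      · subst hl; exact Or.inr (Or.inl hLal)
      · exact Or.inr (Or.inr (hQa.2.2.2.2 p hp h0 (by omega)))
  have hmemMb : ∀ z ∈ (Lb.drop 1).dropLast, z ∈ Cb := by
    intro z hz
    rw [List.mem_iff_getElem] at hz
    obtain ⟨s, hs, rfl⟩ := hz
    rw [hMb_get s hs]
    have := hMb_len ▸ hs
    exact hQb.2.2.2.2 (s+1) (by omega) (by omega) (by omega)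
  have hNC : (La ++ ((Lb.drop 1).dropLast).reverse).Nodup := by
    rw [List.nodup_append]
    refine ⟨hNa, List.nodup_reverse.mpr
      (hNb.sublist ((List.dropLast_sublist _).trans (List.drop_sublist 1 _))), ?_⟩
    intro z hzA w hzB hzw
    subst hzw
    rw [List.mem_reverse] at hzB
    have hB := hmemMb z hzB
    rcases hmemLa z hzA with rfl | rfl | hA
    · exact hxb hB
    · exact hyb hB
    · exact hdisj z hA hB
  -- build the isomorphism
  set n := (La ++ ((Lb.drop 1).dropLast).reverse).length with hndef
  let s : Set V := {v | v ∈ (La ++ ((Lb.drop 1).dropLast).reverse)}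
  let f : Fin n → s := fun i =>
    ⟨(La ++ ((Lb.drop 1).dropLast).reverse)[i.val]'i.isLt, List.getElem_mem _⟩
  have hinj : Function.Injective f := by
    intro i j hij
    have : (La ++ ((Lb.drop 1).dropLast).reverse)[i.val]'i.isLt
        = (La ++ ((Lb.drop 1).dropLast).reverse)[j.val]'j.isLt := congrArg Subtype.val hij
    have hgi := List.nodup_iff_injective_get.mp hNC
    have := hgi (a₁ := ⟨i.val, i.isLt⟩) (a₂ := ⟨j.val, j.isLt⟩) (by simpa using this)
    exact Fin.ext (by simpa using congrArg Fin.val this)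
  have hsurj : Function.Surjective f := by
    rintro ⟨z, hz⟩
    rw [Set.mem_setOf_eq, List.mem_iff_getElem] at hz
    obtain ⟨p, hp, rfl⟩ := hz
    exact ⟨⟨p, hp⟩, rfl⟩
  let e : Fin n ≃ s := Equiv.ofBijective f ⟨hinj, hsurj⟩
  have hiso : SimpleGraph.cycleGraph n ≃g G.induce s := by
    refine ⟨e, ?_⟩
    intro a b
    show (G.induce s).Adj (f a) (f b) ↔ (SimpleGraph.cycleGraph n).Adj a b
    have hind : (G.induce s).Adj (f a) (f b) ↔
        G.Adj ((La ++ ((Lb.drop 1).dropLast).reverse)[a.val]'a.isLt)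
          ((La ++ ((Lb.drop 1).dropLast).reverse)[b.val]'b.isLt) := by
      simp [f]
    rw [hind, cycleGraph_adj_iff (by omega) a b]
    rcases lt_trichotomy a.val b.val with h | h | h
    · rw [hAdj a.val b.val a.isLt b.isLt h]
      have := a.isLt; have := b.isLt
      omega
    · have : a = b := Fin.ext h
      subst this
      simp only [SimpleGraph.irrefl, false_iff]
      have := a.isLt
      omega
    · rw [G.adj_comm, hAdj b.val a.val b.isLt a.isLt h]
      have := a.isLt; have := b.isLt
      omega
  exact hG n hn4 s ⟨hiso.symm⟩



end

section

section Dirac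
variable {V : Type*} {G : SimpleGraph V}

theorem walk_to_neighbor {t u : V} {R : Set V} (w : G.Walk u t) (hut : u ≠ t)
    (hsup : ∀ z ∈ w.support, z ≠ t → z ∈ R) (hcnt : w.support.count t = 1) :
    ∃ c, G.Adj t c ∧ Conn G R u c := by
  obtain ⟨c, hadj, p, hq⟩ := SimpleGraph.Walk.exists_eq_cons_of_ne (Ne.symm hut) w.reverse
  have hsuprev : w.reverse.support = t :: p.support := by
    rw [hq, SimpleGraph.Walk.support_cons]
  have hcnt' : w.reverse.support.count t = 1 := by
    rw [SimpleGraph.Walk.support_reverse, List.count_reverse]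
    exact hcnt
  have htp : t ∉ p.support := by
    rw [hsuprev] at hcnt'
    simp only [List.count_cons_self] at hcnt'
    intro hmem
    have : 0 < p.support.count t := List.count_pos_iff.mpr hmem
    omega
  have hpsub : ∀ z ∈ p.support, z ∈ R := by
    intro z hz
    have hzw : z ∈ w.reverse.support := by rw [hsuprev]; exact List.mem_cons_of_mem _ hz
    rw [SimpleGraph.Walk.support_reverse, List.mem_reverse] at hzw
    exact hsup z hzw (fun h => htp (h ▸ hz))
  refine ⟨c, hadj, ⟨p.reverse, ?_⟩⟩
  intro z hz
  rw [SimpleGraph.Walk.support_reverse, List.mem_reverse] at hz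
  exact hpsub z hz

theorem qp_exists {R : Set V} {x y cx cy a : V} (hxc : G.Adj x cx) (hyc : G.Adj y cy)
    (hcx : Conn G R a cx) (hcy : Conn G R a cy) :
    ∃ L, QP G x y {z | Conn G R a z} L := by
  obtain ⟨w, hw⟩ := hcx.symm.trans hcy
  have hmem : ∀ z ∈ w.support, Conn G R a z := by
    intro z hz
    refine hcx.trans ⟨w.takeUntil z hz, ?_⟩
    intro u hu
    exact hw u (SimpleGraph.Walk.support_takeUntil_subset _ _ hu)
  have hne : w.support ≠ [] := w.support_ne_nil
  refine ⟨x :: (w.support ++ [y]), ?_, ?_, ?_, ?_, ?_⟩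
  · simp only [List.length_cons, List.length_append, List.length_singleton]
    have : 0 < w.support.length := List.length_pos_of_ne_nil hne
    omega
  · rfl
  · rw [show x :: (w.support ++ [y]) = (x :: w.support) ++ [y] by simp,
      List.getLast?_append_of_ne_nil _ (by simp)]
    rfl
  · have hchain : List.IsChain G.Adj (x :: w.support) := SimpleGraph.Walk.isChain_adj_cons_support hxc w
    have hlast : w.support.getLast? = some cy := by
      rw [← List.head?_reverse, ← SimpleGraph.Walk.support_reverse,
        SimpleGraph.Walk.support_eq_cons]
      rfl
    have h1 : List.Chain' G.Adj (x :: w.support) := hchain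
    show List.IsChain G.Adj _
    rw [show x :: (w.support ++ [y]) = (x :: w.support) ++ [y] by simp,
      List.isChain_append]
    refine ⟨h1, List.isChain_singleton y, ?_⟩
    intro a' ha' b' hb'
    rw [show x :: w.support = [x] ++ w.support by simp,
      List.getLast?_append_of_ne_nil _ hne, hlast] at ha'
    simp only [List.head?_cons, Option.mem_def, Option.some.injEq] at ha' hb'
    subst ha'; subst hb'
    exact hyc.symm
  · intro i h h0 h1
    simp only [List.length_cons, List.length_append, List.length_singleton,
      List.length_nil] at h h1
    obtain ⟨j, rfl⟩ : ∃ j, i = j + 1 := ⟨i - 1, by omega⟩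
    rw [List.getElem_cons_succ, List.getElem_append_left (by omega)]
    exact hmem _ (List.getElem_mem _)

theorem dirac_strong [Fintype V] (hG : G.IsChordal) (S : Finset V) :
    S.Nonempty →
      G.IsClique (S : Set V) ∨
      ∃ v ∈ (S : Set V), ∃ w ∈ (S : Set V), ¬G.Adj v w ∧ v ≠ w ∧
        G.IsClique {u | u ∈ (S : Set V) ∧ G.Adj v u} ∧
        G.IsClique {u | u ∈ (S : Set V) ∧ G.Adj w u} := by
  classical
  induction S using Finset.strongInduction with
  | _ S ih =>
  intro hS
  by_cases hclq : G.IsClique (S : Set V)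
  · exact Or.inl hclq
  right
  rw [SimpleGraph.isClique_iff, Set.Pairwise] at hclq
  push_neg at hclq
  obtain ⟨a, ha, b, hb, hab, hnadj⟩ := hclq
  -- a separator exists
  have hT0 : ∃ T ∈ S.powerset.filter
      (fun (T : Finset V) => a ∉ T ∧ b ∉ T ∧ ¬ Conn G ((S : Set V) \ (T : Set V)) a b), True := by
    refine ⟨S \ ({a, b} : Finset V), Finset.mem_filter.mpr ⟨Finset.mem_powerset.mpr (Finset.sdiff_subset),
      by simp, by simp [hab], ?_⟩, trivial⟩
    rintro ⟨w, hw⟩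
    have hsup : ∀ z ∈ w.support, z = a ∨ z = b := by
      intro z hz
      have hz2 := hw z hz
      simp only [Finset.coe_sdiff, Set.mem_diff, Finset.mem_coe, Finset.mem_sdiff,
        Finset.coe_insert, Finset.coe_singleton, Set.mem_insert_iff,
        Set.mem_singleton_iff, not_and, not_not, Finset.mem_insert,
        Finset.mem_singleton] at hz2
      exact hz2.2 hz2.1
    obtain ⟨c, hadj, p, rfl⟩ := SimpleGraph.Walk.exists_eq_cons_of_ne hab w
    rcases hsup c (by
      rw [SimpleGraph.Walk.support_cons]
      exact List.mem_cons_of_mem _ p.start_mem_support) with rfl | rfl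
    · exact G.irrefl hadj
    · exact hnadj hadj
  obtain ⟨T0, hT0mem, -⟩ := hT0
  obtain ⟨T, hT𝒯, hTmin⟩ := Finset.exists_min_image _ Finset.card ⟨T0, hT0mem⟩
  rw [Finset.mem_filter, Finset.mem_powerset] at hT𝒯
  obtain ⟨hTS, haT, hbT, hsep⟩ := hT𝒯
  set R : Set V := (S : Set V) \ (T : Set V) with hR
  have haR : a ∈ R := ⟨ha, fun h => haT (Finset.mem_coe.mp h)⟩
  have hbR : b ∈ R := ⟨hb, fun h => hbT (Finset.mem_coe.mp h)⟩
  -- every separator vertex has neighbors in both components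
  have nbr : ∀ t ∈ T, (∃ c, G.Adj t c ∧ Conn G R a c) ∧ (∃ c, G.Adj t c ∧ Conn G R b c) := by
    intro t ht
    have hconn : Conn G ((S : Set V) \ ((T.erase t : Finset V) : Set V)) a b := by
      by_contra hc
      have hmem : T.erase t ∈ S.powerset.filter
          (fun (T' : Finset V) => a ∉ T' ∧ b ∉ T' ∧ ¬ Conn G ((S : Set V) \ (T' : Set V)) a b) :=
        Finset.mem_filter.mpr ⟨Finset.mem_powerset.mpr ((T.erase_subset t).trans hTS),
          fun h => haT (Finset.mem_of_mem_erase h),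
          fun h => hbT (Finset.mem_of_mem_erase h), hc⟩
      have h1 := hTmin _ hmem
      have h2 : (T.erase t).card < T.card := Finset.card_erase_lt_of_mem ht
      omega
    obtain ⟨w, hw⟩ := hconn
    have htw : t ∈ w.support := by
      by_contra htw
      refine hsep ⟨w, fun z hz => ⟨(hw z hz).1, fun hzT => ?_⟩⟩
      have hzt : z ≠ t := fun h => htw (h ▸ hz)
      exact (hw z hz).2 (Finset.mem_coe.mpr (Finset.mem_erase.mpr ⟨hzt, Finset.mem_coe.mp hzT⟩))
    constructor
    · refine walk_to_neighbor (w.takeUntil t htw) (fun h => haT (h ▸ ht)) ?_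
        (w.count_support_takeUntil_eq_one htw)
      intro z hz hzt
      have := hw z (SimpleGraph.Walk.support_takeUntil_subset _ _ hz)
      exact ⟨this.1, fun hzT =>
        this.2 (Finset.mem_coe.mpr (Finset.mem_erase.mpr ⟨hzt, Finset.mem_coe.mp hzT⟩))⟩
    · have htw' : t ∈ w.reverse.support := by
        rw [SimpleGraph.Walk.support_reverse, List.mem_reverse]; exact htw
      refine walk_to_neighbor (w.reverse.takeUntil t htw') (fun h => hbT (h ▸ ht)) ?_
        (w.reverse.count_support_takeUntil_eq_one htw')
      intro z hz hzt
      have hz' := SimpleGraph.Walk.support_takeUntil_subset _ _ hz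
      rw [SimpleGraph.Walk.support_reverse, List.mem_reverse] at hz'
      have := hw z hz'
      exact ⟨this.1, fun hzT =>
        this.2 (Finset.mem_coe.mpr (Finset.mem_erase.mpr ⟨hzt, Finset.mem_coe.mp hzT⟩))⟩
  -- the separator is a clique
  have hTclq : G.IsClique (T : Set V) := by
    rw [SimpleGraph.isClique_iff]
    intro x hx y hy hxy
    by_contra hnxy
    obtain ⟨⟨cxa, hcxa⟩, ⟨cxb, hcxb⟩⟩ := nbr x (Finset.mem_coe.mp hx)
    obtain ⟨⟨cya, hcya⟩, ⟨cyb, hcyb⟩⟩ := nbr y (Finset.mem_coe.mp hy)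
    have hxR : x ∉ R := fun h => h.2 hx
    have hyR : y ∉ R := fun h => h.2 hy
    refine no_two_paths hG (Ca := {z | Conn G R a z}) (Cb := {z | Conn G R b z})
      ?_ ?_ ?_ ?_ ?_ ?_ hxy hnxy ?_ ?_
    · intro u v hu hv hadj
      exact hsep ((hu.adj hadj hv.mem_right).trans hv.symm)
    · intro u hu hv
      exact hsep (hu.trans hv.symm)
    · exact fun h => hxR h.mem_right
    · exact fun h => hyR h.mem_right
    · exact fun h => hxR h.mem_right
    · exact fun h => hyR h.mem_right
    · exact qp_exists hcxa.1 hcya.1 hcxa.2 hcya.2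
    · exact qp_exists hcxb.1 hcyb.1 hcxb.2 hcyb.2
  -- extract a simplicial vertex in each component
  have key : ∀ c d : V, c ∈ R → d ∈ R → ¬ Conn G R c d →
      ∃ v, v ∈ (S : Set V) ∧ Conn G R c v ∧
        G.IsClique {u | u ∈ (S : Set V) ∧ G.Adj v u} := by
    intro c d hcR hdR hcd
    set Sc := S.filter (fun z => Conn G R c z) ∪ T with hSc
    have hScS : Sc ⊆ S := Finset.union_subset (Finset.filter_subset _ _) hTS
    have hdSc : d ∉ Sc := by
      intro hmem
      rcases Finset.mem_union.mp hmem with h | h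
      · exact hcd (Finset.mem_filter.mp h).2
      · exact hdR.2 (Finset.mem_coe.mpr h)
    have hSclt : Sc ⊂ S := (Finset.ssubset_iff_of_subset hScS).mpr
      ⟨d, Finset.mem_coe.mp hdR.1, hdSc⟩
    have hcS : c ∈ S := Finset.mem_coe.mp hcR.1
    have hcSc : c ∈ Sc := Finset.mem_union_left _ (Finset.mem_filter.mpr ⟨hcS, conn_refl hcR⟩)
    -- closure of neighborhoods
    have hclos : ∀ v : V, Conn G R c v → ∀ z : V, z ∈ S → G.Adj v z → z ∈ Sc := by
      intro v hv z hzS hadj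
      by_cases hzT : z ∈ T
      · exact Finset.mem_union_right _ hzT
      · refine Finset.mem_union_left _ (Finset.mem_filter.mpr ⟨hzS, ?_⟩)
        exact hv.adj hadj ⟨Finset.mem_coe.mpr hzS, fun h => hzT (Finset.mem_coe.mp h)⟩
    have transfer : ∀ v : V, Conn G R c v →
        {u | u ∈ (Sc : Set V) ∧ G.Adj v u} = {u | u ∈ (S : Set V) ∧ G.Adj v u} := by
      intro v hv
      ext z
      constructor
      · rintro ⟨hz1, hz2⟩
        exact ⟨Finset.mem_coe.mpr (hScS (Finset.mem_coe.mp hz1)), hz2⟩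
      · rintro ⟨hz1, hz2⟩
        exact ⟨Finset.mem_coe.mpr (hclos v hv z (Finset.mem_coe.mp hz1) hz2), hz2⟩
    rcases ih Sc hSclt ⟨c, hcSc⟩ with hclq2 | ⟨u, hu, w, hw, hnuw, hneuw, hsu, hsw⟩
    · refine ⟨c, Finset.mem_coe.mpr hcS, conn_refl hcR, ?_⟩
      rw [← transfer c (conn_refl hcR)]
      exact hclq2.subset (fun z hz => hz.1)
    · have pick : ∀ v : V, v ∈ (Sc : Set V) → v ∉ T →
          G.IsClique {z | z ∈ (Sc : Set V) ∧ G.Adj v z} →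
          ∃ v', v' ∈ (S : Set V) ∧ Conn G R c v' ∧
            G.IsClique {u' | u' ∈ (S : Set V) ∧ G.Adj v' u'} := by
        intro v hv hvT hvclq
        have hvf : v ∈ S.filter (fun z => Conn G R c z) := by
          rcases Finset.mem_union.mp (Finset.mem_coe.mp hv) with h | h
          · exact h
          · exact absurd h hvT
        obtain ⟨hvS, hvconn⟩ := Finset.mem_filter.mp hvf
        exact ⟨v, Finset.mem_coe.mpr hvS, hvconn, (transfer v hvconn) ▸ hvclq⟩
      have honeT : u ∉ T ∨ w ∉ T := by
        by_contra h
        push_neg at h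
        exact hnuw (hTclq (Finset.mem_coe.mpr h.1) (Finset.mem_coe.mpr h.2) hneuw)
      rcases honeT with h | h
      · exact pick u hu h hsu
      · exact pick w hw h hsw
  obtain ⟨va, hvaS, hvac, hvaclq⟩ := key a b haR hbR hsep
  obtain ⟨vb, hvbS, hvbc, hvbclq⟩ := key b a hbR haR (fun h => hsep h.symm)
  refine ⟨va, hvaS, vb, hvbS, ?_, ?_, hvaclq, hvbclq⟩
  · intro hadj
    exact hsep ((hvac.adj hadj hvbc.mem_right).trans hvbc.symm)
  · intro heq
    exact hsep (hvac.trans (heq ▸ hvbc.symm : Conn G R va b))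

theorem exists_simplicial [Fintype V] (hG : G.IsChordal) (S : Finset V) (hS : S.Nonempty) :
    ∃ v ∈ S, G.IsClique {u | u ∈ (S : Set V) ∧ G.Adj v u} := by
  rcases dirac_strong hG S hS with hclq | ⟨v, hv, _, _, _, _, hvc, _⟩
  · obtain ⟨v, hv⟩ := hS
    exact ⟨v, hv, hclq.subset (fun z hz => hz.1)⟩
  · exact ⟨v, Finset.mem_coe.mp hv, hvc⟩

end Dirac


end

section

section Comb
variable {V : Type*} [Fintype V] {G : SimpleGraph V}

/-- truncated alternating clique sum over subsets of `S`. -/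
noncomputable def fsum (G : SimpleGraph V) (r : ℕ) (S : Finset V) : ℤ :=
  ∑ I ∈ S.powerset.filter (fun (I : Finset V) => I.Nonempty ∧ G.IsClique (I : Set V) ∧ I.card ≤ 2*r),
    (-1) ^ (I.card - 1)

theorem sum_powerset_sign_le (N : Finset V) (r : ℕ) (hr : 0 < r) :
    ∑ J ∈ N.powerset.filter (fun J => J.card ≤ 2*r - 1), (-1 : ℤ) ^ J.card
      ≤ if N = ∅ then 1 else 0 := by
  classical
  rcases eq_or_ne N ∅ with rfl | hN
  · simp [Finset.filter_singleton]
  · rw [if_neg hN]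
    have hd : 1 ≤ N.card := Finset.card_pos.mpr (Finset.nonempty_of_ne_empty hN)
    have hsplit : ∑ J ∈ N.powerset.filter (fun J => J.card ≤ 2*r - 1), (-1 : ℤ) ^ J.card
        = ∑ k ∈ Finset.range (2*r - 1 + 1), (-1 : ℤ)^k * (N.card.choose k : ℤ) := by
      rw [← Finset.sum_fiberwise_of_maps_to (g := Finset.card)
        (t := Finset.range (2*r - 1 + 1)) (fun J hJ =>
          Finset.mem_range.mpr (by have := (Finset.mem_filter.mp hJ).2; omega))]
      refine Finset.sum_congr rfl (fun k hk => ?_)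
      rw [Finset.mem_range] at hk
      have : (N.powerset.filter (fun J => J.card ≤ 2*r - 1)).filter (fun J => J.card = k)
          = N.powersetCard k := by
        ext J
        simp only [Finset.mem_filter, Finset.mem_powerset, Finset.mem_powersetCard]
        constructor
        · rintro ⟨⟨h1, h2⟩, h3⟩; exact ⟨h1, h3⟩
        · rintro ⟨h1, h2⟩; exact ⟨⟨h1, by omega⟩, h2⟩
      rw [this]
      rw [Finset.sum_congr rfl (fun J hJ => by
        rw [(Finset.mem_powersetCard.mp hJ).2] : ∀ J ∈ N.powersetCard k, ((-1:ℤ)^J.card) = (-1:ℤ)^k)]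
      rw [Finset.sum_const, Finset.card_powersetCard]
      push_cast
      ring
    rw [hsplit, alt_binom_partial _ _ hd]
    have hodd : Odd (2*r - 1) := ⟨r - 1, by omega⟩
    rw [hodd.neg_one_pow]
    have : (0:ℤ) ≤ ((N.card - 1).choose (2*r-1) : ℤ) := Int.natCast_nonneg _
    omega

theorem fsum_le (hG : G.IsChordal) (r : ℕ) (hr : 0 < r) (S : Finset V) :
    ∃ T : Finset V, T ⊆ S ∧ ((T : Set V).Pairwise fun v w => ¬ G.Adj v w) ∧
      fsum G r S ≤ T.card := by
  classical
  induction S using Finset.strongInduction with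
  | _ S ih =>
  rcases S.eq_empty_or_nonempty with rfl | hS
  · refine ⟨∅, by simp, by simp, ?_⟩
    rw [fsum, Finset.powerset_empty]
    simp [Finset.filter_singleton]
  obtain ⟨v, hv, hsimp⟩ := exists_simplicial hG S hS
  set Nv := (S.erase v).filter (fun u => G.Adj v u) with hNv
  have hNvS : (Nv : Set V) ⊆ {u | u ∈ (S : Set V) ∧ G.Adj v u} := by
    intro u hu
    rw [Finset.mem_coe, hNv, Finset.mem_filter] at hu
    exact ⟨Finset.mem_coe.mpr (Finset.mem_of_mem_erase hu.1), hu.2⟩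
  have hNvclq : G.IsClique (Nv : Set V) := hsimp.subset hNvS
  have hvNv : v ∉ Nv := by
    rw [hNv, Finset.mem_filter]
    rintro ⟨h1, -⟩
    exact (Finset.mem_erase.mp h1).1 rfl
  -- split the sum
  have hsplit : fsum G r S
      = (∑ J ∈ Nv.powerset.filter (fun J => J.card ≤ 2*r - 1), (-1 : ℤ) ^ J.card)
        + fsum G r (S.erase v) := by
    rw [fsum, ← Finset.sum_filter_add_sum_filter_not _ (fun I => v ∈ I)]
    congr 1
    · -- sum over cliques containing v
      refine Finset.sum_bij' (fun I _ => I.erase v) (fun J _ => insert v J) ?_ ?_ ?_ ?_ ?_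
      · intro I hI
        simp only [Finset.mem_filter, Finset.mem_powerset] at hI
        obtain ⟨⟨hIS, hIne, hIclq, hIcard⟩, hvI⟩ := hI
        simp only [Finset.mem_filter, Finset.mem_powerset]
        constructor
        · intro u hu
          have hu1 := Finset.mem_of_mem_erase hu
          have hu2 := (Finset.mem_erase.mp hu).1
          rw [hNv, Finset.mem_filter]
          exact ⟨Finset.mem_erase.mpr ⟨hu2, hIS hu1⟩,
            hIclq (Finset.mem_coe.mpr hvI) (Finset.mem_coe.mpr hu1) (Ne.symm hu2)⟩
        · have := Finset.card_erase_of_mem hvI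
          omega
      · intro J hJ
        simp only [Finset.mem_filter, Finset.mem_powerset] at hJ
        obtain ⟨hJN, hJcard⟩ := hJ
        have hvJ : v ∉ J := fun h => hvNv (hJN h)
        simp only [Finset.mem_filter, Finset.mem_powerset]
        refine ⟨⟨?_, ⟨v, Finset.mem_insert_self _ _⟩, ?_, ?_⟩, Finset.mem_insert_self _ _⟩
        · intro u hu
          rcases Finset.mem_insert.mp hu with rfl | hu
          · exact hv
          · exact Finset.mem_of_mem_erase (Finset.mem_filter.mp (hJN hu)).1
        · rw [Finset.coe_insert]
          refine Set.Pairwise.insert (hNvclq.subset (fun z hz => Finset.mem_coe.mpr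
            (hJN (Finset.mem_coe.mp hz)))) ?_
          intro u hu hne
          have : u ∈ Nv := hJN (Finset.mem_coe.mp hu)
          have hadj : G.Adj v u := (Finset.mem_filter.mp this).2
          exact ⟨hadj, hadj.symm⟩
        · rw [Finset.card_insert_of_notMem hvJ]
          omega
      · intro I hI
        simp only [Finset.mem_filter] at hI
        exact Finset.insert_erase hI.2
      · intro J hJ
        simp only [Finset.mem_filter, Finset.mem_powerset] at hJ
        exact Finset.erase_insert (fun h => hvNv (hJ.1 h))
      · intro I hI
        simp only [Finset.mem_filter] at hI
        rw [Finset.card_erase_of_mem hI.2]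
    · -- sum over cliques avoiding v
      rw [fsum]
      refine Finset.sum_congr ?_ (fun _ _ => rfl)
      ext I
      simp only [Finset.mem_filter, Finset.mem_powerset, Finset.subset_erase]
      tauto
  obtain ⟨T', hT'sub, hT'ind, hT'le⟩ := ih (S.erase v) (Finset.erase_ssubset hv)
  have hB := sum_powerset_sign_le Nv r hr
  by_cases hNve : Nv = ∅
  · refine ⟨insert v T', ?_, ?_, ?_⟩
    · intro u hu
      rcases Finset.mem_insert.mp hu with rfl | hu
      · exact hv
      · exact Finset.mem_of_mem_erase (hT'sub hu)
    · rw [Finset.coe_insert]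
      refine Set.Pairwise.insert hT'ind ?_
      intro u hu hne
      have huS : u ∈ S.erase v := hT'sub (Finset.mem_coe.mp hu)
      have hnadj : ¬ G.Adj v u := by
        intro hadj
        have : u ∈ Nv := by
          rw [hNv, Finset.mem_filter]
          exact ⟨huS, hadj⟩
        rw [hNve] at this
        exact absurd this (Finset.notMem_empty u)
      exact ⟨hnadj, fun h => hnadj h.symm⟩
    · have hvT' : v ∉ T' := fun h => (Finset.mem_erase.mp (hT'sub h)).1 rfl
      rw [Finset.card_insert_of_notMem hvT']
      rw [if_pos hNve] at hB
      rw [hsplit]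
      push_cast
      omega
  · refine ⟨T', fun u hu => Finset.mem_of_mem_erase (hT'sub hu), hT'ind, ?_⟩
    rw [if_neg hNve] at hB
    rw [hsplit]
    omega

end Comb


end

section Main
open MeasureTheory

variable {V : Type*} [Fintype V] {G : SimpleGraph V}

theorem bddAbove_indep : BddAbove {n | ∃ s : Finset V,
    ((s : Set V).Pairwise fun v w => ¬ G.Adj v w) ∧ s.card = n} := by
  refine ⟨Fintype.card V, ?_⟩
  rintro n ⟨s, -, rfl⟩
  exact Finset.card_le_univ s

theorem card_le_indepNum {T : Finset V} (hT : (T : Set V).Pairwise fun v w => ¬G.Adj v w) :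
    T.card ≤ G.indepNumber :=
  le_csSup bddAbove_indep ⟨T, hT, rfl⟩

theorem one_le_indepNum [Nonempty V] : 1 ≤ G.indepNumber :=
  le_csSup bddAbove_indep ⟨{Classical.arbitrary V}, by simp, by simp⟩

end Main

end ChordalAux

theorem chordal_graph_sieve_lower_truncated {Ω V : Type*} [MeasurableSpace Ω] [Fintype V]
    [Nonempty V] (μ : Measure Ω) [IsProbabilityMeasure μ]
    (G : SimpleGraph V) (hG : G.IsChordal)
    (A : V → Set Ω) (hA : ∀ v, MeasurableSet (A v)) (r : ℕ) (hr : 0 < r) :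
    (μ (⋃ v, A v)).toReal ≥
      (1 / G.indepNumber) *
        ∑ I ∈ G.cliqueComplex.filter (fun I => I.card ≤ 2 * r),
          (-1 : ℝ) ^ (I.card - 1) * (μ (⋂ i ∈ I, A i)).toReal := by
  classical
  have hU : MeasurableSet (⋃ v, A v) := MeasurableSet.iUnion (fun v => hA v)
  have hI : ∀ I : Finset V, MeasurableSet (⋂ i ∈ I, A i) :=
    fun I => Finset.measurableSet_biInter I (fun i _ => hA i)
  have hintU : (μ (⋃ v, A v)).toReal = ∫ ω, Set.indicator (⋃ v, A v) 1 ω ∂μ :=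
    (integral_indicator_one hU).symm
  have hIntgI : ∀ I : Finset V, Integrable (Set.indicator (⋂ i ∈ I, A i) (1 : Ω → ℝ)) μ :=
    fun I => (integrable_const 1).indicator (hI I)
  have hIntgU : Integrable (Set.indicator (⋃ v, A v) (1 : Ω → ℝ)) μ :=
    (integrable_const 1).indicator hU
  have key : ∑ I ∈ G.cliqueComplex.filter (fun I => I.card ≤ 2 * r),
        (-1 : ℝ) ^ (I.card - 1) * (μ (⋂ i ∈ I, A i)).toReal
      ≤ (G.indepNumber : ℝ) * (μ (⋃ v, A v)).toReal := by
    calc ∑ I ∈ G.cliqueComplex.filter (fun I => I.card ≤ 2 * r),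
          (-1 : ℝ) ^ (I.card - 1) * (μ (⋂ i ∈ I, A i)).toReal
        = ∫ ω, (∑ I ∈ G.cliqueComplex.filter (fun I => I.card ≤ 2 * r),
            (-1 : ℝ) ^ (I.card - 1) * Set.indicator (⋂ i ∈ I, A i) 1 ω) ∂μ := by
          rw [integral_finset_sum _ (fun I _ => ((hIntgI I).const_mul _))]
          refine Finset.sum_congr rfl (fun I _ => ?_)
          rw [integral_const_mul, integral_indicator_one (hI I)]
          rfl
      _ ≤ ∫ ω, ((G.indepNumber : ℝ) * Set.indicator (⋃ v, A v) 1 ω) ∂μ := by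
          refine integral_mono
            (integrable_finset_sum _ (fun I _ => (hIntgI I).const_mul _))
            (hIntgU.const_mul _) ?_
          intro ω
          simp only []
          set Sw := Finset.univ.filter (fun v => ω ∈ A v) with hSw
          have hindI : ∀ I : Finset V, Set.indicator (⋂ i ∈ I, A i) (1 : Ω → ℝ) ω
              = if I ⊆ Sw then 1 else 0 := by
            intro I
            by_cases h : I ⊆ Sw
            · rw [if_pos h, Set.indicator_of_mem]
              · rfl
              · rw [Set.mem_iInter₂]
                intro i hiI
                exact (Finset.mem_filter.mp (h hiI)).2
            · rw [if_neg h, Set.indicator_of_notMem]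
              intro hmem
              rw [Set.mem_iInter₂] at hmem
              exact h (fun i hiI => Finset.mem_filter.mpr ⟨Finset.mem_univ i, hmem i hiI⟩)
          have hsum : ∑ I ∈ G.cliqueComplex.filter (fun I => I.card ≤ 2 * r),
              (-1 : ℝ) ^ (I.card - 1) * Set.indicator (⋂ i ∈ I, A i) 1 ω
              = ((ChordalAux.fsum G r Sw : ℤ) : ℝ) := by
            calc ∑ I ∈ G.cliqueComplex.filter (fun I => I.card ≤ 2 * r),
                (-1 : ℝ) ^ (I.card - 1) * Set.indicator (⋂ i ∈ I, A i) 1 ω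
                = ∑ I ∈ G.cliqueComplex.filter (fun I => I.card ≤ 2 * r),
                    (if I ⊆ Sw then (-1 : ℝ) ^ (I.card - 1) else 0) := by
                  refine Finset.sum_congr rfl (fun I _ => ?_)
                  rw [hindI I]
                  split <;> ring
              _ = ∑ I ∈ (G.cliqueComplex.filter (fun I => I.card ≤ 2 * r)).filter
                    (fun I => I ⊆ Sw), (-1 : ℝ) ^ (I.card - 1) :=
                  (Finset.sum_filter _ _).symm
              _ = ((ChordalAux.fsum G r Sw : ℤ) : ℝ) := by
                  rw [ChordalAux.fsum]
                  push_cast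
                  refine Finset.sum_congr ?_ (fun _ _ => rfl)
                  ext I
                  simp only [Finset.mem_filter, Finset.mem_powerset,
                    SimpleGraph.cliqueComplex, Finset.subset_univ, true_and]
                  tauto
          rw [hsum]
          rcases Sw.eq_empty_or_nonempty with hSe | hSne
          · have hz : ChordalAux.fsum G r Sw = 0 := by
              rw [hSe, ChordalAux.fsum, Finset.powerset_empty]
              simp [Finset.filter_singleton]
            rw [hz]
            push_cast
            exact mul_nonneg (Nat.cast_nonneg _)
              (Set.indicator_apply_nonneg (fun _ => zero_le_one))
          · have hωU : ω ∈ ⋃ v, A v := by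
              obtain ⟨v0, hv0⟩ := hSne
              exact Set.mem_iUnion.mpr ⟨v0, (Finset.mem_filter.mp hv0).2⟩
            rw [Set.indicator_of_mem hωU, Pi.one_apply, mul_one]
            obtain ⟨T, hTs, hTind, hTle⟩ := ChordalAux.fsum_le hG r hr Sw
            have h1 : ((ChordalAux.fsum G r Sw : ℤ) : ℝ) ≤ (T.card : ℝ) := by
              exact_mod_cast hTle
            have h2 : (T.card : ℝ) ≤ (G.indepNumber : ℝ) := by
              exact_mod_cast ChordalAux.card_le_indepNum hTind
            linarith
      _ = (G.indepNumber : ℝ) * (μ (⋃ v, A v)).toReal := by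
          rw [integral_const_mul, ← hintU]
  have hα : (0 : ℝ) < (G.indepNumber : ℝ) := by
    have := ChordalAux.one_le_indepNum (G := G)
    exact_mod_cast lt_of_lt_of_le zero_lt_one (by exact_mod_cast this)
  rw [ge_iff_le]
  calc (1 / (G.indepNumber : ℝ)) * ∑ I ∈ G.cliqueComplex.filter (fun I => I.card ≤ 2 * r),
        (-1 : ℝ) ^ (I.card - 1) * (μ (⋂ i ∈ I, A i)).toReal
      ≤ (1 / (G.indepNumber : ℝ)) * ((G.indepNumber : ℝ) * (μ (⋃ v, A v)).toReal) :=
        mul_le_mul_of_nonneg_left key (by positivity)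
    _ = (μ (⋃ v, A v)).toReal := by
        rw [one_div, inv_mul_cancel_left₀ hα.ne']
end
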